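/- arXiv:1701.09149 — 8 statements merged into one kernel-verified Lean document; each statement's English description precedes it below -/
import Mathlib

section
/- Let n ≥ 3 be odd and ζ ∈ ℂ a primitive n-th root of unity. Let σ_ρ be the ℂ-algebra automorphism of ℂ[x,y,z] determined by x ↦ ζx, y ↦ ζ⁻¹y, z ↦ z, and σ_ε the ℂ-algebra automorphism determined by x ↦ y, y ↦ x, z ↦ −z. Then the fixed subalgebra {f ∈ ℂ[x,y,z] : σ_ρ(f) = f} equals the ℂ-subalgebra generated by xⁿ+yⁿ, xⁿ−yⁿ, xy and z; moreover σ_ε fixes xⁿ+yⁿ and xy, while σ_ε(xⁿ−yⁿ) = −(xⁿ−yⁿ) and σ_ε(z) = −z. -/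
open MvPolynomial

private lemma aeval_mono_diag (ζ : ℂ) (d : Fin 3 →₀ ℕ) (c : ℂ) :
    aeval ![(C ζ * X 0 : MvPolynomial (Fin 3) ℂ), C ζ⁻¹ * X 1, X 2] (monomial d c)
      = monomial d (ζ ^ (d 0) * ζ⁻¹ ^ (d 1) * c) := by
  rw [aeval_monomial, Finsupp.prod_pow, Fin.prod_univ_three, monomial_eq, Finsupp.prod_pow,
    Fin.prod_univ_three]
  simp only [Matrix.cons_val_zero, Matrix.cons_val_one, Matrix.head_cons, Matrix.cons_val_two,
    Matrix.tail_cons, mul_pow, C_mul, C_pow, algebraMap_eq]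
  ring

private lemma mono_mem_adjoin (n : ℕ) (d : Fin 3 →₀ ℕ) (c : ℂ)
    (hdvd : (n : ℤ) ∣ (d 0 : ℤ) - (d 1 : ℤ)) :
    (monomial d c : MvPolynomial (Fin 3) ℂ) ∈ Algebra.adjoin ℂ
      ({X 0 ^ n + X 1 ^ n, X 0 ^ n - X 1 ^ n, X 0 * X 1, X 2} :
        Set (MvPolynomial (Fin 3) ℂ)) := by
  set A := Algebra.adjoin ℂ
      ({X 0 ^ n + X 1 ^ n, X 0 ^ n - X 1 ^ n, X 0 * X 1, X 2} :
        Set (MvPolynomial (Fin 3) ℂ)) with hA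
  have hs : (X 0 ^ n + X 1 ^ n : MvPolynomial (Fin 3) ℂ) ∈ A :=
    Algebra.subset_adjoin (by simp)
  have hdm : (X 0 ^ n - X 1 ^ n : MvPolynomial (Fin 3) ℂ) ∈ A :=
    Algebra.subset_adjoin (by simp)
  have hxy : (X 0 * X 1 : MvPolynomial (Fin 3) ℂ) ∈ A :=
    Algebra.subset_adjoin (by simp)
  have hz : (X 2 : MvPolynomial (Fin 3) ℂ) ∈ A := Algebra.subset_adjoin (by simp)
  have hx : (X 0 ^ n : MvPolynomial (Fin 3) ℂ) ∈ A := by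
    have h1 : (X 0 ^ n : MvPolynomial (Fin 3) ℂ) =
        (2⁻¹ : ℂ) • ((X 0 ^ n + X 1 ^ n) + (X 0 ^ n - X 1 ^ n)) := by
      rw [smul_eq_C_mul, show ((X 0 ^ n + X 1 ^ n) + (X 0 ^ n - X 1 ^ n) : MvPolynomial (Fin 3) ℂ)
        = C 2 * X 0 ^ n by rw [show (C 2 : MvPolynomial (Fin 3) ℂ) = 2 from map_ofNat C 2]; ring, ← mul_assoc, ← C_mul]
      norm_num
    rw [h1]
    exact A.smul_mem (A.add_mem hs hdm) _
  have hy : (X 1 ^ n : MvPolynomial (Fin 3) ℂ) ∈ A := by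
    have h1 : (X 1 ^ n : MvPolynomial (Fin 3) ℂ) =
        (2⁻¹ : ℂ) • ((X 0 ^ n + X 1 ^ n) - (X 0 ^ n - X 1 ^ n)) := by
      rw [smul_eq_C_mul, show ((X 0 ^ n + X 1 ^ n) - (X 0 ^ n - X 1 ^ n) : MvPolynomial (Fin 3) ℂ)
        = C 2 * X 1 ^ n by rw [show (C 2 : MvPolynomial (Fin 3) ℂ) = 2 from map_ofNat C 2]; ring, ← mul_assoc, ← C_mul]
      norm_num
    rw [h1]
    exact A.smul_mem (A.sub_mem hs hdm) _
  have hmono : monomial d c = (c : ℂ) • (X 0 ^ (d 0) * X 1 ^ (d 1) * X 2 ^ (d 2) :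
      MvPolynomial (Fin 3) ℂ) := by
    rw [monomial_eq, Finsupp.prod_pow, Fin.prod_univ_three, smul_eq_C_mul]
  rw [hmono]
  apply A.smul_mem
  apply A.mul_mem _ (A.pow_mem hz _)
  rcases le_or_gt (d 0) (d 1) with hle | hlt
  · obtain ⟨k, hk⟩ : n ∣ d 1 - d 0 := by
      have h := hdvd.neg_right
      rw [neg_sub] at h
      zify [hle]; exact h
    have h0 : d 1 = d 0 + n * k := by omega
    have : (X 0 ^ (d 0) * X 1 ^ (d 1) : MvPolynomial (Fin 3) ℂ)
        = (X 0 * X 1) ^ (d 0) * (X 1 ^ n) ^ k := by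
      rw [h0, mul_pow, ← pow_mul, pow_add]; ring
    rw [this]
    exact A.mul_mem (A.pow_mem hxy _) (A.pow_mem hy _)
  · obtain ⟨k, hk⟩ : n ∣ d 0 - d 1 := by
      zify [hlt.le]; exact hdvd
    have h0 : d 0 = d 1 + n * k := by omega
    have : (X 0 ^ (d 0) * X 1 ^ (d 1) : MvPolynomial (Fin 3) ℂ)
        = (X 0 * X 1) ^ (d 1) * (X 0 ^ n) ^ k := by
      rw [h0, mul_pow, ← pow_mul, pow_add]; ring
    rw [this]
    exact A.mul_mem (A.pow_mem hxy _) (A.pow_mem hx _)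

/-- For odd `n ≥ 3` and a primitive `n`-th root of unity `ζ`,
the fixed subalgebra of the substitution `x ↦ ζx, y ↦ ζ⁻¹y, z ↦ z` on `ℂ[x,y,z]`
is generated by `xⁿ+yⁿ, xⁿ−yⁿ, xy, z`; moreover the substitution
`x ↦ y, y ↦ x, z ↦ −z` fixes `xⁿ+yⁿ` and `xy` and negates `xⁿ−yⁿ` and `z`. -/
theorem stmt0 (n : ℕ) (hn : 3 ≤ n) (hodd : Odd n) (ζ : ℂ) (hζ : IsPrimitiveRoot ζ n) :
    (∀ f : MvPolynomial (Fin 3) ℂ,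
      aeval ![(C ζ * X 0 : MvPolynomial (Fin 3) ℂ), C ζ⁻¹ * X 1, X 2] f = f ↔
        f ∈ Algebra.adjoin ℂ
          ({X 0 ^ n + X 1 ^ n, X 0 ^ n - X 1 ^ n, X 0 * X 1, X 2} :
            Set (MvPolynomial (Fin 3) ℂ)))
    ∧ aeval ![(X 1 : MvPolynomial (Fin 3) ℂ), X 0, -X 2] ((X 0 ^ n + X 1 ^ n : MvPolynomial (Fin 3) ℂ))
        = X 0 ^ n + X 1 ^ n
    ∧ aeval ![(X 1 : MvPolynomial (Fin 3) ℂ), X 0, -X 2] ((X 0 * X 1 : MvPolynomial (Fin 3) ℂ)) = X 0 * X 1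
    ∧ aeval ![(X 1 : MvPolynomial (Fin 3) ℂ), X 0, -X 2] ((X 0 ^ n - X 1 ^ n : MvPolynomial (Fin 3) ℂ))
        = -(X 0 ^ n - X 1 ^ n)
    ∧ aeval ![(X 1 : MvPolynomial (Fin 3) ℂ), X 0, -X 2] (X 2 : MvPolynomial (Fin 3) ℂ)
        = -X 2 := by
  have hn0 : n ≠ 0 := by omega
  have hζ0 : ζ ≠ 0 := hζ.ne_zero hn0
  have hζn : ζ ^ n = 1 := hζ.pow_eq_one
  have hζin : ζ⁻¹ ^ n = 1 := by rw [inv_pow, hζn, inv_one]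
  refine ⟨fun f => ⟨fun h => ?_, fun hf => ?_⟩, ?_, ?_, ?_, ?_⟩
  · -- forward direction
    have hsum : aeval ![(C ζ * X 0 : MvPolynomial (Fin 3) ℂ), C ζ⁻¹ * X 1, X 2] f
        = ∑ d ∈ f.support, monomial d (ζ ^ (d 0) * ζ⁻¹ ^ (d 1) * coeff d f) := by
      conv_lhs => rw [f.as_sum]
      rw [map_sum]
      exact Finset.sum_congr rfl fun d _ => aeval_mono_diag ζ d _
    have key : ∀ d ∈ f.support, (n : ℤ) ∣ (d 0 : ℤ) - (d 1 : ℤ) := by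
      intro d hd
      have hc : coeff d f ≠ 0 := mem_support_iff.mp hd
      have h1 : ζ ^ (d 0) * ζ⁻¹ ^ (d 1) * coeff d f = coeff d f := by
        conv_rhs => rw [← h, hsum]
        rw [coeff_sum, Finset.sum_eq_single d (fun b _ hb => by
          simp [coeff_monomial, hb]) (fun hd' => absurd hd hd')]
        simp [coeff_monomial]
      have h2 : ζ ^ (d 0) * ζ⁻¹ ^ (d 1) = 1 :=
        mul_right_cancel₀ hc (h1.trans (one_mul _).symm)
      have h3 : ζ ^ ((d 0 : ℤ) - (d 1 : ℤ)) = 1 := by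
        rw [zpow_sub₀ hζ0, zpow_natCast, zpow_natCast, div_eq_mul_inv, ← inv_pow]
        exact h2
      exact hζ.zpow_eq_one_iff_dvd _ |>.mp h3
    have hmem : ∑ d ∈ f.support, (monomial d) (coeff d f) ∈ Algebra.adjoin ℂ
        ({X 0 ^ n + X 1 ^ n, X 0 ^ n - X 1 ^ n, X 0 * X 1, X 2} :
          Set (MvPolynomial (Fin 3) ℂ)) :=
      Subalgebra.sum_mem _ fun d hd => mono_mem_adjoin n d _ (key d hd)
    rwa [← f.as_sum] at hmem
  · -- reverse direction
    induction hf using Algebra.adjoin_induction with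
    | mem p hp =>
      rcases hp with h | h | h | h <;> subst h
      · simp [map_add, map_pow, mul_pow, ← C_pow, hζn, hζin]
      · simp [map_sub, map_pow, mul_pow, ← C_pow, hζn, hζin]
      · rw [map_mul, aeval_X, aeval_X]
        simp only [Matrix.cons_val_zero, Matrix.cons_val_one, Matrix.head_cons]
        rw [mul_mul_mul_comm, ← C_mul, mul_inv_cancel₀ hζ0, C_1, one_mul]
      · simp
    | algebraMap r => simp [algebraMap_eq]
    | add p q _ _ hp hq => rw [map_add, hp, hq]
    | mul p q _ _ hp hq => rw [map_mul, hp, hq]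
  · simp only [map_add, map_pow, aeval_X, Matrix.cons_val_zero, Matrix.cons_val_one,
      Matrix.head_cons]
    ring
  · simp only [map_mul, aeval_X, Matrix.cons_val_zero, Matrix.cons_val_one, Matrix.head_cons]
    ring
  · simp only [map_sub, map_pow, aeval_X, Matrix.cons_val_zero, Matrix.cons_val_one,
      Matrix.head_cons]
    ring
  · simp only [aeval_X, Matrix.cons_val_two, Matrix.tail_cons, Matrix.head_cons]
end

section
/- Let n = 2k be even with k ≥ 2 and ζ ∈ ℂ a primitive n-th root of unity. Let σ be the ℂ-algebra automorphism of ℂ[x,y,z] determined by x ↦ ζ²x, y ↦ ζ⁻²y, z ↦ z. Then the fixed subalgebra {f ∈ ℂ[x,y,z] : σ(f) = f} equals the ℂ-subalgebra generated by x^k+y^k, x^k−y^k, xy and z. -/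
open MvPolynomial

private lemma mono_eq (d : Fin 3 →₀ ℕ) (c : ℂ) :
    (monomial d c : MvPolynomial (Fin 3) ℂ) = C c * X 0 ^ d 0 * X 1 ^ d 1 * X 2 ^ d 2 := by
  rw [monomial_eq, Finsupp.prod_fintype _ _ (fun i => pow_zero _), Fin.prod_univ_three]
  ring

private lemma act_monomial (ζ : ℂ) (d : Fin 3 →₀ ℕ) (c : ℂ) :
    aeval ![(C (ζ ^ 2) * X 0 : MvPolynomial (Fin 3) ℂ), C (ζ⁻¹ ^ 2) * X 1, X 2]
      (monomial d c) =
      monomial d ((ζ ^ 2) ^ d 0 * (ζ⁻¹ ^ 2) ^ d 1 * c) := by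
  rw [mono_eq, mono_eq]
  simp only [map_mul, map_pow, aeval_C, aeval_X, Matrix.cons_val_zero, Matrix.cons_val_one,
    Matrix.head_cons, Matrix.cons_val_two, Matrix.tail_cons, algebraMap_eq]
  simp only [mul_pow, ← C_pow, ← C_mul]
  ring_nf
  simp only [C_mul]
  ring

private lemma act_coeff (ζ : ℂ) (f : MvPolynomial (Fin 3) ℂ) (d : Fin 3 →₀ ℕ) :
    coeff d (aeval ![(C (ζ ^ 2) * X 0 : MvPolynomial (Fin 3) ℂ), C (ζ⁻¹ ^ 2) * X 1, X 2] f) =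
      (ζ ^ 2) ^ d 0 * (ζ⁻¹ ^ 2) ^ d 1 * coeff d f := by
  conv_lhs => rw [f.as_sum]
  rw [map_sum]
  simp only [act_monomial]
  simp only [MvPolynomial.coeff_sum, coeff_monomial]
  rw [Finset.sum_ite_eq' f.support d]
  split_ifs with h
  · rfl
  · rw [notMem_support_iff.mp h, mul_zero]

private lemma mem_adjoin_of_dvd (k : ℕ) (d : Fin 3 →₀ ℕ) (c : ℂ)
    (hd : (k : ℤ) ∣ (d 0 : ℤ) - (d 1 : ℤ)) :
    monomial d c ∈ Algebra.adjoin ℂ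
      ({X 0 ^ k + X 1 ^ k, X 0 ^ k - X 1 ^ k, X 0 * X 1, X 2} :
        Set (MvPolynomial (Fin 3) ℂ)) := by
  set A := Algebra.adjoin ℂ
      ({X 0 ^ k + X 1 ^ k, X 0 ^ k - X 1 ^ k, X 0 * X 1, X 2} :
        Set (MvPolynomial (Fin 3) ℂ)) with hA
  have h1 : (X 0 ^ k + X 1 ^ k : MvPolynomial (Fin 3) ℂ) ∈ A :=
    Algebra.subset_adjoin (by simp)
  have h2 : (X 0 ^ k - X 1 ^ k : MvPolynomial (Fin 3) ℂ) ∈ A :=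
    Algebra.subset_adjoin (by simp)
  have hXY : (X 0 * X 1 : MvPolynomial (Fin 3) ℂ) ∈ A :=
    Algebra.subset_adjoin (by simp)
  have hZ : (X 2 : MvPolynomial (Fin 3) ℂ) ∈ A :=
    Algebra.subset_adjoin (by simp)
  have hX0k : (X 0 ^ k : MvPolynomial (Fin 3) ℂ) ∈ A := by
    have : (X 0 ^ k : MvPolynomial (Fin 3) ℂ) =
        C (2 : ℂ)⁻¹ * ((X 0 ^ k + X 1 ^ k) + (X 0 ^ k - X 1 ^ k)) := by
      have h2' : (2 : MvPolynomial (Fin 3) ℂ) = C 2 := (map_ofNat C 2).symm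
      rw [show ((X 0 ^ k + X 1 ^ k) + (X 0 ^ k - X 1 ^ k) : MvPolynomial (Fin 3) ℂ)
          = 2 * X 0 ^ k by ring, h2', ← mul_assoc, ← C_mul]
      norm_num
    rw [this]
    exact A.mul_mem (A.algebraMap_mem _) (A.add_mem h1 h2)
  have hX1k : (X 1 ^ k : MvPolynomial (Fin 3) ℂ) ∈ A := by
    have : (X 1 ^ k : MvPolynomial (Fin 3) ℂ) =
        C (2 : ℂ)⁻¹ * ((X 0 ^ k + X 1 ^ k) - (X 0 ^ k - X 1 ^ k)) := by
      have h2' : (2 : MvPolynomial (Fin 3) ℂ) = C 2 := (map_ofNat C 2).symm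
      rw [show ((X 0 ^ k + X 1 ^ k) - (X 0 ^ k - X 1 ^ k) : MvPolynomial (Fin 3) ℂ)
          = 2 * X 1 ^ k by ring, h2', ← mul_assoc, ← C_mul]
      norm_num
    rw [this]
    exact A.mul_mem (A.algebraMap_mem _) (A.sub_mem h1 h2)
  rcases le_total (d 1) (d 0) with h01 | h01
  · obtain ⟨m, hm⟩ : ∃ m, d 0 = d 1 + k * m := by
      have hnat : k ∣ d 0 - d 1 := by
        have hcast : ((d 0 - d 1 : ℕ) : ℤ) = (d 0 : ℤ) - d 1 := by omega
        exact_mod_cast hcast ▸ hd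
      obtain ⟨m, hm⟩ := hnat
      exact ⟨m, by omega⟩
    have : (monomial d c : MvPolynomial (Fin 3) ℂ) =
        C c * ((X 0 * X 1) ^ d 1 * (X 0 ^ k) ^ m * X 2 ^ d 2) := by
      rw [mono_eq, hm, pow_add, ← pow_mul]
      ring
    rw [this]
    exact A.mul_mem (A.algebraMap_mem _)
      (A.mul_mem (A.mul_mem (A.pow_mem hXY _) (A.pow_mem hX0k _)) (A.pow_mem hZ _))
  · obtain ⟨m, hm⟩ : ∃ m, d 1 = d 0 + k * m := by
      have hd' : (k : ℤ) ∣ (d 1 : ℤ) - d 0 := by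
        rw [← neg_sub]; exact dvd_neg.mpr hd
      have hnat : k ∣ d 1 - d 0 := by
        have hcast : ((d 1 - d 0 : ℕ) : ℤ) = (d 1 : ℤ) - d 0 := by omega
        exact_mod_cast hcast ▸ hd'
      obtain ⟨m, hm⟩ := hnat
      exact ⟨m, by omega⟩
    have : (monomial d c : MvPolynomial (Fin 3) ℂ) =
        C c * ((X 0 * X 1) ^ d 0 * (X 1 ^ k) ^ m * X 2 ^ d 2) := by
      rw [mono_eq, hm, pow_add, ← pow_mul]
      ring
    rw [this]
    exact A.mul_mem (A.algebraMap_mem _)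
      (A.mul_mem (A.mul_mem (A.pow_mem hXY _) (A.pow_mem hX1k _)) (A.pow_mem hZ _))

/-- For `n = 2k` even with `k ≥ 2` and a primitive `n`-th root of unity `ζ`,
the fixed subalgebra of the substitution `x ↦ ζ²x, y ↦ ζ⁻²y, z ↦ z` on `ℂ[x,y,z]`
is generated by `x^k+y^k, x^k−y^k, xy, z`. -/
theorem stmt1 (k : ℕ) (hk : 2 ≤ k) (ζ : ℂ) (hζ : IsPrimitiveRoot ζ (2 * k)) :
    ∀ f : MvPolynomial (Fin 3) ℂ,
      aeval ![(C (ζ ^ 2) * X 0 : MvPolynomial (Fin 3) ℂ), C (ζ⁻¹ ^ 2) * X 1, X 2] f = f ↔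
        f ∈ Algebra.adjoin ℂ
          ({X 0 ^ k + X 1 ^ k, X 0 ^ k - X 1 ^ k, X 0 * X 1, X 2} :
            Set (MvPolynomial (Fin 3) ℂ)) := by
  intro f
  have hζ0 : ζ ≠ 0 := hζ.ne_zero (by omega)
  have hw : IsPrimitiveRoot (ζ ^ 2) k :=
    IsPrimitiveRoot.pow (a := 2) (b := k) (by omega) hζ rfl
  have hw0 : ζ ^ 2 ≠ 0 := pow_ne_zero _ hζ0
  have hk1 : (ζ ^ 2) ^ k = 1 := by rw [← pow_mul]; exact hζ.pow_eq_one
  have hk2 : (ζ⁻¹ ^ 2) ^ k = 1 := by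
    rw [inv_pow, inv_pow, inv_eq_one]
    exact hk1
  constructor
  · intro hf
    rw [f.as_sum]
    refine Subalgebra.sum_mem _ fun d hd => ?_
    apply mem_adjoin_of_dvd
    have hc : (ζ ^ 2) ^ d 0 * (ζ⁻¹ ^ 2) ^ d 1 * coeff d f = coeff d f := by
      rw [← act_coeff ζ f d, hf]
    have hne : coeff d f ≠ 0 := mem_support_iff.mp hd
    have hs : (ζ ^ 2) ^ d 0 * (ζ⁻¹ ^ 2) ^ d 1 = 1 :=
      mul_right_cancel₀ hne (by rw [hc, one_mul])
    have hz : (ζ ^ 2) ^ ((d 0 : ℤ) - (d 1 : ℤ)) = 1 := by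
      rw [zpow_sub₀ hw0, zpow_natCast, zpow_natCast, div_eq_mul_inv, ← inv_pow, ← inv_pow]
      exact hs
    exact (hw.zpow_eq_one_iff_dvd _).mp hz
  · intro hf
    have hmem : f ∈ AlgHom.equalizer
        (aeval ![(C (ζ ^ 2) * X 0 : MvPolynomial (Fin 3) ℂ), C (ζ⁻¹ ^ 2) * X 1, X 2])
        (AlgHom.id ℂ (MvPolynomial (Fin 3) ℂ)) := by
      refine Algebra.adjoin_le ?_ hf
      intro g hg
      simp only [Set.mem_insert_iff, Set.mem_singleton_iff] at hg
      rw [SetLike.mem_coe, AlgHom.mem_equalizer, AlgHom.id_apply]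
      have hone : ζ ^ 2 * ζ⁻¹ ^ 2 = 1 := by
        rw [inv_pow, mul_inv_cancel₀ hw0]
      rcases hg with rfl | rfl | rfl | rfl
      · simp only [map_add, map_pow, aeval_X, Matrix.cons_val_zero, Matrix.cons_val_one,
          Matrix.head_cons]
        simp only [mul_pow, ← C_pow]
        rw [hk1, hk2, C_1, one_mul, one_mul]
      · simp only [map_sub, map_pow, aeval_X, Matrix.cons_val_zero, Matrix.cons_val_one,
          Matrix.head_cons]
        simp only [mul_pow, ← C_pow]
        rw [hk1, hk2, C_1, one_mul, one_mul]
      · simp only [map_mul, aeval_X, Matrix.cons_val_zero, Matrix.cons_val_one,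
          Matrix.head_cons]
        rw [mul_mul_mul_comm]
        simp only [← C_pow, ← C_mul]
        rw [hone, C_1, one_mul]
      · simp only [aeval_X, Matrix.cons_val_two, Matrix.tail_cons, Matrix.head_cons]
    rw [AlgHom.mem_equalizer, AlgHom.id_apply] at hmem
    exact hmem
end

section
/- Let n = 2k+1 ≥ 3 be odd. Let S be the localization of the polynomial ring ℂ[x,y,z,t_ε,t₁,…,t_k] at the multiplicative set generated by t_ε, t₁, …, t_k (the Laurent polynomial ring in the t-variables over ℂ[x,y,z]). Let κ : ℂ[Z₁,Z₂,Z₃,Z₄,T_ε,T₁,…,T_k] → S be the ℂ-algebra homomorphism with Z₁ ↦ (xⁿ+yⁿ)·∏_{i=1}^{k} t_i^{in/gcd(n,i)}, Z₂ ↦ (xⁿ−yⁿ)·t_ε·∏_{i=1}^{k} t_i^{in/gcd(n,i)}, Z₃ ↦ xy·∏_{i=1}^{k} t_i^{n/gcd(n,i)}, Z₄ ↦ z·t_ε, T_ε ↦ t_ε^{−2}, and T_i ↦ t_i^{−n/gcd(n,i)} for i = 1,…,k. Then the kernel of κ is the principal ideal generated by the trinomial Z₁² − Z₂²T_ε − 4Z₃ⁿ·∏_{i=1}^{k}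 T_i^{n−2i}. -/
set_option synthInstance.maxHeartbeats 400000
set_option maxHeartbeats 1000000


open MvPolynomial

noncomputable section

/-- `ℂ[x,y,z,t_ε,t₁,…,t_k]`: variables `Sum.inl 0, Sum.inl 1, Sum.inl 2` are `x,y,z`,
`Sum.inl 3` is `t_ε`, and `Sum.inr i` is `t_{i+1}`. -/
abbrev R2 (k : ℕ) : Type := MvPolynomial (Fin 4 ⊕ Fin k) ℂ

/-- The multiplicative set generated by `t_ε, t₁, …, t_k`. -/
def M2 (k : ℕ) : Submonoid (R2 k) :=
  Submonoid.closure
    (insert (X (Sum.inl 3)) (Set.range fun i : Fin k => X (Sum.inr i)))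

/-- The localization `S` of `ℂ[x,y,z,t_ε,t₁,…,t_k]` at the multiplicative set
generated by `t_ε, t₁, …, t_k`. -/
abbrev S2 (k : ℕ) : Type := Localization (M2 k)

/-- The element `t_ε^{-m} ∈ S`. -/
def tEpsInv2 (k m : ℕ) : S2 k :=
  Localization.mk 1
    ⟨X (Sum.inl 3) ^ m, pow_mem (Submonoid.subset_closure (Set.mem_insert _ _)) m⟩

/-- The element `t_{i+1}^{-m} ∈ S`. -/
def tInv2 (k : ℕ) (i : Fin k) (m : ℕ) : S2 k :=
  Localization.mk 1
    ⟨X (Sum.inr i) ^ m,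
      pow_mem
        (Submonoid.subset_closure (Set.mem_insert_iff.mpr (Or.inr (Set.mem_range_self i))))
        m⟩

/-- The ℂ-algebra homomorphism `κ : ℂ[Z₁,Z₂,Z₃,Z₄,T_ε,T₁,…,T_k] → S` of STATEMENT 2
(variables `Sum.inl 0, …, Sum.inl 3` are `Z₁,…,Z₄`, `Sum.inl 4` is `T_ε`, and
`Sum.inr i` is `T_{i+1}`). -/
def kappa2 (k n : ℕ) : MvPolynomial (Fin 5 ⊕ Fin k) ℂ →ₐ[ℂ] S2 k :=
  aeval
    (Sum.elim
      ![algebraMap (R2 k) (S2 k)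
          ((X (Sum.inl 0) ^ n + X (Sum.inl 1) ^ n) *
            ∏ i : Fin k, X (Sum.inr i) ^ ((((i : ℕ) + 1) * n) / Nat.gcd n ((i : ℕ) + 1))),
        algebraMap (R2 k) (S2 k)
          ((X (Sum.inl 0) ^ n - X (Sum.inl 1) ^ n) * X (Sum.inl 3) *
            ∏ i : Fin k, X (Sum.inr i) ^ ((((i : ℕ) + 1) * n) / Nat.gcd n ((i : ℕ) + 1))),
        algebraMap (R2 k) (S2 k)
          (X (Sum.inl 0) * X (Sum.inl 1) *
            ∏ i : Fin k, X (Sum.inr i) ^ (n / Nat.gcd n ((i : ℕ) + 1))),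
        algebraMap (R2 k) (S2 k) (X (Sum.inl 2) * X (Sum.inl 3)),
        tEpsInv2 k 2]
      (fun i : Fin k => tInv2 k i (n / Nat.gcd n ((i : ℕ) + 1))))


/-! ### auxiliary machinery -/

/-! ### auxiliary machinery -/

lemma memM_teps (k : ℕ) : (X (Sum.inl 3) : R2 k) ∈ M2 k :=
  Submonoid.subset_closure (Set.mem_insert _ _)

lemma memM_t (k : ℕ) (i : Fin k) : (X (Sum.inr i) : R2 k) ∈ M2 k :=
  Submonoid.subset_closure (Set.mem_insert_iff.mpr (Or.inr (Set.mem_range_self i)))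

lemma algmul_mk (k : ℕ) (r m : R2 k) (hm : m ∈ M2 k) :
    algebraMap (R2 k) (S2 k) (r * m) * Localization.mk 1 ⟨m, hm⟩ =
      algebraMap (R2 k) (S2 k) r := by
  rw [← Localization.mk_one_eq_algebraMap, ← Localization.mk_one_eq_algebraMap,
    Localization.mk_mul, mul_one, one_mul]
  conv_rhs => rw [← mul_one (Localization.mk r 1), ← Localization.mk_self (⟨m, hm⟩ : M2 k)]
  rw [Localization.mk_mul]
  simp

def mkOneHom (k : ℕ) : M2 k →* S2 k where
  toFun m := Localization.mk 1 m
  map_one' := by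
    have := Localization.mk_self (1 : M2 k)
    simpa using this
  map_mul' a b := by rw [Localization.mk_mul, one_mul]

lemma mk_one_prod (k : ℕ) (s : Fin k → M2 k) :
    (∏ i, Localization.mk (1 : R2 k) (s i)) = Localization.mk 1 (∏ i, s i) :=
  (map_prod (mkOneHom k) s Finset.univ).symm
def eOpt (k : ℕ) : (Fin 5 ⊕ Fin k) ≃ Option (Fin 4 ⊕ Fin k) where
  toFun := Sum.elim (Fin.cases none (fun j => some (Sum.inl j))) (fun i => some (Sum.inr i))
  invFun := fun o => o.elim (Sum.inl 0) (Sum.elim (fun j => Sum.inl j.succ) (fun i => Sum.inr i))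
  left_inv := by
    rintro (i | i)
    · induction i using Fin.cases <;> simp
    · simp
  right_inv := by rintro (_ | (j | i)) <;> simp

def Phi (k : ℕ) : MvPolynomial (Fin 5 ⊕ Fin k) ℂ ≃ₐ[ℂ] Polynomial (R2 k) :=
  (renameEquiv ℂ (eOpt k)).trans (optionEquivLeft ℂ (Fin 4 ⊕ Fin k))

def Img (k n : ℕ) : Fin 5 ⊕ Fin k → S2 k :=
  Sum.elim
      ![algebraMap (R2 k) (S2 k)
          ((X (Sum.inl 0) ^ n + X (Sum.inl 1) ^ n) *
            ∏ i : Fin k, X (Sum.inr i) ^ ((((i : ℕ) + 1) * n) / Nat.gcd n ((i : ℕ) + 1))),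
        algebraMap (R2 k) (S2 k)
          ((X (Sum.inl 0) ^ n - X (Sum.inl 1) ^ n) * X (Sum.inl 3) *
            ∏ i : Fin k, X (Sum.inr i) ^ ((((i : ℕ) + 1) * n) / Nat.gcd n ((i : ℕ) + 1))),
        algebraMap (R2 k) (S2 k)
          (X (Sum.inl 0) * X (Sum.inl 1) *
            ∏ i : Fin k, X (Sum.inr i) ^ (n / Nat.gcd n ((i : ℕ) + 1))),
        algebraMap (R2 k) (S2 k) (X (Sum.inl 2) * X (Sum.inl 3)),
        tEpsInv2 k 2]
      (fun i : Fin k => tInv2 k i (n / Nat.gcd n ((i : ℕ) + 1)))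

lemma kappa2_eq (k n : ℕ) : kappa2 k n = aeval (Img k n) := rfl

def sElt (k n : ℕ) : S2 k := Img k n (Sum.inl 0)

def kappaA (k n : ℕ) : R2 k →ₐ[ℂ] S2 k :=
  aeval (fun j => Img k n ((eOpt k).symm (some j)))

lemma factor (k n : ℕ) (p : MvPolynomial (Fin 5 ⊕ Fin k) ℂ) :
    kappa2 k n p = Polynomial.eval₂ ((kappaA k n) : R2 k →+* S2 k) (sElt k n) (Phi k p) := by
  have : (kappa2 k n : MvPolynomial (Fin 5 ⊕ Fin k) ℂ →+* S2 k) =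
      (Polynomial.eval₂RingHom ((kappaA k n) : R2 k →+* S2 k) (sElt k n)).comp
        ((Phi k : MvPolynomial (Fin 5 ⊕ Fin k) ℂ ≃+* Polynomial (R2 k)) : _ →+* _) := by
    apply MvPolynomial.ringHom_ext
    · intro r
      simp [Phi, kappa2_eq, optionEquivLeft_C, kappaA]
    · rintro (i | i)
      · induction i using Fin.cases with
        | zero =>
            simp [Phi, kappa2_eq, eOpt, optionEquivLeft_X_none, sElt]
        | succ j =>
            simp only [kappa2_eq, aeval_X, RingHom.coe_comp, Function.comp_apply,
              RingEquiv.coe_toRingHom, AlgEquiv.coe_ringEquiv, Phi, AlgEquiv.trans_apply,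
              renameEquiv_apply, rename_X, Polynomial.coe_eval₂RingHom]
            have h1 : (eOpt k) (Sum.inl j.succ) = some (Sum.inl j) := by
              simp [eOpt]
            rw [h1, optionEquivLeft_X_some, Polynomial.eval₂_C]
            have h2 : (eOpt k).symm (some (Sum.inl j)) = Sum.inl j.succ := by
              rw [Equiv.symm_apply_eq, h1]
            simp [kappaA, h2]
      · simp only [kappa2_eq, aeval_X, RingHom.coe_comp, Function.comp_apply,
          RingEquiv.coe_toRingHom, AlgEquiv.coe_ringEquiv, Phi, AlgEquiv.trans_apply,
          renameEquiv_apply, rename_X, Polynomial.coe_eval₂RingHom]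
        have h1 : (eOpt k) (Sum.inr i) = some (Sum.inr i) := rfl
        rw [h1, optionEquivLeft_X_some, Polynomial.eval₂_C]
        have h2 : (eOpt k).symm (some (Sum.inr i)) = Sum.inr i := rfl
        simp [kappaA, h2]
  calc kappa2 k n p = (kappa2 k n : MvPolynomial (Fin 5 ⊕ Fin k) ℂ →+* S2 k) p := rfl
  _ = _ := by rw [this]; rfl

/-! ### the trinomial tail and the key identity -/

def Pt (k n : ℕ) : R2 k :=
  ∏ i : Fin k, X (Sum.inr i) ^ ((((i : ℕ) + 1) * n) / Nat.gcd n ((i : ℕ) + 1))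

def Qt (k n : ℕ) : R2 k :=
  ∏ i : Fin k, X (Sum.inr i) ^ (n / Nat.gcd n ((i : ℕ) + 1))

def Gpoly (k n : ℕ) : R2 k :=
  X (Sum.inl 0) ^ 2 * X (Sum.inl 3) +
    4 * X (Sum.inl 1) ^ n * ∏ i : Fin k, X (Sum.inr i) ^ (n - 2 * ((i : ℕ) + 1))

lemma sElt_eq (k n : ℕ) :
    sElt k n = algebraMap (R2 k) (S2 k)
      ((X (Sum.inl 0) ^ n + X (Sum.inl 1) ^ n) * Pt k n) := rfl

lemma kappaA_X0 (k n : ℕ) :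
    kappaA k n (X (Sum.inl 0)) = algebraMap (R2 k) (S2 k)
      ((X (Sum.inl 0) ^ n - X (Sum.inl 1) ^ n) * X (Sum.inl 3) * Pt k n) := by
  rw [kappaA, aeval_X]
  rfl

lemma kappaA_X1 (k n : ℕ) :
    kappaA k n (X (Sum.inl 1)) = algebraMap (R2 k) (S2 k)
      (X (Sum.inl 0) * X (Sum.inl 1) * Qt k n) := by
  rw [kappaA, aeval_X]
  rfl

lemma kappaA_X2 (k n : ℕ) :
    kappaA k n (X (Sum.inl 2)) = algebraMap (R2 k) (S2 k)
      (X (Sum.inl 2) * X (Sum.inl 3)) := by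
  rw [kappaA, aeval_X]
  rfl

lemma kappaA_X3 (k n : ℕ) :
    kappaA k n (X (Sum.inl 3)) = tEpsInv2 k 2 := by
  rw [kappaA, aeval_X]
  rfl

lemma kappaA_Xr (k n : ℕ) (i : Fin k) :
    kappaA k n (X (Sum.inr i)) = tInv2 k i (n / Nat.gcd n ((i : ℕ) + 1)) := by
  rw [kappaA, aeval_X]
  rfl

lemma exp_eq (k n : ℕ) (i : Fin k) :
    (((i : ℕ) + 1) * n) / Nat.gcd n ((i : ℕ) + 1)
      = ((i : ℕ) + 1) * (n / Nat.gcd n ((i : ℕ) + 1)) :=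
  Nat.mul_div_assoc _ (Nat.gcd_dvd_left _ _)

lemma Qt_pow (k n : ℕ) (hn : n = 2 * k + 1) :
    Qt k n ^ n = Pt k n ^ 2 *
      ∏ i : Fin k, (X (Sum.inr i) : R2 k) ^
        ((n / Nat.gcd n ((i : ℕ) + 1)) * (n - 2 * ((i : ℕ) + 1))) := by
  rw [Qt, Pt, ← Finset.prod_pow, ← Finset.prod_pow, ← Finset.prod_mul_distrib]
  refine Finset.prod_congr rfl fun i _ => ?_
  simp only [← pow_mul]
  rw [← pow_add]
  congr 1
  rw [exp_eq]
  set m := n / Nat.gcd n ((i : ℕ) + 1)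
  have h2 : 2 * ((i : ℕ) + 1) ≤ n := by
    have := i.isLt; omega
  obtain ⟨c, hc⟩ := Nat.exists_eq_add_of_le h2
  subst hc
  rw [Nat.add_sub_cancel_left]
  ring

lemma sq_sElt (k n : ℕ) (hn : n = 2 * k + 1) :
    sElt k n ^ 2 = kappaA k n (Gpoly k n) := by
  -- compute the right-hand side
  have h4 : (kappaA k n) (4 : R2 k) = algebraMap (R2 k) (S2 k) 4 := by
    rw [map_ofNat, map_ofNat]
  rw [Gpoly]
  simp only [map_add, map_mul, map_pow, map_prod]
  rw [h4, kappaA_X0, kappaA_X1, kappaA_X3]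
  have hprod : (∏ i : Fin k, (kappaA k n) (X (Sum.inr i)) ^ (n - 2 * ((i : ℕ) + 1))) =
      Localization.mk 1
        ⟨∏ i : Fin k, (X (Sum.inr i) : R2 k) ^
            ((n / Nat.gcd n ((i : ℕ) + 1)) * (n - 2 * ((i : ℕ) + 1))),
          prod_mem fun i _ => pow_mem (memM_t k i) _⟩ := by
    have : ∀ i : Fin k, (kappaA k n) (X (Sum.inr i)) ^ (n - 2 * ((i : ℕ) + 1)) =
        Localization.mk 1
          ⟨(X (Sum.inr i) : R2 k) ^
              ((n / Nat.gcd n ((i : ℕ) + 1)) * (n - 2 * ((i : ℕ) + 1))),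
            pow_mem (memM_t k i) _⟩ := by
      intro i
      rw [kappaA_Xr, tInv2, Localization.mk_pow, one_pow]
      congr 1
      exact Subtype.ext (by simp [pow_mul])
    rw [Finset.prod_congr rfl fun i _ => this i, mk_one_prod]
    congr 1
    exact Subtype.ext (by simp)
  rw [hprod]
  -- now everything is explicit; compute both sides as `algebraMap` images
  have step1 : (algebraMap (R2 k) (S2 k)
        ((X (Sum.inl 0) ^ n - X (Sum.inl 1) ^ n) * X (Sum.inl 3) * Pt k n)) ^ 2 *
        tEpsInv2 k 2 =
      algebraMap (R2 k) (S2 k) (((X (Sum.inl 0) ^ n - X (Sum.inl 1) ^ n) * Pt k n) ^ 2) := by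
    rw [← map_pow, tEpsInv2]
    have : ((X (Sum.inl 0) ^ n - X (Sum.inl 1) ^ n) * X (Sum.inl 3) * Pt k n) ^ 2 =
        ((X (Sum.inl 0) ^ n - X (Sum.inl 1) ^ n) * Pt k n) ^ 2 *
          (X (Sum.inl 3) : R2 k) ^ 2 := by ring
    rw [this]
    exact algmul_mk k _ _ (pow_mem (memM_teps k) 2)
  have step3 : algebraMap (R2 k) (S2 k) 4 *
        (algebraMap (R2 k) (S2 k) (X (Sum.inl 0) * X (Sum.inl 1) * Qt k n)) ^ n *
        Localization.mk 1
          ⟨∏ i : Fin k, (X (Sum.inr i) : R2 k) ^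
              ((n / Nat.gcd n ((i : ℕ) + 1)) * (n - 2 * ((i : ℕ) + 1))),
            prod_mem fun i _ => pow_mem (memM_t k i) _⟩ =
      algebraMap (R2 k) (S2 k)
        (4 * (X (Sum.inl 0)) ^ n * (X (Sum.inl 1)) ^ n * Pt k n ^ 2) := by
    rw [← map_pow, ← map_mul]
    have : (4 : R2 k) * (X (Sum.inl 0) * X (Sum.inl 1) * Qt k n) ^ n =
        (4 * (X (Sum.inl 0)) ^ n * (X (Sum.inl 1)) ^ n * Pt k n ^ 2) *
          ∏ i : Fin k, (X (Sum.inr i) : R2 k) ^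
            ((n / Nat.gcd n ((i : ℕ) + 1)) * (n - 2 * ((i : ℕ) + 1))) := by
      rw [mul_pow, mul_pow, Qt_pow k n hn]; ring
    rw [this]
    exact algmul_mk k _ _ _
  rw [step1, step3, sElt_eq, ← map_pow, ← map_add]
  congr 1
  ring

def fTri (k n : ℕ) : MvPolynomial (Fin 5 ⊕ Fin k) ℂ :=
  X (Sum.inl 0) ^ 2 - X (Sum.inl 1) ^ 2 * X (Sum.inl 4)
    - 4 * X (Sum.inl 2) ^ n * ∏ i : Fin k, X (Sum.inr i) ^ (n - 2 * ((i : ℕ) + 1))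

lemma Phi_X (k : ℕ) (j : Fin 5 ⊕ Fin k) :
    Phi k (X j) = optionEquivLeft ℂ (Fin 4 ⊕ Fin k) (X (eOpt k j)) := by
  simp [Phi]

lemma Phi_fTri (k n : ℕ) :
    Phi k (fTri k n) = Polynomial.X ^ 2 - Polynomial.C (Gpoly k n) := by
  have h0 : (eOpt k) (Sum.inl 0) = none := rfl
  have h1 : (eOpt k) (Sum.inl 1) = some (Sum.inl 0) := rfl
  have h2 : (eOpt k) (Sum.inl 2) = some (Sum.inl 1) := rfl
  have h4 : (eOpt k) (Sum.inl 4) = some (Sum.inl 3) := rfl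
  have hr : ∀ i : Fin k, (eOpt k) (Sum.inr i) = some (Sum.inr i) := fun _ => rfl
  have hPhi4 : Phi k (4 : MvPolynomial (Fin 5 ⊕ Fin k) ℂ) =
      Polynomial.C (4 : R2 k) := by
    rw [map_ofNat, map_ofNat]
  simp only [fTri, map_sub, map_mul, map_pow, map_prod, Phi_X, h0, h1, h2, h4, hr, hPhi4,
    optionEquivLeft_X_none, optionEquivLeft_X_some, Gpoly, map_add]
  ring

/-! ### specialization into an algebraically closed field -/

abbrev KF (k : ℕ) := FractionRing (R2 k)
abbrev LF (k : ℕ) := AlgebraicClosure (KF k)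

def wVar (k : ℕ) (j : Fin 4 ⊕ Fin k) : LF k :=
  algebraMap (KF k) (LF k) (algebraMap (R2 k) (KF k) (X j))

lemma algKL_inj (k : ℕ) : Function.Injective (algebraMap (KF k) (LF k)) :=
  RingHom.injective _

lemma algRK_inj (k : ℕ) : Function.Injective (algebraMap (R2 k) (KF k)) :=
  IsFractionRing.injective _ _

lemma wVar_ne (k : ℕ) (j : Fin 4 ⊕ Fin k) : wVar k j ≠ 0 := by
  have h1 : algebraMap (R2 k) (KF k) (X j) ≠ 0 := by
    rw [Ne, map_eq_zero_iff _ (algRK_inj k)]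
    exact MvPolynomial.X_ne_zero j
  rw [wVar, Ne, map_eq_zero_iff _ (algKL_inj k)]
  exact h1

lemma exists_tauEps (k : ℕ) : ∃ τ : LF k, τ ^ 2 = (wVar k (Sum.inl 3))⁻¹ :=
  IsAlgClosed.exists_pow_nat_eq _ (by norm_num)

def tauEps (k : ℕ) : LF k := (exists_tauEps k).choose

lemma tauEps_sq (k : ℕ) : tauEps k ^ 2 = (wVar k (Sum.inl 3))⁻¹ :=
  (exists_tauEps k).choose_spec

lemma tauEps_ne (k : ℕ) : tauEps k ≠ 0 := by
  intro h
  have := tauEps_sq k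
  rw [h] at this
  exact inv_ne_zero (wVar_ne k (Sum.inl 3)) (by simpa using this.symm)

lemma dpos (k n : ℕ) (hn : n = 2 * k + 1) (i : Fin k) :
    0 < n / Nat.gcd n ((i : ℕ) + 1) := by
  have hn0 : 0 < n := by omega
  exact Nat.div_pos (Nat.le_of_dvd hn0 (Nat.gcd_dvd_left _ _))
    (Nat.gcd_pos_of_pos_left _ hn0)

lemma exists_tauI (k n : ℕ) (hn : n = 2 * k + 1) (i : Fin k) :
    ∃ τ : LF k, τ ^ (n / Nat.gcd n ((i : ℕ) + 1)) = (wVar k (Sum.inr i))⁻¹ :=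
  IsAlgClosed.exists_pow_nat_eq _ (dpos k n hn i)

def tauI (k n : ℕ) (hn : n = 2 * k + 1) (i : Fin k) : LF k :=
  (exists_tauI k n hn i).choose

lemma tauI_pow (k n : ℕ) (hn : n = 2 * k + 1) (i : Fin k) :
    tauI k n hn i ^ (n / Nat.gcd n ((i : ℕ) + 1)) = (wVar k (Sum.inr i))⁻¹ :=
  (exists_tauI k n hn i).choose_spec

lemma tauI_ne (k n : ℕ) (hn : n = 2 * k + 1) (i : Fin k) : tauI k n hn i ≠ 0 := by
  intro h
  have := tauI_pow k n hn i
  rw [h, zero_pow (Nat.pos_iff_ne_zero.mp (dpos k n hn i))] at this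
  exact inv_ne_zero (wVar_ne k (Sum.inr i)) this.symm

def Qprod (k n : ℕ) (hn : n = 2 * k + 1) : LF k :=
  ∏ i : Fin k, tauI k n hn i ^ (n / Nat.gcd n ((i : ℕ) + 1))

def Pprod (k n : ℕ) (hn : n = 2 * k + 1) : LF k :=
  ∏ i : Fin k, tauI k n hn i ^ ((((i : ℕ) + 1) * n) / Nat.gcd n ((i : ℕ) + 1))

lemma Qprod_ne (k n : ℕ) (hn : n = 2 * k + 1) : Qprod k n hn ≠ 0 :=
  Finset.prod_ne_zero_iff.mpr fun i _ => pow_ne_zero _ (tauI_ne k n hn i)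

lemma Pprod_ne (k n : ℕ) (hn : n = 2 * k + 1) : Pprod k n hn ≠ 0 :=
  Finset.prod_ne_zero_iff.mpr fun i _ => pow_ne_zero _ (tauI_ne k n hn i)

def Aelt (k n : ℕ) (hn : n = 2 * k + 1) : LF k :=
  wVar k (Sum.inl 0) * (tauEps k)⁻¹ * (Pprod k n hn)⁻¹

def Belt (k n : ℕ) (hn : n = 2 * k + 1) : LF k :=
  (wVar k (Sum.inl 1) * (Qprod k n hn)⁻¹) ^ n

lemma Belt_ne (k n : ℕ) (hn : n = 2 * k + 1) : Belt k n hn ≠ 0 :=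
  pow_ne_zero _ (mul_ne_zero (wVar_ne k _) (inv_ne_zero (Qprod_ne k n hn)))

lemma exists_xi (k n : ℕ) (hn : n = 2 * k + 1) :
    ∃ ξ : LF k, ξ ≠ 0 ∧ ξ ^ (2 * n) = Aelt k n hn * ξ ^ n + Belt k n hn := by
  have hn0 : 0 < n := by omega
  set p : Polynomial (LF k) :=
    Polynomial.X ^ (2 * n) - Polynomial.C (Aelt k n hn) * Polynomial.X ^ n
      - Polynomial.C (Belt k n hn) with hp
  have hdeg : p.degree = (2 * n : ℕ) := by
    have h1 : (Polynomial.C (Aelt k n hn) * Polynomial.X ^ n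
        + Polynomial.C (Belt k n hn)).degree < (Polynomial.X ^ (2*n) :
          Polynomial (LF k)).degree := by
      rw [Polynomial.degree_X_pow]
      apply lt_of_le_of_lt (Polynomial.degree_add_le _ _)
      apply max_lt
      · apply lt_of_le_of_lt (Polynomial.degree_mul_le _ _)
        apply lt_of_le_of_lt (add_le_add Polynomial.degree_C_le le_rfl)
        rw [Polynomial.degree_X_pow, zero_add]
        exact_mod_cast by omega
      · apply lt_of_le_of_lt Polynomial.degree_C_le
        exact_mod_cast by positivity
    have : p = Polynomial.X ^ (2 * n) - (Polynomial.C (Aelt k n hn) * Polynomial.X ^ n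
        + Polynomial.C (Belt k n hn)) := by rw [hp]; ring
    rw [this, Polynomial.degree_sub_eq_left_of_degree_lt h1, Polynomial.degree_X_pow]
  obtain ⟨x, hx⟩ := IsAlgClosed.exists_root p (by rw [hdeg]; exact_mod_cast by omega)
  have hxeval : x ^ (2 * n) - Aelt k n hn * x ^ n - Belt k n hn = 0 := by
    have := hx
    simpa [hp, Polynomial.IsRoot, Polynomial.eval_pow, Polynomial.eval_sub,
      Polynomial.eval_mul, Polynomial.eval_C, Polynomial.eval_X] using this
  refine ⟨x, ?_, by linear_combination hxeval⟩
  intro h0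
  rw [h0, zero_pow (by positivity : 2 * n ≠ 0), zero_pow hn0.ne', mul_zero] at hxeval
  exact Belt_ne k n hn (by linear_combination -hxeval)

def xiElt (k n : ℕ) (hn : n = 2 * k + 1) : LF k := (exists_xi k n hn).choose

lemma xiElt_ne (k n : ℕ) (hn : n = 2 * k + 1) : xiElt k n hn ≠ 0 :=
  (exists_xi k n hn).choose_spec.1

lemma xiElt_eq (k n : ℕ) (hn : n = 2 * k + 1) :
    xiElt k n hn ^ (2 * n) = Aelt k n hn * xiElt k n hn ^ n + Belt k n hn :=
  (exists_xi k n hn).choose_spec.2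

def etaElt (k n : ℕ) (hn : n = 2 * k + 1) : LF k :=
  wVar k (Sum.inl 1) * (Qprod k n hn)⁻¹ * (xiElt k n hn)⁻¹

def vAssign (k n : ℕ) (hn : n = 2 * k + 1) : Fin 4 ⊕ Fin k → LF k :=
  Sum.elim
    ![xiElt k n hn, etaElt k n hn, wVar k (Sum.inl 2) * (tauEps k)⁻¹, tauEps k]
    (tauI k n hn)

def cLhom (k : ℕ) : ℂ →+* LF k :=
  (algebraMap (KF k) (LF k)).comp ((algebraMap (R2 k) (KF k)).comp
    (C : ℂ →+* R2 k))

def psiHat (k n : ℕ) (hn : n = 2 * k + 1) : R2 k →+* LF k :=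
  eval₂Hom (cLhom k) (vAssign k n hn)

lemma psiHat_X0 (k n : ℕ) (hn : n = 2 * k + 1) :
    psiHat k n hn (X (Sum.inl 0)) = xiElt k n hn := by
  rw [psiHat, eval₂Hom_X']; rfl

lemma psiHat_X1 (k n : ℕ) (hn : n = 2 * k + 1) :
    psiHat k n hn (X (Sum.inl 1)) = etaElt k n hn := by
  rw [psiHat, eval₂Hom_X']; rfl

lemma psiHat_X2 (k n : ℕ) (hn : n = 2 * k + 1) :
    psiHat k n hn (X (Sum.inl 2)) = wVar k (Sum.inl 2) * (tauEps k)⁻¹ := by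
  rw [psiHat, eval₂Hom_X']; rfl

lemma psiHat_X3 (k n : ℕ) (hn : n = 2 * k + 1) :
    psiHat k n hn (X (Sum.inl 3)) = tauEps k := by
  rw [psiHat, eval₂Hom_X']; rfl

lemma psiHat_Xr (k n : ℕ) (hn : n = 2 * k + 1) (i : Fin k) :
    psiHat k n hn (X (Sum.inr i)) = tauI k n hn i := by
  rw [psiHat, eval₂Hom_X']; rfl

lemma psiHat_M_ne (k n : ℕ) (hn : n = 2 * k + 1) {m : R2 k} (hm : m ∈ M2 k) :
    psiHat k n hn m ≠ 0 := by
  have hle : M2 k ≤ Submonoid.comap (psiHat k n hn : R2 k →* LF k)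
      (nonZeroDivisors (LF k)) := by
    rw [M2]
    apply Submonoid.closure_le.mpr
    rintro x (rfl | ⟨i, rfl⟩)
    · show psiHat k n hn (X (Sum.inl 3)) ∈ nonZeroDivisors (LF k)
      rw [mem_nonZeroDivisors_iff_ne_zero, psiHat_X3]
      exact tauEps_ne k
    · show psiHat k n hn (X (Sum.inr i)) ∈ nonZeroDivisors (LF k)
      rw [mem_nonZeroDivisors_iff_ne_zero, psiHat_Xr]
      exact tauI_ne k n hn i
  exact mem_nonZeroDivisors_iff_ne_zero.mp (hle hm)

def psiS (k n : ℕ) (hn : n = 2 * k + 1) : S2 k →+* LF k :=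
  IsLocalization.lift (M := M2 k) (S := S2 k)
    (fun y : M2 k => isUnit_iff_ne_zero.mpr (psiHat_M_ne k n hn y.2))

lemma psiS_alg (k n : ℕ) (hn : n = 2 * k + 1) (r : R2 k) :
    psiS k n hn (algebraMap (R2 k) (S2 k) r) = psiHat k n hn r :=
  IsLocalization.lift_eq _ _

lemma psiS_mk (k n : ℕ) (hn : n = 2 * k + 1) (m : R2 k) (hm : m ∈ M2 k) :
    psiS k n hn (Localization.mk 1 ⟨m, hm⟩) = (psiHat k n hn m)⁻¹ := by
  rw [Localization.mk_eq_mk'_apply, psiS, IsLocalization.lift_mk'_spec]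
  simp [mul_inv_cancel₀ (psiHat_M_ne k n hn hm)]

lemma psiHat_Pt (k n : ℕ) (hn : n = 2 * k + 1) :
    psiHat k n hn (Pt k n) = Pprod k n hn := by
  rw [Pt, Pprod, map_prod]
  exact Finset.prod_congr rfl fun i _ => by rw [map_pow, psiHat_Xr]

lemma psiHat_Qt (k n : ℕ) (hn : n = 2 * k + 1) :
    psiHat k n hn (Qt k n) = Qprod k n hn := by
  rw [Qt, Qprod, map_prod]
  exact Finset.prod_congr rfl fun i _ => by rw [map_pow, psiHat_Xr]

lemma xi_eta_pow (k n : ℕ) (hn : n = 2 * k + 1) :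
    xiElt k n hn ^ n * etaElt k n hn ^ n = Belt k n hn := by
  rw [← mul_pow, etaElt, Belt]
  congr 1
  rw [mul_comm (xiElt k n hn) _, mul_assoc, inv_mul_cancel₀ (xiElt_ne k n hn), mul_one]

lemma xi_sub_eta (k n : ℕ) (hn : n = 2 * k + 1) :
    xiElt k n hn ^ n - etaElt k n hn ^ n = Aelt k n hn := by
  have hc : xiElt k n hn ^ n * (xiElt k n hn ^ n - etaElt k n hn ^ n)
      = xiElt k n hn ^ n * Aelt k n hn := by
    rw [mul_sub, xi_eta_pow k n hn, ← pow_add]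
    have h2 : n + n = 2 * n := by omega
    rw [h2, xiElt_eq k n hn]
    ring
  exact mul_left_cancel₀ (pow_ne_zero n (xiElt_ne k n hn)) hc

lemma psi_u2 (k n : ℕ) (hn : n = 2 * k + 1) :
    psiS k n hn (kappaA k n (X (Sum.inl 0))) = wVar k (Sum.inl 0) := by
  rw [kappaA_X0, psiS_alg, map_mul, map_mul, map_sub, map_pow, map_pow,
    psiHat_X0, psiHat_X1, psiHat_X3, psiHat_Pt, xi_sub_eta k n hn, Aelt]
  field_simp [tauEps_ne k, Pprod_ne k n hn]

lemma psi_u3 (k n : ℕ) (hn : n = 2 * k + 1) :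
    psiS k n hn (kappaA k n (X (Sum.inl 1))) = wVar k (Sum.inl 1) := by
  rw [kappaA_X1, psiS_alg, map_mul, map_mul, psiHat_X0, psiHat_X1, psiHat_Qt, etaElt]
  field_simp [xiElt_ne k n hn, Qprod_ne k n hn]

lemma psi_u4 (k n : ℕ) (hn : n = 2 * k + 1) :
    psiS k n hn (kappaA k n (X (Sum.inl 2))) = wVar k (Sum.inl 2) := by
  rw [kappaA_X2, psiS_alg, map_mul, psiHat_X2, psiHat_X3]
  field_simp [tauEps_ne k]

lemma psi_veps (k n : ℕ) (hn : n = 2 * k + 1) :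
    psiS k n hn (kappaA k n (X (Sum.inl 3))) = wVar k (Sum.inl 3) := by
  rw [kappaA_X3]
  exact (psiS_mk k n hn _ (pow_mem (memM_teps k) 2)).trans
    (by rw [map_pow, psiHat_X3, tauEps_sq, inv_inv])

lemma psi_vi (k n : ℕ) (hn : n = 2 * k + 1) (i : Fin k) :
    psiS k n hn (kappaA k n (X (Sum.inr i))) = wVar k (Sum.inr i) := by
  rw [kappaA_Xr]
  exact (psiS_mk k n hn _ (pow_mem (memM_t k i) _)).trans
    (by rw [map_pow, psiHat_Xr, tauI_pow, inv_inv])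

lemma psi_kappaA (k n : ℕ) (hn : n = 2 * k + 1) :
    (psiS k n hn).comp ((kappaA k n : R2 k →+* S2 k)) =
      (algebraMap (KF k) (LF k)).comp (algebraMap (R2 k) (KF k)) := by
  apply MvPolynomial.ringHom_ext
  · intro c
    simp only [RingHom.coe_comp, Function.comp_apply, AlgHom.coe_toRingHom]
    rw [show ((kappaA k n) (C c) : S2 k) = algebraMap ℂ (S2 k) c from aeval_C _ _,
      IsScalarTower.algebraMap_apply ℂ (R2 k) (S2 k), psiS_alg]
    rw [show (algebraMap ℂ (R2 k)) c = C c from rfl]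
    rw [show psiHat k n hn (C c) = cLhom k c from eval₂Hom_C _ _ _]
    rfl
  · rintro (j | i)
    · fin_cases j
      · exact psi_u2 k n hn
      · exact psi_u3 k n hn
      · exact psi_u4 k n hn
      · exact psi_veps k n hn
    · exact psi_vi k n hn i

lemma kappaA_injective (k n : ℕ) (hn : n = 2 * k + 1) {a : R2 k}
    (h : kappaA k n a = 0) : a = 0 := by
  have := RingHom.congr_fun (psi_kappaA k n hn) a
  simp only [RingHom.coe_comp, Function.comp_apply, AlgHom.coe_toRingHom, h, map_zero] at this
  exact algRK_inj k (by rw [map_zero]; exact algKL_inj k (by simpa using this.symm))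

/-! ### `Gpoly` is not a square -/

def e2 (k : ℕ) : (Fin 4 ⊕ Fin k) ≃ Option (Fin 3 ⊕ Fin k) where
  toFun := Sum.elim ![some (Sum.inl 0), some (Sum.inl 1), some (Sum.inl 2), none]
    (fun i => some (Sum.inr i))
  invFun := fun o => o.elim (Sum.inl 3)
    (Sum.elim (fun j => Sum.inl j.castSucc) (fun i => Sum.inr i))
  left_inv := by
    rintro (i | i)
    · fin_cases i <;> rfl
    · rfl
  right_inv := by
    rintro (_ | (j | i))
    · rfl
    · fin_cases j <;> rfl
    · rfl

def Phi2 (k : ℕ) : MvPolynomial (Fin 4 ⊕ Fin k) ℂ ≃ₐ[ℂ] Polynomial (MvPolynomial (Fin 3 ⊕ Fin k) ℂ) :=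
  (renameEquiv ℂ (e2 k)).trans (optionEquivLeft ℂ (Fin 3 ⊕ Fin k))

lemma Phi2_X (k : ℕ) (j : Fin 4 ⊕ Fin k) :
    Phi2 k (X j) = optionEquivLeft ℂ (Fin 3 ⊕ Fin k) (X (e2 k j)) := by
  simp [Phi2]

lemma Phi2_G (k n : ℕ) :
    Phi2 k (Gpoly k n) =
      Polynomial.C ((X (Sum.inl 0) : MvPolynomial (Fin 3 ⊕ Fin k) ℂ) ^ 2) * Polynomial.X +
        Polynomial.C (4 * (X (Sum.inl 1) : MvPolynomial (Fin 3 ⊕ Fin k) ℂ) ^ n *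
          ∏ i : Fin k, X (Sum.inr i) ^ (n - 2 * ((i : ℕ) + 1))) := by
  have h0 : (e2 k) (Sum.inl 0) = some (Sum.inl 0) := rfl
  have h1 : (e2 k) (Sum.inl 1) = some (Sum.inl 1) := rfl
  have h3 : (e2 k) (Sum.inl 3) = none := rfl
  have hr : ∀ i : Fin k, (e2 k) (Sum.inr i) = some (Sum.inr i) := fun _ => rfl
  have hPhi4 : Phi2 k (4 : R2 k) =
      Polynomial.C (4 : MvPolynomial (Fin 3 ⊕ Fin k) ℂ) := by
    rw [map_ofNat, map_ofNat]
  simp only [Gpoly, map_add, map_mul, map_pow, map_prod, Phi2_X, h0, h1, h3, hr, hPhi4,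
    optionEquivLeft_X_none, optionEquivLeft_X_some, map_add]

lemma no_sqrt (k n : ℕ) : ¬ ∃ b : R2 k, b ^ 2 = Gpoly k n := by
  rintro ⟨b, hb⟩
  have h := congrArg (Phi2 k) hb
  rw [map_pow, Phi2_G] at h
  have hb0 : Phi2 k b ≠ 0 := by
    intro h0
    rw [h0] at h
    have := congrArg Polynomial.natDegree h
    rw [Polynomial.natDegree_linear (pow_ne_zero 2 (MvPolynomial.X_ne_zero _))] at this
    simp at this
  have := congrArg Polynomial.natDegree h
  rw [Polynomial.natDegree_pow,
    Polynomial.natDegree_linear (pow_ne_zero 2 (MvPolynomial.X_ne_zero _))] at this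
  omega

lemma psiS_sElt_not_mem (k n : ℕ) (hk : 1 ≤ k) (hn : n = 2 * k + 1) :
    psiS k n hn (sElt k n) ∉ Set.range (algebraMap (KF k) (LF k)) := by
  rintro ⟨c, hc⟩
  have hsq : psiS k n hn (sElt k n) ^ 2 =
      algebraMap (KF k) (LF k) (algebraMap (R2 k) (KF k) (Gpoly k n)) := by
    rw [← map_pow, sq_sElt k n hn]
    exact RingHom.congr_fun (psi_kappaA k n hn) (Gpoly k n)
  rw [← hc, ← map_pow] at hsq
  have hc2 : c ^ 2 = algebraMap (R2 k) (KF k) (Gpoly k n) := algKL_inj k hsq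
  have hint : IsIntegral (R2 k) c := by
    refine ⟨Polynomial.X ^ 2 - Polynomial.C (Gpoly k n),
      Polynomial.monic_X_pow_sub_C _ two_ne_zero, ?_⟩
    simp only [Polynomial.eval₂_sub, Polynomial.eval₂_X_pow, Polynomial.eval₂_C]
    rw [hc2, sub_self]
  obtain ⟨b, hb⟩ := IsIntegrallyClosed.isIntegral_iff.mp hint
  exact no_sqrt k n ⟨b, algRK_inj k (by rw [map_pow, hb, hc2])⟩

/-- for odd `n = 2k+1 ≥ 3`, the kernel of `κ` is the principal ideal
generated by the trinomial `Z₁² − Z₂²T_ε − 4Z₃ⁿ·∏ T_i^{n−2i}`. -/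
theorem stmt2 (k n : ℕ) (hk : 1 ≤ k) (hn : n = 2 * k + 1) :
    RingHom.ker (kappa2 k n) =
      Ideal.span
        {(X (Sum.inl 0) ^ 2 - X (Sum.inl 1) ^ 2 * X (Sum.inl 4)
            - 4 * X (Sum.inl 2) ^ n *
              ∏ i : Fin k, X (Sum.inr i) ^ (n - 2 * ((i : ℕ) + 1)) :
          MvPolynomial (Fin 5 ⊕ Fin k) ℂ)} := by
  have hmonic : (Polynomial.X ^ 2 - Polynomial.C (Gpoly k n)).Monic :=
    Polynomial.monic_X_pow_sub_C _ two_ne_zero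
  have hEm : Polynomial.eval₂ ((kappaA k n) : R2 k →+* S2 k) (sElt k n)
      (Polynomial.X ^ 2 - Polynomial.C (Gpoly k n)) = 0 := by
    simp only [Polynomial.eval₂_sub, Polynomial.eval₂_X_pow, Polynomial.eval₂_C]
    rw [show ((kappaA k n) : R2 k →+* S2 k) (Gpoly k n) = kappaA k n (Gpoly k n) from rfl,
      ← sq_sElt k n hn, sub_self]
  ext p
  rw [RingHom.mem_ker, show ({(X (Sum.inl 0) ^ 2 - X (Sum.inl 1) ^ 2 * X (Sum.inl 4)
            - 4 * X (Sum.inl 2) ^ n *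
              ∏ i : Fin k, X (Sum.inr i) ^ (n - 2 * ((i : ℕ) + 1)) :
          MvPolynomial (Fin 5 ⊕ Fin k) ℂ)} : Set (MvPolynomial (Fin 5 ⊕ Fin k) ℂ))
      = {fTri k n} from rfl, Ideal.mem_span_singleton]
  constructor
  · intro hp
    rw [factor k n p] at hp
    set q := Phi k p with hq
    set m := Polynomial.X ^ 2 - Polynomial.C (Gpoly k n) with hm
    have hdiv := Polynomial.modByMonic_add_div q m
    have hEr : Polynomial.eval₂ ((kappaA k n) : R2 k →+* S2 k) (sElt k n) (q %ₘ m) = 0 := by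
      have := congrArg (Polynomial.eval₂ ((kappaA k n) : R2 k →+* S2 k) (sElt k n)) hdiv
      rw [Polynomial.eval₂_add, Polynomial.eval₂_mul, hEm, zero_mul, add_zero] at this
      rw [this]
      exact hp
    have hdegr : (q %ₘ m).degree ≤ 1 := by
      have h2 : m.degree = 2 := Polynomial.degree_X_pow_sub_C (by norm_num) _
      have hlt := Polynomial.degree_modByMonic_lt q hmonic
      rw [h2] at hlt
      exact Order.le_of_lt_succ (by exact_mod_cast hlt)
    have hr := Polynomial.eq_X_add_C_of_degree_le_one hdegr
    rw [hr] at hEr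
    simp only [Polynomial.eval₂_add, Polynomial.eval₂_mul, Polynomial.eval₂_C,
      Polynomial.eval₂_X] at hEr
    have hc1 : (q %ₘ m).coeff 1 = 0 := by
      by_contra hc1
      have hps := congrArg (psiS k n hn) hEr
      rw [map_add, map_mul, map_zero] at hps
      have hcomp : ∀ r : R2 k, psiS k n hn (((kappaA k n) : R2 k →+* S2 k) r) =
          algebraMap (KF k) (LF k) (algebraMap (R2 k) (KF k) r) := fun r => by
        simpa [RingHom.comp_apply] using RingHom.congr_fun (psi_kappaA k n hn) r
      rw [hcomp, hcomp] at hps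
      have hK1 : algebraMap (R2 k) (KF k) ((q %ₘ m).coeff 1) ≠ 0 := by
        rw [Ne, map_eq_zero_iff _ (algRK_inj k)]
        exact hc1
      apply psiS_sElt_not_mem k n hk hn
      refine ⟨(- algebraMap (R2 k) (KF k) ((q %ₘ m).coeff 0)) *
        (algebraMap (R2 k) (KF k) ((q %ₘ m).coeff 1))⁻¹, ?_⟩
      rw [map_mul, map_neg, map_inv₀]
      have hL1 : (algebraMap (KF k) (LF k)) (algebraMap (R2 k) (KF k) ((q %ₘ m).coeff 1))
          ≠ 0 := by
        rw [Ne, map_eq_zero_iff _ (algKL_inj k)]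
        exact hK1
      field_simp
      linear_combination -hps
    have hc0 : (q %ₘ m).coeff 0 = 0 := by
      apply kappaA_injective k n hn
      rw [hc1, map_zero, zero_mul, zero_add] at hEr
      exact hEr
    have hr0 : q %ₘ m = 0 := by rw [hr, hc0, hc1]; simp
    rw [hr0, zero_add] at hdiv
    refine ⟨(Phi k).symm (q /ₘ m), ?_⟩
    apply (Phi k).injective
    rw [map_mul, Phi_fTri, AlgEquiv.apply_symm_apply, ← hm, hdiv]
  · rintro ⟨c, rfl⟩
    rw [map_mul, factor k n, Phi_fTri, hEm, zero_mul]
end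
end

section
/- Let k ≥ 2. In ℝ^{k+1} consider the k+5 vectors: c₁ = (1,2,…,k,0), c₂ = (1,2,…,k,1), c₃ = (0,…,0,−2), c₄ = (1,1,…,1,0), c_{4+i} = −e_i for i = 1,…,k, and c_{k+5} = e_{k+1}. For each j ∈ {1,…,k+5} let F_j = cone({c_l : l ≠ j}). Then the intersection ⋂_{j=1}^{k+5} F_j equals cone(q, v₁, …, v_k), where q = e_{k+1} and v_i = (1,2,…,i−1,i,i,…,i,0) (first i−1 coordinates 1,2,…,i−1, coordinates i through k equal to i, last coordinate 0), and this cone equals the set {a ∈ ℝ^{k+1} : a_{k+1} ≥ 0, 2a₁ ≥ a₂, a_k ≥ a_{k−1}, and 2a_i ≥ a_{i−1} + a_{i+1} for all 1 < i < k}. -/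
/-- The cone generated by a set `S` of vectors: all finite nonnegative real
linear combinations of elements of `S`. -/
def cone {m : ℕ} (S : Set (Fin m → ℝ)) : Set (Fin m → ℝ) :=
  {x | ∃ (n : ℕ) (c : Fin n → ℝ) (g : Fin n → (Fin m → ℝ)),
    (∀ i, 0 ≤ c i) ∧ (∀ i, g i ∈ S) ∧ x = ∑ i, c i • g i}

namespace ConeAux

variable {m : ℕ} {S T : Set (Fin m → ℝ)}

lemma subset_cone {x : Fin m → ℝ} (hx : x ∈ S) : x ∈ cone S :=
  ⟨1, fun _ => 1, fun _ => x, fun _ => zero_le_one, fun _ => hx, by simp⟩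

lemma zero_mem : (0 : Fin m → ℝ) ∈ cone S :=
  ⟨0, fun i => i.elim0, fun i => i.elim0, fun i => i.elim0, fun i => i.elim0, by simp⟩

lemma add_mem {x y : Fin m → ℝ} (hx : x ∈ cone S) (hy : y ∈ cone S) :
    x + y ∈ cone S := by
  obtain ⟨n, cx, gx, hcx, hgx, rfl⟩ := hx
  obtain ⟨n', cy, gy, hcy, hgy, rfl⟩ := hy
  refine ⟨n + n', Fin.append cx cy, Fin.append gx gy, ?_, ?_, ?_⟩
  · exact Fin.addCases (fun j => by simpa using hcx j) (fun j => by simpa using hcy j)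
  · exact Fin.addCases (fun j => by simpa using hgx j) (fun j => by simpa using hgy j)
  · rw [Fin.sum_univ_add]
    simp

lemma smul_mem {t : ℝ} (ht : 0 ≤ t) {x : Fin m → ℝ} (hx : x ∈ cone S) :
    t • x ∈ cone S := by
  obtain ⟨n, cx, gx, hcx, hgx, rfl⟩ := hx
  exact ⟨n, fun i => t * cx i, gx, fun i => mul_nonneg ht (hcx i), hgx, by
    rw [Finset.smul_sum]; simp [mul_smul]⟩

lemma sum_mem {ι : Type*} (s : Finset ι) (f : ι → Fin m → ℝ)
    (h : ∀ i ∈ s, f i ∈ cone S) : (∑ i ∈ s, f i) ∈ cone S := by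
  classical
  induction s using Finset.induction_on with
  | empty => simpa using (zero_mem : (0:Fin m → ℝ) ∈ cone S)
  | @insert x s hnot ih =>
    rw [Finset.sum_insert hnot]
    exact add_mem (h _ (Finset.mem_insert_self _ _))
      (ih fun i hi => h i (Finset.mem_insert_of_mem hi))

lemma comb_mem {ι : Type*} [Fintype ι] (w : ι → ℝ) (g : ι → Fin m → ℝ)
    (hw : ∀ i, 0 ≤ w i) (hg : ∀ i, w i ≠ 0 → g i ∈ cone S) :
    (∑ i, w i • g i) ∈ cone S := by
  refine sum_mem _ _ fun i _ => ?_
  by_cases h : w i = 0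
  · simp [h, zero_mem]
  · exact smul_mem (hw i) (hg i h)

lemma cone_subset (h : ∀ x ∈ S, x ∈ cone T) : cone S ⊆ cone T := by
  rintro x ⟨n, cx, gx, hcx, hgx, rfl⟩
  exact sum_mem _ _ fun i _ => smul_mem (hcx i) (h _ (hgx i))

lemma cone_nonneg (φ : (Fin m → ℝ) →ₗ[ℝ] ℝ) (h : ∀ x ∈ S, 0 ≤ φ x)
    {a : Fin m → ℝ} (ha : a ∈ cone S) : 0 ≤ φ a := by
  obtain ⟨n, cx, gx, hcx, hgx, rfl⟩ := ha
  rw [map_sum]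
  exact Finset.sum_nonneg fun i _ => by
    rw [map_smul]; exact mul_nonneg (hcx i) (h _ (hgx i))

end ConeAux

set_option maxHeartbeats 16000000 in
open ConeAux in
/-- the intersection of the cones spanned by all size-`(k+4)` subsets
(facet images) of the `k+5` columns of the weight matrix equals `cone(q, v₁, …, v_k)`,
which in turn equals the polyhedron cut out by the stated inequalities. -/
theorem stmt4 (k : ℕ) (hk : 2 ≤ k)
    (c : (Fin 4 ⊕ Fin k ⊕ Unit) → Fin (k + 1) → ℝ)
    (hc1 : c (Sum.inl 0) = fun j : Fin (k + 1) =>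
      if (j : ℕ) < k then (((j : ℕ) + 1 : ℕ) : ℝ) else 0)
    (hc2 : c (Sum.inl 1) = fun j : Fin (k + 1) =>
      if (j : ℕ) < k then (((j : ℕ) + 1 : ℕ) : ℝ) else 1)
    (hc3 : c (Sum.inl 2) = fun j : Fin (k + 1) =>
      if (j : ℕ) = k then (-2 : ℝ) else 0)
    (hc4 : c (Sum.inl 3) = fun j : Fin (k + 1) =>
      if (j : ℕ) < k then (1 : ℝ) else 0)
    (hc5 : ∀ i : Fin k, c (Sum.inr (Sum.inl i)) = fun j : Fin (k + 1) =>
      if (j : ℕ) = (i : ℕ) then (-1 : ℝ) else 0)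
    (hc6 : c (Sum.inr (Sum.inr ())) = fun j : Fin (k + 1) =>
      if (j : ℕ) = k then (1 : ℝ) else 0)
    (q : Fin (k + 1) → ℝ) (hq : q = fun j : Fin (k + 1) =>
      if (j : ℕ) = k then (1 : ℝ) else 0)
    (v : Fin k → Fin (k + 1) → ℝ)
    (hv : ∀ i j, v i j =
      if (j : ℕ) < k then ((min ((j : ℕ) + 1) ((i : ℕ) + 1) : ℕ) : ℝ) else 0) :
    (⋂ l : Fin 4 ⊕ Fin k ⊕ Unit, cone (c '' {l' | l' ≠ l}))
      = cone ({q} ∪ Set.range v) ∧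
    cone ({q} ∪ Set.range v)
      = {a : Fin (k + 1) → ℝ |
          0 ≤ a ⟨k, by omega⟩ ∧
          a ⟨1, by omega⟩ ≤ 2 * a ⟨0, by omega⟩ ∧
          a ⟨k - 2, by omega⟩ ≤ a ⟨k - 1, by omega⟩ ∧
          ∀ (i : ℕ) (h1 : 0 < i) (h2 : i + 2 ≤ k),
            a ⟨i - 1, by omega⟩ + a ⟨i + 1, by omega⟩ ≤ 2 * a ⟨i, by omega⟩} := by
  have hm0 : (⟨0, by omega⟩ : Fin 4) = 0 := rfl
  have hm1 : (⟨1, by omega⟩ : Fin 4) = 1 := rfl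
  have hm2 : (⟨2, by omega⟩ : Fin 4) = 2 := rfl
  have hm3 : (⟨3, by omega⟩ : Fin 4) = 3 := rfl
  -- expressions of q and v as nonneg combinations of columns
  have hExprQ : q = c (Sum.inl 1) + ∑ j : Fin k, (((j:ℕ)+1 : ℕ) : ℝ) • c (Sum.inr (Sum.inl j)) := by
    funext j
    have hj := j.isLt
    simp only [hq, hc2, hc5, Pi.add_apply, Finset.sum_apply, Pi.smul_apply, smul_eq_mul]
    rcases lt_or_ge (j:ℕ) k with hjk | hjk
    · rw [if_neg (by omega), if_pos hjk,
        Finset.sum_eq_single (⟨(j:ℕ), hjk⟩ : Fin k)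
          (fun b _ hb => by
            have hne : ¬((j:ℕ) = (b:ℕ)) := by simpa [Fin.ext_iff, eq_comm] using hb
            simp [hne])
          (fun h => absurd (Finset.mem_univ _) h)]
      simp
    · have hjk' : (j:ℕ) = k := by omega
      rw [if_pos hjk', if_neg (by omega)]
      rw [Finset.sum_eq_zero (fun b _ => by rw [if_neg (by have := b.isLt; omega), mul_zero])]
      norm_num
  have hExprA : ∀ i : Fin k, v i = c (Sum.inl 0) +
      ∑ j : Fin k, (if (i:ℕ) < (j:ℕ) then (((j:ℕ) - (i:ℕ) : ℕ) : ℝ) else 0) • c (Sum.inr (Sum.inl j)) := by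
    intro i
    funext j
    have hj := j.isLt
    have hi := i.isLt
    simp only [hv, hc1, hc5, Pi.add_apply, Finset.sum_apply, Pi.smul_apply, smul_eq_mul]
    rcases lt_or_ge (j:ℕ) k with hjk | hjk
    · rw [if_pos hjk, if_pos hjk,
        Finset.sum_eq_single (⟨(j:ℕ), hjk⟩ : Fin k)
          (fun b _ hb => by
            have hne : ¬((j:ℕ) = (b:ℕ)) := by simpa [Fin.ext_iff, eq_comm] using hb
            simp [hne])
          (fun h => absurd (Finset.mem_univ _) h)]
      simp only [Fin.val_mk]
      split_ifs with hij
      · rw [show min ((j:ℕ)+1) ((i:ℕ)+1) = (i:ℕ)+1 from by omega,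
          Nat.cast_sub (by omega : (i:ℕ) ≤ (j:ℕ))]
        push_cast
        ring
      · rw [show min ((j:ℕ)+1) ((i:ℕ)+1) = (j:ℕ)+1 from by omega]
        push_cast
        ring
    · rw [if_neg (by omega), if_neg (by omega)]
      rw [Finset.sum_eq_zero (fun b _ => by
        have hne : ¬((j:ℕ) = (b:ℕ)) := by have := b.isLt; omega
        simp [hne])]
      norm_num
  have hExprB : ∀ i : Fin k, v i = (((i:ℕ)+1 : ℕ) : ℝ) • c (Sum.inl 3) +
      ∑ j : Fin k, (if (j:ℕ) < (i:ℕ) then (((i:ℕ) - (j:ℕ) : ℕ) : ℝ) else 0) • c (Sum.inr (Sum.inl j)) := by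
    intro i
    funext j
    have hj := j.isLt
    have hi := i.isLt
    simp only [hv, hc4, hc5, Pi.add_apply, Finset.sum_apply, Pi.smul_apply, smul_eq_mul]
    rcases lt_or_ge (j:ℕ) k with hjk | hjk
    · rw [if_pos hjk, if_pos hjk,
        Finset.sum_eq_single (⟨(j:ℕ), hjk⟩ : Fin k)
          (fun b _ hb => by
            have hne : ¬((j:ℕ) = (b:ℕ)) := by simpa [Fin.ext_iff, eq_comm] using hb
            simp [hne])
          (fun h => absurd (Finset.mem_univ _) h)]
      simp only [Fin.val_mk]
      split_ifs with hij
      · rw [show min ((j:ℕ)+1) ((i:ℕ)+1) = (j:ℕ)+1 from by omega,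
          Nat.cast_sub (by omega : (j:ℕ) ≤ (i:ℕ))]
        push_cast
        ring
      · rw [show min ((j:ℕ)+1) ((i:ℕ)+1) = (i:ℕ)+1 from by omega]
        push_cast
        ring
    · rw [if_neg (by omega), if_neg (by omega)]
      rw [Finset.sum_eq_zero (fun b _ => by
        have hne : ¬((j:ℕ) = (b:ℕ)) := by have := b.isLt; omega
        simp [hne])]
      norm_num
  -- cone(q,v) ⊆ every facet cone
  have hgenA : ∀ (i : Fin k) (l : Fin 4 ⊕ Fin k ⊕ Unit), Sum.inl 0 ≠ l →
      (∀ j : Fin k, (i:ℕ) < (j:ℕ) → Sum.inr (Sum.inl j) ≠ l) →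
      v i ∈ cone (c '' {l' | l' ≠ l}) := by
    intro i l h0 hJ
    rw [hExprA i]
    refine add_mem (subset_cone ⟨Sum.inl 0, h0, rfl⟩) (comb_mem _ _ ?_ ?_)
    · intro j; split
      · exact Nat.cast_nonneg _
      · exact le_rfl
    · intro j hne
      have hij : (i:ℕ) < (j:ℕ) := by by_contra h; exact hne (if_neg h)
      exact subset_cone ⟨Sum.inr (Sum.inl j), hJ j hij, rfl⟩
  have hgenB : ∀ (i : Fin k) (l : Fin 4 ⊕ Fin k ⊕ Unit), Sum.inl 3 ≠ l →
      (∀ j : Fin k, (j:ℕ) < (i:ℕ) → Sum.inr (Sum.inl j) ≠ l) →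
      v i ∈ cone (c '' {l' | l' ≠ l}) := by
    intro i l h0 hJ
    rw [hExprB i]
    refine add_mem (smul_mem (Nat.cast_nonneg _) (subset_cone ⟨Sum.inl 3, h0, rfl⟩))
      (comb_mem _ _ ?_ ?_)
    · intro j; split
      · exact Nat.cast_nonneg _
      · exact le_rfl
    · intro j hne
      have hij : (j:ℕ) < (i:ℕ) := by by_contra h; exact hne (if_neg h)
      exact subset_cone ⟨Sum.inr (Sum.inl j), hJ j hij, rfl⟩
  have key3 : cone ({q} ∪ Set.range v) ⊆ ⋂ l : Fin 4 ⊕ Fin k ⊕ Unit, cone (c '' {l' | l' ≠ l}) := by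
    rw [Set.subset_iInter_iff]
    intro l
    apply cone_subset
    rintro x (rfl | ⟨i, rfl⟩)
    · rcases l with lf | li | lu
      · exact subset_cone ⟨Sum.inr (Sum.inr ()), by simp, by rw [hc6, hq]⟩
      · exact subset_cone ⟨Sum.inr (Sum.inr ()), by simp, by rw [hc6, hq]⟩
      · rw [hExprQ]
        exact add_mem (subset_cone ⟨Sum.inl 1, by simp, rfl⟩)
          (comb_mem _ _ (fun j => Nat.cast_nonneg _)
            (fun j _ => subset_cone ⟨Sum.inr (Sum.inl j), by simp, rfl⟩))
    · rcases l with lf | li | lu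
      · fin_cases lf
        · exact hgenB i _ (by simp) (fun j _ => by simp)
        · exact hgenA i _ (by simp) (fun j _ => by simp)
        · exact hgenA i _ (by simp) (fun j _ => by simp)
        · exact hgenA i _ (by simp) (fun j _ => by simp)
      · rcases le_or_gt (li:ℕ) (i:ℕ) with hle | hlt
        · exact hgenA i _ (by simp) (fun j hj => by
            simp only [ne_eq, Sum.inr.injEq, Sum.inl.injEq]
            exact fun h => absurd (congrArg Fin.val h) (by omega))
        · exact hgenB i _ (by simp) (fun j hj => by
            simp only [ne_eq, Sum.inr.injEq, Sum.inl.injEq]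
            exact fun h => absurd (congrArg Fin.val h) (by omega))
      · exact hgenA i _ (by simp) (fun j _ => by simp)
  -- intersection ⊆ polyhedron
  have key1' : ∀ a ∈ (⋂ l : Fin 4 ⊕ Fin k ⊕ Unit, cone (c '' {l' | l' ≠ l})),
      0 ≤ a ⟨k, by omega⟩ ∧
      a ⟨1, by omega⟩ ≤ 2 * a ⟨0, by omega⟩ ∧
      a ⟨k - 2, by omega⟩ ≤ a ⟨k - 1, by omega⟩ ∧
      ∀ (i : ℕ) (h1 : 0 < i) (h2 : i + 2 ≤ k),
        a ⟨i - 1, by omega⟩ + a ⟨i + 1, by omega⟩ ≤ 2 * a ⟨i, by omega⟩ := by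
    intro a ha
    have ham := Set.mem_iInter.mp ha
    refine ⟨?_, ?_, ?_, ?_⟩
    · have := cone_nonneg (LinearMap.proj (⟨k, by omega⟩ : Fin (k+1))) ?_ (ham (Sum.inl 2))
      · simpa using this
      · rintro x ⟨l', hl', rfl⟩
        rcases l' with lf | li | ⟨⟩
        · fin_cases lf
          · simp only [LinearMap.proj_apply, hm0, hm1, hm2, hm3, hc1, Fin.val_mk]
            rw [if_neg (by omega)]
          · simp only [LinearMap.proj_apply, hm0, hm1, hm2, hm3, hc2, Fin.val_mk]
            rw [if_neg (by omega)]; norm_num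
          · exact absurd rfl hl'
          · simp only [LinearMap.proj_apply, hm0, hm1, hm2, hm3, hc4, Fin.val_mk]
            rw [if_neg (by omega)]
        · simp only [LinearMap.proj_apply, hm0, hm1, hm2, hm3, hc5, Fin.val_mk]
          rw [if_neg (by have := li.isLt; omega)]
        · simp only [LinearMap.proj_apply, hm0, hm1, hm2, hm3, hc6, Fin.val_mk]
          norm_num
    · have := cone_nonneg ((2:ℝ) • LinearMap.proj (⟨0, by omega⟩ : Fin (k+1))
          - LinearMap.proj (⟨1, by omega⟩ : Fin (k+1))) ?_
          (ham (Sum.inr (Sum.inl ⟨0, by omega⟩)))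
      · simp only [LinearMap.sub_apply, LinearMap.smul_apply, LinearMap.proj_apply,
          smul_eq_mul] at this
        linarith
      · rintro x ⟨l', hl', rfl⟩
        simp only [LinearMap.sub_apply, LinearMap.smul_apply, LinearMap.proj_apply, smul_eq_mul]
        rcases l' with lf | li | ⟨⟩
        · fin_cases lf
          · simp only [hm0, hm1, hm2, hm3, hc1, Fin.val_mk]
            rw [if_pos (by omega), if_pos (by omega)]; norm_num
          · simp only [hm0, hm1, hm2, hm3, hc2, Fin.val_mk]
            rw [if_pos (by omega), if_pos (by omega)]; norm_num
          · simp only [hm0, hm1, hm2, hm3, hc3, Fin.val_mk]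
            rw [if_neg (by omega), if_neg (by omega)]; norm_num
          · simp only [hm0, hm1, hm2, hm3, hc4, Fin.val_mk]
            rw [if_pos (by omega), if_pos (by omega)]; norm_num
        · have hne : (li:ℕ) ≠ 0 := by
            simp only [ne_eq, Set.mem_setOf_eq, Sum.inr.injEq, Sum.inl.injEq,
              Fin.ext_iff, Fin.val_mk] at hl'
            exact hl'
          simp only [hc5, Fin.val_mk]
          rw [if_neg (by omega)]
          split_ifs <;> norm_num
        · simp only [hc6, Fin.val_mk]
          rw [if_neg (by omega), if_neg (by omega)]; norm_num
    · have := cone_nonneg ((LinearMap.proj (R := ℝ) (φ := fun _ : Fin (k+1) => ℝ) (⟨k-1, by omega⟩ : Fin (k+1))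
          - LinearMap.proj (⟨k-2, by omega⟩ : Fin (k+1)) : (Fin (k+1) → ℝ) →ₗ[ℝ] ℝ)) ?_
          (ham (Sum.inr (Sum.inl ⟨k-1, by omega⟩)))
      · simp only [LinearMap.sub_apply, LinearMap.proj_apply] at this
        linarith
      · rintro x ⟨l', hl', rfl⟩
        simp only [LinearMap.sub_apply, LinearMap.proj_apply]
        rcases l' with lf | li | ⟨⟩
        · fin_cases lf
          · simp only [hm0, hm1, hm2, hm3, hc1, Fin.val_mk]
            rw [if_pos (by omega), if_pos (by omega), sub_nonneg]
            exact_mod_cast (show k-2+1 ≤ k-1+1 by omega)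
          · simp only [hm0, hm1, hm2, hm3, hc2, Fin.val_mk]
            rw [if_pos (by omega), if_pos (by omega), sub_nonneg]
            exact_mod_cast (show k-2+1 ≤ k-1+1 by omega)
          · simp only [hm0, hm1, hm2, hm3, hc3, Fin.val_mk]
            rw [if_neg (by omega), if_neg (by omega)]; norm_num
          · simp only [hm0, hm1, hm2, hm3, hc4, Fin.val_mk]
            rw [if_pos (by omega), if_pos (by omega)]; norm_num
        · have hne : (li:ℕ) ≠ k-1 := by
            simp only [ne_eq, Set.mem_setOf_eq, Sum.inr.injEq, Sum.inl.injEq,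
              Fin.ext_iff, Fin.val_mk] at hl'
            exact hl'
          simp only [hc5, Fin.val_mk]
          rw [if_neg (by omega)]
          split_ifs <;> norm_num
        · simp only [hc6, Fin.val_mk]
          rw [if_neg (by omega), if_neg (by omega)]; norm_num
    · intro n h1 h2
      have := cone_nonneg ((2:ℝ) • LinearMap.proj (⟨n, by omega⟩ : Fin (k+1))
          - LinearMap.proj (⟨n-1, by omega⟩ : Fin (k+1))
          - LinearMap.proj (⟨n+1, by omega⟩ : Fin (k+1))) ?_
          (ham (Sum.inr (Sum.inl ⟨n, by omega⟩)))
      · simp only [LinearMap.sub_apply, LinearMap.smul_apply, LinearMap.proj_apply,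
          smul_eq_mul] at this
        linarith
      · rintro x ⟨l', hl', rfl⟩
        simp only [LinearMap.sub_apply, LinearMap.smul_apply, LinearMap.proj_apply, smul_eq_mul]
        rcases l' with lf | li | ⟨⟩
        · fin_cases lf
          · simp only [hm0, hm1, hm2, hm3, hc1, Fin.val_mk]
            rw [if_pos (by omega), if_pos (by omega), if_pos (by omega),
              show n-1+1 = n from by omega]
            push_cast
            linarith
          · simp only [hm0, hm1, hm2, hm3, hc2, Fin.val_mk]
            rw [if_pos (by omega), if_pos (by omega), if_pos (by omega),
              show n-1+1 = n from by omega]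
            push_cast
            linarith
          · simp only [hm0, hm1, hm2, hm3, hc3, Fin.val_mk]
            rw [if_neg (by omega), if_neg (by omega), if_neg (by omega)]; norm_num
          · simp only [hm0, hm1, hm2, hm3, hc4, Fin.val_mk]
            rw [if_pos (by omega), if_pos (by omega), if_pos (by omega)]; norm_num
        · have hne : (li:ℕ) ≠ n := by
            simp only [ne_eq, Set.mem_setOf_eq, Sum.inr.injEq, Sum.inl.injEq,
              Fin.ext_iff, Fin.val_mk] at hl'
            exact hl'
          simp only [hc5, Fin.val_mk]
          rw [if_neg (by omega)]
          split_ifs <;> norm_num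
        · simp only [hc6, Fin.val_mk]
          rw [if_neg (by omega), if_neg (by omega), if_neg (by omega)]; norm_num
  -- cone(q,v) ⊆ polyhedron
  have key1 : ∀ a ∈ cone ({q} ∪ Set.range v),
      0 ≤ a ⟨k, by omega⟩ ∧
      a ⟨1, by omega⟩ ≤ 2 * a ⟨0, by omega⟩ ∧
      a ⟨k - 2, by omega⟩ ≤ a ⟨k - 1, by omega⟩ ∧
      ∀ (i : ℕ) (h1 : 0 < i) (h2 : i + 2 ≤ k),
        a ⟨i - 1, by omega⟩ + a ⟨i + 1, by omega⟩ ≤ 2 * a ⟨i, by omega⟩ := by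
    intro a ha
    refine ⟨?_, ?_, ?_, ?_⟩
    · have := cone_nonneg (LinearMap.proj (R := ℝ) (φ := fun _ : Fin (k+1) => ℝ)
          (⟨k, by omega⟩ : Fin (k+1))) ?_ ha
      · simpa using this
      · rintro x (rfl | ⟨i, rfl⟩)
        · simp only [LinearMap.proj_apply, hq, Fin.val_mk]
          norm_num
        · simp only [LinearMap.proj_apply, hv, Fin.val_mk]
          rw [if_neg (by omega)]
    · have := cone_nonneg ((2:ℝ) • LinearMap.proj (⟨0, by omega⟩ : Fin (k+1))
          - LinearMap.proj (⟨1, by omega⟩ : Fin (k+1))) ?_ ha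
      · simp only [LinearMap.sub_apply, LinearMap.smul_apply, LinearMap.proj_apply,
          smul_eq_mul] at this
        linarith
      · rintro x (rfl | ⟨i, rfl⟩) <;>
          simp only [LinearMap.sub_apply, LinearMap.smul_apply, LinearMap.proj_apply,
            smul_eq_mul, hq, hv, Fin.val_mk]
        · rw [if_neg (by omega), if_neg (by omega)]; norm_num
        · rw [if_pos (by omega), if_pos (by omega), sub_nonneg]
          have hnat : min (1+1) ((i:ℕ)+1) ≤ 2 * min (0+1) ((i:ℕ)+1) := by omega
          calc ((min (1+1) ((i:ℕ)+1) : ℕ) : ℝ) ≤ ((2 * min (0+1) ((i:ℕ)+1) : ℕ) : ℝ) :=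
                Nat.cast_le.mpr hnat
            _ = 2 * ((min (0+1) ((i:ℕ)+1) : ℕ) : ℝ) := by push_cast; ring
    · have := cone_nonneg ((LinearMap.proj (R := ℝ) (φ := fun _ : Fin (k+1) => ℝ)
          (⟨k-1, by omega⟩ : Fin (k+1))
          - LinearMap.proj (⟨k-2, by omega⟩ : Fin (k+1)) : (Fin (k+1) → ℝ) →ₗ[ℝ] ℝ)) ?_ ha
      · simp only [LinearMap.sub_apply, LinearMap.proj_apply] at this
        linarith
      · rintro x (rfl | ⟨i, rfl⟩) <;>
          simp only [LinearMap.sub_apply, LinearMap.proj_apply, hq, hv, Fin.val_mk]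
        · rw [if_neg (by omega), if_neg (by omega)]; norm_num
        · rw [if_pos (by omega), if_pos (by omega), sub_nonneg]
          exact Nat.cast_le.mpr (by omega)
    · intro n h1 h2
      have := cone_nonneg ((2:ℝ) • LinearMap.proj (⟨n, by omega⟩ : Fin (k+1))
          - LinearMap.proj (⟨n-1, by omega⟩ : Fin (k+1))
          - LinearMap.proj (⟨n+1, by omega⟩ : Fin (k+1))) ?_ ha
      · simp only [LinearMap.sub_apply, LinearMap.smul_apply, LinearMap.proj_apply,
          smul_eq_mul] at this
        linarith
      · rintro x (rfl | ⟨i, rfl⟩) <;>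
          simp only [LinearMap.sub_apply, LinearMap.smul_apply, LinearMap.proj_apply,
            smul_eq_mul, hq, hv, Fin.val_mk]
        · rw [if_neg (by omega), if_neg (by omega), if_neg (by omega)]; norm_num
        · rw [if_pos (by omega), if_pos (by omega), if_pos (by omega)]
          have hnat : min (n-1+1) ((i:ℕ)+1) + min (n+1+1) ((i:ℕ)+1)
              ≤ 2 * min (n+1) ((i:ℕ)+1) := by omega
          have hc := (Nat.cast_le (α := ℝ)).mpr hnat
          push_cast at hc
          push_cast
          linarith
  -- polyhedron ⊆ cone(q,v)
  have key2 : ∀ a : Fin (k+1) → ℝ,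
      0 ≤ a ⟨k, by omega⟩ →
      a ⟨1, by omega⟩ ≤ 2 * a ⟨0, by omega⟩ →
      a ⟨k - 2, by omega⟩ ≤ a ⟨k - 1, by omega⟩ →
      (∀ (i : ℕ) (h1 : 0 < i) (h2 : i + 2 ≤ k),
        a ⟨i - 1, by omega⟩ + a ⟨i + 1, by omega⟩ ≤ 2 * a ⟨i, by omega⟩) →
      a ∈ cone ({q} ∪ Set.range v) := by
    intro a ha1 ha2 ha3 ha4
    obtain ⟨A, hA⟩ : ∃ A : ℕ → ℝ, ∀ n, A n = a ⟨min n k, by omega⟩ := ⟨_, fun _ => rfl⟩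
    have hAeq : ∀ (n : ℕ) (h : n ≤ k), A n = a ⟨n, by omega⟩ := by
      intro n h
      rw [hA]
      exact congrArg a (Fin.eq_of_val_eq (by simp [min_eq_left h]))
    obtain ⟨D, hD⟩ : ∃ D : ℕ → ℝ,
        ∀ n, D n = if n < k then A n - (if n = 0 then 0 else A (n-1)) else 0 := ⟨_, fun _ => rfl⟩
    obtain ⟨t, ht⟩ : ∃ t : ℕ → ℝ, ∀ n, t n = D n - D (n+1) := ⟨_, fun _ => rfl⟩
    have hDlt : ∀ n, n < k → D n = A n - (if n = 0 then 0 else A (n-1)) := by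
      intro n h; rw [hD, if_pos h]
    have hDge : ∀ n, k ≤ n → D n = 0 := by
      intro n h; rw [hD, if_neg (by omega)]
    have haext : ∀ (n n' : ℕ) (hn : n < k+1) (hn' : n' < k+1), n = n' →
        a ⟨n, hn⟩ = a ⟨n', hn'⟩ := fun n n' hn hn' h => congrArg a (Fin.eq_of_val_eq h)
    have htnn : ∀ n, n < k → 0 ≤ t n := by
      intro n hn
      rw [ht]
      by_cases h0 : n = 0
      · subst h0
        rw [hDlt 0 hn, hDlt 1 (by omega)]
        norm_num
        rw [hAeq 0 (by omega), hAeq 1 (by omega)]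
        linarith [ha2]
      · by_cases hk1 : n+1 < k
        · rw [hDlt n hn, hDlt (n+1) hk1, if_neg h0, if_neg (by omega)]
          simp only [Nat.add_sub_cancel]
          rw [hAeq (n-1) (by omega), hAeq n (by omega), hAeq (n+1) (by omega)]
          have := ha4 n (by omega) (by omega)
          linarith
        · rw [hDlt n hn, hDge (n+1) (by omega), if_neg h0]
          rw [hAeq n (by omega), hAeq (n-1) (by omega)]
          rw [haext n (k-1) (by omega) (by omega) (by omega),
            haext (n-1) (k-2) (by omega) (by omega) (by omega)]
          linarith [ha3]
    have htail : ∀ m, m ≤ k → (∑ i : Fin k, if m ≤ (i:ℕ) then t (i:ℕ) else 0) = D m := by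
      intro m hm
      rw [Fin.sum_univ_eq_sum_range (fun n => if m ≤ n then t n else 0) k]
      have hsub : Finset.Ico m k ⊆ Finset.range k := by
        intro x hx
        simp only [Finset.mem_Ico] at hx
        simp only [Finset.mem_range]
        omega
      rw [← Finset.sum_subset hsub (fun x hx hnx => ?_)]
      · rw [Finset.sum_congr rfl (fun x hx => if_pos (Finset.mem_Ico.mp hx).1)]
        simp only [ht]
        rw [Finset.sum_Ico_eq_sub _ hm, Finset.sum_range_sub' D k, Finset.sum_range_sub' D m,
          hDge k le_rfl]
        ring
      · rw [if_neg]
        simp only [Finset.mem_Ico, Finset.mem_range] at hx hnx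
        omega
    have hmain : ∀ m, m < k → (∑ i : Fin k, t (i:ℕ) * ((min (m+1) ((i:ℕ)+1) : ℕ) : ℝ)) = A m := by
      intro m
      induction m with
      | zero =>
        intro h0
        have hstep : ∀ i : Fin k, t (i:ℕ) * ((min (0+1) ((i:ℕ)+1) : ℕ) : ℝ)
            = (if 0 ≤ (i:ℕ) then t (i:ℕ) else 0) := by
          intro i
          rw [if_pos (Nat.zero_le _), show min (0+1) ((i:ℕ)+1) = 1 from by omega]
          norm_num
        rw [Finset.sum_congr rfl (fun i _ => hstep i), htail 0 (by omega), hDlt 0 h0]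
        norm_num
      | succ m ih =>
        intro hm
        have hsplit : ∀ i : Fin k, t (i:ℕ) * ((min (m+1+1) ((i:ℕ)+1) : ℕ) : ℝ)
            = t (i:ℕ) * ((min (m+1) ((i:ℕ)+1) : ℕ) : ℝ) + (if m+1 ≤ (i:ℕ) then t (i:ℕ) else 0) := by
          intro i
          by_cases hmi : m+1 ≤ (i:ℕ)
          · rw [if_pos hmi, show min (m+1+1) ((i:ℕ)+1) = m+2 from by omega,
              show min (m+1) ((i:ℕ)+1) = m+1 from by omega]
            push_cast; ring
          · rw [if_neg hmi, show min (m+1+1) ((i:ℕ)+1) = (i:ℕ)+1 from by omega,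
              show min (m+1) ((i:ℕ)+1) = (i:ℕ)+1 from by omega]
            ring
        rw [Finset.sum_congr rfl (fun i _ => hsplit i), Finset.sum_add_distrib,
          ih (by omega), htail (m+1) (by omega), hDlt (m+1) hm, if_neg (by omega)]
        simp only [Nat.add_sub_cancel]
        ring
    have hrep : a = a ⟨k, by omega⟩ • q + ∑ i : Fin k, t (i:ℕ) • v i := by
      funext j
      have hj := j.isLt
      simp only [Pi.add_apply, Pi.smul_apply, Finset.sum_apply, smul_eq_mul, hq]
      rcases lt_or_ge (j:ℕ) k with hjk | hjk
      · rw [if_neg (by omega)]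
        have hterm : ∀ i : Fin k, t (i:ℕ) * v i j
            = t (i:ℕ) * ((min ((j:ℕ)+1) ((i:ℕ)+1) : ℕ) : ℝ) :=
          fun i => by rw [hv i j, if_pos hjk]
        rw [Finset.sum_congr rfl (fun i _ => hterm i), hmain (j:ℕ) hjk, hAeq (j:ℕ) (by omega)]
        rw [show (⟨(j:ℕ), by omega⟩ : Fin (k+1)) = j from Fin.eq_of_val_eq rfl]
        ring
      · have hjk' : (j:ℕ) = k := by omega
        rw [if_pos hjk']
        rw [Finset.sum_eq_zero (fun i (_ : i ∈ Finset.univ) => by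
          rw [hv i j, if_neg (show ¬ (j:ℕ) < k by omega), mul_zero])]
        rw [show j = (⟨k, by omega⟩ : Fin (k+1)) from Fin.eq_of_val_eq hjk']
        ring
    rw [hrep]
    exact add_mem (smul_mem ha1 (subset_cone (Or.inl rfl)))
      (comb_mem _ _ (fun i => htnn _ i.isLt) (fun i _ => subset_cone (Or.inr ⟨i, rfl⟩)))
  constructor
  · refine Set.Subset.antisymm (fun a ha => ?_) key3
    obtain ⟨h1, h2, h3, h4⟩ := key1' a ha
    exact key2 a h1 h2 h3 h4
  · ext a
    constructor
    · exact key1 a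
    · rintro ⟨h1, h2, h3, h4⟩
      exact key2 a h1 h2 h3 h4
end

section
/- Let k ≥ 1. In ℝ^{k+1} let q = e_{k+1}, let v_i = (1,2,…,i−1,i,i,…,i,0) for i = 1,…,k (first i−1 coordinates 1,2,…,i−1, coordinates i through k equal to i, last coordinate 0), and let w_i = v_i + q. Then cone(q, v₁, …, v_k) is the union of the k+1 cones σ₀ = cone(q, w₁, …, w_k) and σ_i = cone(v₁, …, v_i, w_i, w_{i+1}, …, w_k) for i = 1,…,k. -/
lemma mem_cone_of_fintype {m : ℕ} {ι : Type*} [Fintype ι] {S : Set (Fin m → ℝ)}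
    (c : ι → ℝ) (g : ι → (Fin m → ℝ)) (hc : ∀ i, 0 ≤ c i) (hg : ∀ i, g i ∈ S)
    {x : Fin m → ℝ} (hx : x = ∑ i, c i • g i) : x ∈ cone S := by
  classical
  let e := Fintype.equivFin ι
  refine ⟨Fintype.card ι, c ∘ e.symm, g ∘ e.symm, fun i => hc _, fun i => hg _, ?_⟩
  rw [hx, ← Equiv.sum_comp e.symm (fun i => c i • g i)]
  rfl

lemma self_mem_cone {m : ℕ} {S : Set (Fin m → ℝ)} {s : Fin m → ℝ} (hs : s ∈ S) :
    s ∈ cone S := by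
  refine mem_cone_of_fintype (ι := Fin 1) (fun _ => 1) (fun _ => s)
    (fun _ => zero_le_one) (fun _ => hs) ?_
  simp

lemma cone_add_mem {m : ℕ} {S : Set (Fin m → ℝ)} {x y : Fin m → ℝ}
    (hx : x ∈ cone S) (hy : y ∈ cone S) : x + y ∈ cone S := by
  obtain ⟨n₁, c₁, g₁, hc₁, hg₁, hx⟩ := hx
  obtain ⟨n₂, c₂, g₂, hc₂, hg₂, hy⟩ := hy
  refine mem_cone_of_fintype (ι := Fin n₁ ⊕ Fin n₂) (Sum.elim c₁ c₂) (Sum.elim g₁ g₂)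
    ?_ ?_ ?_
  · rintro (i | i)
    · simpa using hc₁ i
    · simpa using hc₂ i
  · rintro (i | i)
    · simpa using hg₁ i
    · simpa using hg₂ i
  · rw [Fintype.sum_sum_type, hx, hy]
    simp

lemma cone_smul_mem {m : ℕ} {S : Set (Fin m → ℝ)} {r : ℝ} (hr : 0 ≤ r)
    {x : Fin m → ℝ} (hx : x ∈ cone S) : r • x ∈ cone S := by
  obtain ⟨n, c, g, hc, hg, hx⟩ := hx
  refine ⟨n, fun i => r * c i, g, fun i => mul_nonneg hr (hc i), hg, ?_⟩
  rw [hx, Finset.smul_sum]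
  simp [mul_smul]

lemma cone_subset_cone {m : ℕ} {S T : Set (Fin m → ℝ)} (h : ∀ s ∈ S, s ∈ cone T) :
    cone S ⊆ cone T := by
  rintro x ⟨n, c, g, hc, hg, hx⟩
  rw [hx]
  exact Finset.sum_induction _ (· ∈ cone T) (fun a b ha hb => cone_add_mem ha hb)
    (mem_cone_of_fintype (ι := Fin 0) (fun i => 0) (fun i => 0)
      (fun i => le_refl _) (fun i => i.elim0) (by simp))
    (fun i _ => cone_smul_mem (hc i) (h _ (hg i)))

lemma exists_rep {m k : ℕ} {q : Fin m → ℝ} {v : Fin k → Fin m → ℝ} {x : Fin m → ℝ}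
    (hx : x ∈ cone ({q} ∪ Set.range v)) :
    ∃ (a : ℝ) (b : Fin k → ℝ), 0 ≤ a ∧ (∀ j, 0 ≤ b j) ∧
      x = a • q + ∑ j, b j • v j := by
  classical
  obtain ⟨n, c, g, hc, hg, hx⟩ := hx
  have : ∀ i, ∃ o : Option (Fin k), g i = o.elim q v := by
    intro i
    rcases hg i with h | ⟨j, hj⟩
    · exact ⟨none, h⟩
    · exact ⟨some j, hj.symm⟩
  choose h hh using this
  refine ⟨∑ i ∈ Finset.univ.filter (fun i => h i = none), c i,
    fun j => ∑ i ∈ Finset.univ.filter (fun i => h i = some j), c i,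
    Finset.sum_nonneg fun i _ => hc i,
    fun j => Finset.sum_nonneg fun i _ => hc i, ?_⟩
  have key : ∀ o : Option (Fin k),
      ∑ i ∈ Finset.univ.filter (fun i => h i = o), c i • g i
        = (∑ i ∈ Finset.univ.filter (fun i => h i = o), c i) • o.elim q v := by
    intro o
    rw [Finset.sum_smul]
    refine Finset.sum_congr rfl fun i hi => ?_
    rw [Finset.mem_filter] at hi
    rw [hh i, hi.2]
  calc x = ∑ o : Option (Fin k), ∑ i ∈ Finset.univ.filter (fun i => h i = o), c i • g i := by
        rw [Finset.sum_fiberwise, hx]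
    _ = ∑ o : Option (Fin k),
          (∑ i ∈ Finset.univ.filter (fun i => h i = o), c i) • o.elim q v := by
        exact Finset.sum_congr rfl fun o _ => key o
    _ = _ := by rw [Fintype.sum_option]; rfl

/-- the movable cone `cone(q, v₁, …, v_k)` is the union of the `k+1`
GIT chambers `σ₀ = cone(q, w₁, …, w_k)` and
`σ_i = cone(v₁, …, v_i, w_i, …, w_k)`, `i = 1, …, k`, where `w_i = v_i + q`. -/
theorem stmt5 (k : ℕ) (hk : 1 ≤ k)
    (q : Fin (k + 1) → ℝ) (hq : q = fun j : Fin (k + 1) => if (j : ℕ) = k then (1 : ℝ) else 0)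
    (v : Fin k → Fin (k + 1) → ℝ)
    (hv : ∀ i j, v i j =
      if (j : ℕ) < k then ((min ((j : ℕ) + 1) ((i : ℕ) + 1) : ℕ) : ℝ) else 0)
    (w : Fin k → Fin (k + 1) → ℝ) (hw : ∀ i, w i = v i + q) :
    cone ({q} ∪ Set.range v) =
      cone ({q} ∪ Set.range w) ∪
        ⋃ i : Fin k, cone ((v '' {j | j ≤ i}) ∪ (w '' {j | i ≤ j})) := by
  classical
  have hq_mem : q ∈ cone ({q} ∪ Set.range v) := self_mem_cone (Or.inl rfl)
  have hv_mem : ∀ j, v j ∈ cone ({q} ∪ Set.range v) :=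
    fun j => self_mem_cone (Or.inr ⟨j, rfl⟩)
  have hw_mem : ∀ j, w j ∈ cone ({q} ∪ Set.range v) := by
    intro j; rw [hw j]; exact cone_add_mem (hv_mem j) hq_mem
  ext x
  constructor
  · intro hx
    obtain ⟨a, b, ha, hb, hrep⟩ := exists_rep hx
    by_cases hcase : ∑ j, b j ≤ a
    · -- chamber σ₀
      left
      refine mem_cone_of_fintype (ι := Option (Fin k))
        (fun o => o.elim (a - ∑ j, b j) b) (fun o => o.elim q w) ?_ ?_ ?_
      · rintro (_ | j)
        · exact sub_nonneg.2 hcase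
        · exact hb j
      · rintro (_ | j)
        · exact Or.inl rfl
        · exact Or.inr ⟨j, rfl⟩
      · rw [Fintype.sum_option]
        simp only [Option.elim]
        have : ∀ j, b j • w j = b j • v j + b j • q := by
          intro j; rw [hw j, smul_add]
        rw [hrep]
        calc a • q + ∑ j, b j • v j
            = (a - ∑ j, b j) • q + (∑ j, b j • v j + (∑ j, b j) • q) := by
              rw [sub_smul]; abel
          _ = (a - ∑ j, b j) • q + ∑ j, b j • w j := by
              rw [Finset.sum_smul, ← Finset.sum_add_distrib]
              exact congrArg _ (Finset.sum_congr rfl fun j _ => (this j).symm)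
    · -- chamber σᵢ
      right
      push_neg at hcase
      set St : ℕ → ℝ := fun n => ∑ j ∈ Finset.univ.filter (fun j : Fin k => n ≤ (j : ℕ)), b j
        with hSt
      have hSt0 : St 0 = ∑ j, b j := by
        simp [hSt]
      have hStk : ∀ n, k ≤ n → St n = 0 := by
        intro n hn
        apply Finset.sum_eq_zero
        intro j hj
        rw [Finset.mem_filter] at hj
        exact absurd (lt_of_lt_of_le j.isLt hn) (not_lt.2 hj.2)
      have hex : ∃ n, St n ≤ a := ⟨k, by rw [hStk k le_rfl]; exact ha⟩
      set m₀ := Nat.find hex with hm₀def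
      have hm₀ : St m₀ ≤ a := Nat.find_spec hex
      have hm₀pos : 0 < m₀ := by
        rcases Nat.eq_zero_or_pos m₀ with h | h
        · exfalso; rw [h] at hm₀; rw [hSt0] at hm₀; exact absurd hm₀ (not_le.2 hcase)
        · exact h
      set mm := m₀ - 1 with hmm
      have hmm1 : mm + 1 = m₀ := Nat.succ_pred_eq_of_pos hm₀pos
      have hlt : a < St mm := by
        have := Nat.find_min hex (show mm < m₀ by omega)
        exact not_le.1 this
      have hmk : mm < k := by
        by_contra h
        push_neg at h
        rw [hStk mm h] at hlt
        linarith
      set i : Fin k := ⟨mm, hmk⟩ with hidef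
      have hi' : (i : ℕ) = mm := rfl
      -- split St mm
      have hsplit : St mm = b i + St (mm + 1) := by
        have h1 : Finset.univ.filter (fun j : Fin k => mm ≤ (j : ℕ))
            = insert i (Finset.univ.filter (fun j : Fin k => mm + 1 ≤ (j : ℕ))) := by
          ext j
          simp only [Finset.mem_insert, Finset.mem_filter, Finset.mem_univ, true_and]
          constructor
          · intro hj
            rcases eq_or_lt_of_le hj with h | h
            · left; exact Fin.ext h.symm
            · right; omega
          · rintro (rfl | hj)
            · exact le_rfl
            · omega
        show (∑ j ∈ Finset.univ.filter (fun j : Fin k => mm ≤ (j : ℕ)), b j)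
            = b i + ∑ j ∈ Finset.univ.filter (fun j : Fin k => mm + 1 ≤ (j : ℕ)), b j
        rw [h1, Finset.sum_insert (by simp [hi'])]
      set s := a - St (mm + 1) with hsdef
      set t := b i - s with htdef
      have hs0 : 0 ≤ s := by rw [hsdef, hmm1]; exact sub_nonneg.2 hm₀
      have ht0 : 0 ≤ t := by
        rw [htdef, hsdef]
        have : a < b i + St (mm + 1) := hsplit ▸ hlt
        linarith
      refine Set.mem_iUnion.2 ⟨i, ?_⟩
      refine mem_cone_of_fintype (ι := Fin k ⊕ Fin k)
        (Sum.elim (fun j => if j ≤ i then (if j = i then t else b j) else 0)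
          (fun j => if i ≤ j then (if j = i then s else b j) else 0))
        (Sum.elim (fun j => if j ≤ i then v j else v i)
          (fun j => if i ≤ j then w j else w i)) ?_ ?_ ?_
      · rintro (j | j) <;> simp only [Sum.elim_inl, Sum.elim_inr] <;> split_ifs <;>
          first | exact ht0 | exact hs0 | exact hb j | exact le_rfl
      · rintro (j | j) <;> simp only [Sum.elim_inl, Sum.elim_inr] <;> split_ifs with h
        · exact Or.inl ⟨j, Set.mem_setOf.mpr h, rfl⟩
        · exact Or.inl ⟨i, Set.mem_setOf.mpr le_rfl, rfl⟩
        · exact Or.inr ⟨j, Set.mem_setOf.mpr h, rfl⟩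
        · exact Or.inr ⟨i, Set.mem_setOf.mpr le_rfl, rfl⟩
      · rw [Fintype.sum_sum_type]
        have e1 : ∀ j : Fin k,
            (Sum.elim (fun j => if j ≤ i then (if j = i then t else b j) else 0)
              (fun j => if i ≤ j then (if j = i then s else b j) else 0) (Sum.inl j)) •
            (Sum.elim (fun j => if j ≤ i then v j else v i)
              (fun j => if i ≤ j then w j else w i) (Sum.inl j))
            = (if j ≤ i then (if j = i then t else b j) else 0) • v j := by
          intro j
          simp only [Sum.elim_inl]
          split_ifs <;> simp
        have e2 : ∀ j : Fin k,
            (Sum.elim (fun j => if j ≤ i then (if j = i then t else b j) else 0)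
              (fun j => if i ≤ j then (if j = i then s else b j) else 0) (Sum.inr j)) •
            (Sum.elim (fun j => if j ≤ i then v j else v i)
              (fun j => if i ≤ j then w j else w i) (Sum.inr j))
            = (if i ≤ j then (if j = i then s else b j) else 0) • w j := by
          intro j
          simp only [Sum.elim_inr]
          split_ifs <;> simp
        rw [Finset.sum_congr rfl (fun j _ => e1 j), Finset.sum_congr rfl (fun j _ => e2 j)]
        -- expand w
        have e3 : ∀ j : Fin k,
            (if i ≤ j then (if j = i then s else b j) else 0) • w j
            = (if i ≤ j then (if j = i then s else b j) else 0) • v j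
              + (if i ≤ j then (if j = i then s else b j) else 0) • q := by
          intro j; rw [hw j, smul_add]
        rw [Finset.sum_congr rfl (fun j _ => e3 j), Finset.sum_add_distrib,
          ← Finset.sum_smul]
        have hvsum : (∑ j, (if j ≤ i then (if j = i then t else b j) else 0) • v j)
            + (∑ j, (if i ≤ j then (if j = i then s else b j) else 0) • v j)
            = ∑ j, b j • v j := by
          rw [← Finset.sum_add_distrib]
          refine Finset.sum_congr rfl fun j _ => ?_
          rw [← add_smul]
          congr 1
          rcases lt_trichotomy j i with h | h | h
          · rw [if_pos (le_of_lt h), if_neg (ne_of_lt h), if_neg (not_le.2 h), add_zero]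
          · rw [if_pos (le_of_eq h), if_pos h, if_pos (ge_of_eq h), if_pos h, htdef]
            rw [h]; ring
          · rw [if_neg (not_le.2 h), if_pos (le_of_lt h), if_neg (ne_of_gt h), zero_add]
        have hqsum : (∑ j, if i ≤ j then (if j = i then s else b j) else 0) = a := by
          rw [← Finset.sum_filter]
          have h1 : Finset.univ.filter (fun j : Fin k => i ≤ j)
              = insert i (Finset.univ.filter (fun j : Fin k => mm + 1 ≤ (j : ℕ))) := by
            ext j
            simp only [Finset.mem_insert, Finset.mem_filter, Finset.mem_univ, true_and]
            constructor
            · intro hj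
              rw [Fin.le_def] at hj
              rcases eq_or_lt_of_le hj with h | h
              · left; exact Fin.ext h.symm
              · right; omega
            · rintro (rfl | hj)
              · exact le_rfl
              · rw [Fin.le_def]; omega
          rw [h1, Finset.sum_insert (by simp [hi'])]
          rw [if_pos rfl]
          have h2 : (∑ j ∈ Finset.univ.filter (fun j : Fin k => mm + 1 ≤ (j : ℕ)),
              if j = i then s else b j) = St (mm + 1) := by
            refine Finset.sum_congr rfl fun j hj => ?_
            rw [Finset.mem_filter] at hj
            rw [if_neg]
            intro h
            rw [h] at hj
            omega
          rw [h2, hsdef]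
          ring
        rw [hqsum, hrep]
        rw [show (∑ j, (if j ≤ i then (if j = i then t else b j) else 0) • v j)
              + ((∑ j, (if i ≤ j then (if j = i then s else b j) else 0) • v j) + a • q)
            = ((∑ j, (if j ≤ i then (if j = i then t else b j) else 0) • v j)
              + (∑ j, (if i ≤ j then (if j = i then s else b j) else 0) • v j)) + a • q
          by abel, hvsum]
        abel
  · intro hx
    rcases hx with hx | hx
    · refine cone_subset_cone ?_ hx
      rintro s (rfl | ⟨j, rfl⟩)
      · exact hq_mem
      · exact hw_mem j
    · obtain ⟨i, hx⟩ := Set.mem_iUnion.1 hx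
      refine cone_subset_cone ?_ hx
      rintro s (⟨j, _, rfl⟩ | ⟨j, _, rfl⟩)
      · exact hv_mem j
      · exact hw_mem j
end

section
/- Let n ≥ 3 and ζ ∈ ℂ a primitive n-th root of unity. Let σ_ρ be the ℂ-algebra automorphism of ℂ[x,y,z] determined by x ↦ ζx, y ↦ ζ⁻¹y, z ↦ z, and σ_ε the ℂ-algebra automorphism determined by x ↦ y, y ↦ x, z ↦ −z. Then the subalgebra {f ∈ ℂ[x,y,z] : σ_ρ(f) = f and σ_ε(f) = f} equals the ℂ-subalgebra generated by xⁿ+yⁿ, (xⁿ−yⁿ)z, xy and z². -/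
open MvPolynomial

noncomputable section Stmt6Aux

abbrev R3 : Type := MvPolynomial (Fin 3) ℂ

def sw (d : Fin 3 →₀ ℕ) : Fin 3 →₀ ℕ := Finsupp.equivMapDomain (Equiv.swap 0 1) d

@[simp] lemma sw0 (d : Fin 3 →₀ ℕ) : sw d 0 = d 1 := rfl
@[simp] lemma sw1 (d : Fin 3 →₀ ℕ) : sw d 1 = d 0 := rfl
@[simp] lemma sw2 (d : Fin 3 →₀ ℕ) : sw d 2 = d 2 := rfl
@[simp] lemma sw_sw (d : Fin 3 →₀ ℕ) : sw (sw d) = d := by ext i; fin_cases i <;> simp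
lemma sw_eq_iff {d e : Fin 3 →₀ ℕ} : sw d = e ↔ d = sw e := by
  constructor <;> rintro rfl <;> simp

lemma monomial_expand (d : Fin 3 →₀ ℕ) (r : ℂ) :
    (monomial d r : R3) = C r * X 0 ^ d 0 * X 1 ^ d 1 * X 2 ^ d 2 := by
  rw [monomial_eq, Finsupp.prod_pow, Fin.prod_univ_three]; ring

def Ad (n : ℕ) : Subalgebra ℂ R3 :=
  Algebra.adjoin ℂ ({X 0 ^ n + X 1 ^ n, (X 0 ^ n - X 1 ^ n) * X 2, X 0 * X 1, X 2 ^ 2} :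
    Set R3)

lemma gen1 (n : ℕ) : (X 0 ^ n + X 1 ^ n : R3) ∈ Ad n :=
  Algebra.subset_adjoin (by simp)
lemma gen2 (n : ℕ) : ((X 0 ^ n - X 1 ^ n) * X 2 : R3) ∈ Ad n :=
  Algebra.subset_adjoin (by simp)
lemma gen3 (n : ℕ) : (X 0 * X 1 : R3) ∈ Ad n :=
  Algebra.subset_adjoin (by simp)
lemma gen4 (n : ℕ) : (X 2 ^ 2 : R3) ∈ Ad n :=
  Algebra.subset_adjoin (by simp)

lemma P_mem (n : ℕ) : ∀ k, ((X 0 : R3) ^ n) ^ k + ((X 1 : R3) ^ n) ^ k ∈ Ad n := by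
  intro k
  induction k using Nat.twoStepInduction with
  | zero =>
    have : ((X 0 : R3) ^ n) ^ 0 + ((X 1 : R3) ^ n) ^ 0 = algebraMap ℂ R3 2 := by
      rw [pow_zero, pow_zero, map_ofNat]; norm_num
    rw [this]; exact (Ad n).algebraMap_mem 2
  | one => simpa using gen1 n
  | more k ih1 ih2 =>
    have key : ((X 0 : R3) ^ n) ^ (k+2) + ((X 1 : R3) ^ n) ^ (k+2)
        = (X 0 ^ n + X 1 ^ n) * (((X 0:R3) ^ n) ^ (k+1) + ((X 1:R3) ^ n) ^ (k+1))
          - (X 0 * X 1) ^ n * (((X 0:R3) ^ n) ^ k + ((X 1:R3) ^ n) ^ k) := by ring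
    rw [key]
    exact sub_mem (mul_mem (gen1 n) ih2) (mul_mem (pow_mem (gen3 n) n) ih1)

lemma Q_mem (n : ℕ) : ∀ k, (((X 0 : R3) ^ n) ^ k - ((X 1 : R3) ^ n) ^ k) * X 2 ∈ Ad n := by
  intro k
  induction k using Nat.twoStepInduction with
  | zero => simpa using (Ad n).zero_mem
  | one => simpa using gen2 n
  | more k ih1 ih2 =>
    have key : (((X 0 : R3) ^ n) ^ (k+2) - ((X 1 : R3) ^ n) ^ (k+2)) * X 2
        = (X 0 ^ n + X 1 ^ n) * ((((X 0:R3) ^ n) ^ (k+1) - ((X 1:R3) ^ n) ^ (k+1)) * X 2)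
          - (X 0 * X 1) ^ n * ((((X 0:R3) ^ n) ^ k - ((X 1:R3) ^ n) ^ k) * X 2) := by ring
    rw [key]
    exact sub_mem (mul_mem (gen1 n) ih2) (mul_mem (pow_mem (gen3 n) n) ih1)

lemma pair_mem (n : ℕ) (b c k : ℕ) :
    (X 0 : R3) ^ (b + k * n) * X 1 ^ b * X 2 ^ c
      + (-1) ^ c * ((X 0 : R3) ^ b * X 1 ^ (b + k * n) * X 2 ^ c) ∈ Ad n := by
  rcases Nat.even_or_odd c with ⟨m, hm⟩ | ⟨m, hm⟩
  · subst hm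
    have hs : ((-1 : R3)) ^ (m + m) = 1 := Even.neg_one_pow ⟨m, rfl⟩
    rw [hs]
    have key : (X 0 : R3) ^ (b + k * n) * X 1 ^ b * X 2 ^ (m + m)
        + 1 * ((X 0 : R3) ^ b * X 1 ^ (b + k * n) * X 2 ^ (m + m))
        = (X 0 * X 1) ^ b * (X 2 ^ 2) ^ m * (((X 0:R3) ^ n) ^ k + ((X 1:R3) ^ n) ^ k) := by
      ring
    rw [key]
    exact mul_mem (mul_mem (pow_mem (gen3 n) b) (pow_mem (gen4 n) m)) (P_mem n k)
  · subst hm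
    have hs : ((-1 : R3)) ^ (2 * m + 1) = -1 := Odd.neg_one_pow ⟨m, rfl⟩
    rw [hs]
    have key : (X 0 : R3) ^ (b + k * n) * X 1 ^ b * X 2 ^ (2 * m + 1)
        + (-1) * ((X 0 : R3) ^ b * X 1 ^ (b + k * n) * X 2 ^ (2 * m + 1))
        = (X 0 * X 1) ^ b * (X 2 ^ 2) ^ m
          * ((((X 0:R3) ^ n) ^ k - ((X 1:R3) ^ n) ^ k) * X 2) := by
      ring
    rw [key]
    exact mul_mem (mul_mem (pow_mem (gen3 n) b) (pow_mem (gen4 n) m)) (Q_mem n k)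

lemma diag_mem (n a m : ℕ) : (X 0 : R3) ^ a * X 1 ^ a * X 2 ^ (m + m) ∈ Ad n := by
  have key : (X 0 : R3) ^ a * X 1 ^ a * X 2 ^ (m + m) = (X 0 * X 1) ^ a * (X 2 ^ 2) ^ m := by
    ring
  rw [key]
  exact mul_mem (pow_mem (gen3 n) a) (pow_mem (gen4 n) m)

lemma sigr_monomial (ζ : ℂ) (d : Fin 3 →₀ ℕ) (r : ℂ) :
    aeval ![(C ζ * X 0 : R3), C ζ⁻¹ * X 1, X 2] (monomial d r)
      = monomial d (ζ ^ d 0 * ζ⁻¹ ^ d 1 * r) := by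
  rw [aeval_monomial, Finsupp.prod_pow, Fin.prod_univ_three, monomial_expand]
  simp only [Matrix.cons_val_zero, Matrix.cons_val_one, Matrix.head_cons,
    Matrix.cons_val_two, Matrix.tail_cons, mul_pow, map_mul, map_pow]
  show C r * _ = _
  ring

lemma sige_monomial (d : Fin 3 →₀ ℕ) (r : ℂ) :
    aeval ![(X 1 : R3), X 0, -X 2] (monomial d r)
      = monomial (sw d) ((-1) ^ d 2 * r) := by
  rw [aeval_monomial, Finsupp.prod_pow, Fin.prod_univ_three, monomial_expand]
  simp only [Matrix.cons_val_zero, Matrix.cons_val_one, Matrix.head_cons,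
    Matrix.cons_val_two, Matrix.tail_cons, sw0, sw1, sw2, map_mul, map_pow, map_neg, map_one]
  show C r * _ = _
  ring

lemma coeff_sigr (ζ : ℂ) (f : R3) (d : Fin 3 →₀ ℕ) :
    coeff d (aeval ![(C ζ * X 0 : R3), C ζ⁻¹ * X 1, X 2] f)
      = ζ ^ d 0 * ζ⁻¹ ^ d 1 * coeff d f := by
  conv_lhs => rw [f.as_sum, map_sum]
  simp only [sigr_monomial]
  rw [MvPolynomial.coeff_sum]
  simp only [coeff_monomial]
  rw [Finset.sum_ite_eq' f.support d (fun e => ζ ^ e 0 * ζ⁻¹ ^ e 1 * coeff e f)]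
  by_cases h : d ∈ f.support
  · simp [h]
  · simp [h, MvPolynomial.notMem_support_iff.mp h]

lemma coeff_sige (f : R3) (d : Fin 3 →₀ ℕ) :
    coeff d (aeval ![(X 1 : R3), X 0, -X 2] f)
      = (-1) ^ d 2 * coeff (sw d) f := by
  conv_lhs => rw [f.as_sum, map_sum]
  simp only [sige_monomial]
  rw [MvPolynomial.coeff_sum]
  simp only [coeff_monomial, sw_eq_iff]
  rw [Finset.sum_ite_eq' f.support (sw d) (fun e => (-1) ^ e 2 * coeff e f)]
  by_cases h : sw d ∈ f.support
  · simp [h]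
  · simp [h, MvPolynomial.notMem_support_iff.mp h]

lemma C_mem (n : ℕ) (r : ℂ) : (C r : R3) ∈ Ad n :=
  (MvPolynomial.algebraMap_eq ℂ (Fin 3)) ▸ (Ad n).algebraMap_mem r

lemma neg_one_sq_pow (c : ℕ) : ((-1 : ℂ) ^ c) * ((-1 : ℂ) ^ c) = 1 := by
  rw [← pow_add]
  exact Even.neg_one_pow ⟨c, rfl⟩

lemma main_forward (n : ℕ) (hn : 0 < n) :
    ∀ N (f : R3), f.support.card ≤ N →
    (∀ d ∈ f.support, (n : ℤ) ∣ (d 0 : ℤ) - (d 1 : ℤ)) →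
    (∀ d, coeff d f = (-1) ^ d 2 * coeff (sw d) f) →
    f ∈ Ad n := by
  intro N
  induction N with
  | zero =>
    intro f hcard _ _
    have : f = 0 := by
      rw [← support_eq_empty, ← Finset.card_eq_zero]
      omega
    rw [this]; exact zero_mem _
  | succ N ih =>
    intro f hcard h1 h2
    by_cases hf : f = 0
    · rw [hf]; exact zero_mem _
    obtain ⟨d₀, hd₀⟩ := support_nonempty.mpr hf
    obtain ⟨d, hd, hba⟩ : ∃ d ∈ f.support, d 1 ≤ d 0 := by
      rcases le_total (d₀ 1) (d₀ 0) with h | h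
      · exact ⟨d₀, hd₀, h⟩
      · refine ⟨sw d₀, ?_, by simpa using h⟩
        rw [mem_support_iff]
        intro h0
        have h2' := h2 d₀
        rw [h0, mul_zero] at h2'
        exact (mem_support_iff.mp hd₀) h2'
    set r := coeff d f with hr
    have hr0 : r ≠ 0 := mem_support_iff.mp hd
    obtain ⟨k, hk⟩ : ∃ k, d 0 = d 1 + k * n := by
      have hdvd : n ∣ (d 0 - d 1) := by
        have h' : (n : ℤ) ∣ ((d 0 - d 1 : ℕ) : ℤ) := by
          push_cast [hba]; exact h1 d hd
        exact_mod_cast h'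
      obtain ⟨k, hk'⟩ := hdvd
      rw [Nat.mul_comm n k] at hk'
      exact ⟨k, by omega⟩
    by_cases hsd : sw d = d
    -- CASE A : diagonal monomial
    · have hab : d 0 = d 1 := by
        have := DFunLike.congr_fun hsd 0
        simpa using this.symm
      have parity : (-1 : ℂ) ^ d 2 = 1 := by
        have h2' := h2 d
        rw [hsd, ← hr] at h2'
        have h3 : (-1 : ℂ) ^ d 2 * r = 1 * r := by rw [one_mul, ← h2']
        exact mul_right_cancel₀ hr0 h3
      have heven : Even (d 2) := by
        by_contra hodd
        rw [Nat.not_even_iff_odd] at hodd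
        rw [Odd.neg_one_pow hodd] at parity
        norm_num at parity
      obtain ⟨m, hm⟩ := heven
      set g : R3 := monomial d r with hgdef
      have hg_mem : g ∈ Ad n := by
        rw [hgdef, monomial_expand]
        have key : (C r : R3) * X 0 ^ d 0 * X 1 ^ d 1 * X 2 ^ d 2
            = C r * (X 0 ^ d 0 * X 1 ^ d 0 * X 2 ^ (m + m)) := by
          rw [hab, hm]; ring
        rw [key]
        exact mul_mem (C_mem n r) (diag_mem n (d 0) m)
      have hcg : ∀ e, coeff e g = (-1) ^ e 2 * coeff (sw e) g := by
        intro e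
        by_cases he : d = e
        · subst he
          rw [hgdef, hsd, coeff_monomial, if_pos rfl, parity, one_mul]
        · have he2 : ¬ d = sw e := fun h => he (by rw [← hsd, h, sw_sw])
          rw [hgdef, coeff_monomial, coeff_monomial, if_neg he, if_neg he2, mul_zero]
      have hcgd : coeff d g = r := by rw [hgdef, coeff_monomial, if_pos rfl]
      have hcge : ∀ e, e ≠ d → coeff e g = 0 := by
        intro e he
        rw [hgdef, coeff_monomial, if_neg (fun h => he h.symm)]
      have hsub : (f - g).support ⊆ f.support.erase d := by
        intro e he'
        rw [mem_support_iff, coeff_sub] at he'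
        by_cases hed : e = d
        · exact absurd (by rw [hed, hcgd, ← hr, sub_self]) he'
        · refine Finset.mem_erase.mpr ⟨hed, mem_support_iff.mpr ?_⟩
          intro h0
          exact he' (by rw [h0, hcge e hed, sub_self])
      have hfg : f - g ∈ Ad n := by
        refine ih (f - g) ?_ ?_ ?_
        · calc (f - g).support.card ≤ (f.support.erase d).card := Finset.card_le_card hsub
            _ = f.support.card - 1 := Finset.card_erase_of_mem hd
            _ ≤ N := by omega
        · intro e he
          exact h1 e (Finset.mem_of_mem_erase (hsub he))
        · intro e
          rw [coeff_sub, coeff_sub, h2 e, hcg e, mul_sub]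
      have : f = (f - g) + g := (sub_add_cancel f g).symm
      rw [this]
      exact add_mem hfg hg_mem
    -- CASE B : off-diagonal pair
    · set s := coeff (sw d) f with hsdef
      have hs : r = (-1) ^ d 2 * s := h2 d
      have hsr : s = (-1) ^ d 2 * r := by
        rw [hs, ← mul_assoc, neg_one_sq_pow, one_mul]
      set g : R3 := monomial d r + monomial (sw d) s with hgdef
      have hg_mem : g ∈ Ad n := by
        have hCs : (C ((-1) ^ d 2 * r) : R3) = (-1) ^ d 2 * C r := by simp
        have hgeq : g = C r * ((X 0 : R3) ^ (d 1 + k * n) * X 1 ^ d 1 * X 2 ^ d 2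
            + (-1) ^ d 2 * (X 0 ^ d 1 * X 1 ^ (d 1 + k * n) * X 2 ^ d 2)) := by
          rw [hgdef, monomial_expand, monomial_expand]
          simp only [sw0, sw1, sw2]
          rw [hsr, hCs, ← hk]
          ring
        rw [hgeq]
        exact mul_mem (C_mem n r) (pair_mem n (d 1) (d 2) k)
      have hined : ¬ d = sw d := fun h => hsd h.symm
      have hcg : ∀ e, coeff e g = (-1) ^ e 2 * coeff (sw e) g := by
        intro e
        rw [hgdef, coeff_add, coeff_add, coeff_monomial, coeff_monomial,
          coeff_monomial, coeff_monomial]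
        by_cases h1e : d = e
        · subst h1e
          rw [if_pos rfl, if_neg hsd, if_neg hined, if_pos rfl, add_zero, zero_add, ← hs]
        · by_cases h2e : sw d = e
          · subst h2e
            simp only [sw_sw, sw2]
            rw [if_neg hined]
            simp only [if_true]
            rw [if_neg hsd, zero_add, add_zero, ← hsr]
          · have h3e : ¬ d = sw e := fun h => h2e (sw_eq_iff.mpr h)
            have h4e : ¬ sw d = sw e := fun h => h1e (by
              have := congrArg sw h; rwa [sw_sw, sw_sw] at this)
            rw [if_neg h1e, if_neg h2e, if_neg h3e, if_neg h4e, add_zero, mul_zero]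
      have hcgd : coeff d g = r := by
        rw [hgdef, coeff_add, coeff_monomial, coeff_monomial, if_pos rfl, if_neg hsd,
          add_zero]
      have hcge : ∀ e, e ≠ d → coeff e g = coeff e f ∨ coeff e g = 0 := by
        intro e he
        rw [hgdef, coeff_add, coeff_monomial, coeff_monomial,
          if_neg (fun h => he h.symm), zero_add]
        by_cases h2e : sw d = e
        · left; rw [if_pos h2e, hsdef, h2e]
        · right; rw [if_neg h2e]
      have hsub : (f - g).support ⊆ f.support.erase d := by
        intro e he'
        rw [mem_support_iff, coeff_sub] at he'
        by_cases hed : e = d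
        · exact absurd (by rw [hed, hcgd, ← hr, sub_self]) he'
        · refine Finset.mem_erase.mpr ⟨hed, mem_support_iff.mpr ?_⟩
          intro h0
          rcases hcge e hed with h | h
          · exact he' (by rw [h, sub_self])
          · exact he' (by rw [h0, h, sub_self])
      have hfg : f - g ∈ Ad n := by
        refine ih (f - g) ?_ ?_ ?_
        · calc (f - g).support.card ≤ (f.support.erase d).card := Finset.card_le_card hsub
            _ = f.support.card - 1 := Finset.card_erase_of_mem hd
            _ ≤ N := by omega
        · intro e he
          exact h1 e (Finset.mem_of_mem_erase (hsub he))
        · intro e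
          rw [coeff_sub, coeff_sub, h2 e, hcg e, mul_sub]
      have : f = (f - g) + g := (sub_add_cancel f g).symm
      rw [this]
      exact add_mem hfg hg_mem

end Stmt6Aux

/-- For `n ≥ 3` and a primitive `n`-th root of unity `ζ`, the subalgebra of
`ℂ[x,y,z]` of polynomials fixed both by the substitution `x ↦ ζx, y ↦ ζ⁻¹y, z ↦ z`
and by the substitution `x ↦ y, y ↦ x, z ↦ −z` is generated by
`xⁿ+yⁿ`, `(xⁿ−yⁿ)z`, `xy` and `z²`. -/
theorem stmt6 (n : ℕ) (hn : 3 ≤ n) (ζ : ℂ) (hζ : IsPrimitiveRoot ζ n) :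
    ∀ f : MvPolynomial (Fin 3) ℂ,
      (aeval ![(C ζ * X 0 : MvPolynomial (Fin 3) ℂ), C ζ⁻¹ * X 1, X 2] f = f ∧
       aeval ![(X 1 : MvPolynomial (Fin 3) ℂ), X 0, -X 2] f = f) ↔
        f ∈ Algebra.adjoin ℂ
          ({X 0 ^ n + X 1 ^ n, (X 0 ^ n - X 1 ^ n) * X 2, X 0 * X 1, X 2 ^ 2} :
            Set (MvPolynomial (Fin 3) ℂ)) := by
  intro f
  have hζ0 : ζ ≠ 0 := hζ.ne_zero (by omega)
  constructor
  · rintro ⟨hρ, hε⟩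
    have h2 : ∀ d, coeff d f = (-1) ^ d 2 * coeff (sw d) f := by
      intro d
      conv_lhs => rw [← hε]
      exact coeff_sige f d
    have h1 : ∀ d ∈ f.support, (n : ℤ) ∣ (d 0 : ℤ) - (d 1 : ℤ) := by
      intro d hd
      have hc := coeff_sigr ζ f d
      rw [hρ] at hc
      have hcoeff : coeff d f ≠ 0 := mem_support_iff.mp hd
      have hz : ζ ^ d 0 * ζ⁻¹ ^ d 1 = 1 := by
        have h3 : ζ ^ d 0 * ζ⁻¹ ^ d 1 * coeff d f = 1 * coeff d f := by
          rw [one_mul, ← hc]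
        exact mul_right_cancel₀ hcoeff h3
      have hpow : ζ ^ d 0 = ζ ^ d 1 := by
        rw [inv_pow] at hz
        field_simp at hz
        exact hz
      have hzp : ζ ^ ((d 0 : ℤ) - (d 1 : ℤ)) = 1 := by
        rw [zpow_sub₀ hζ0, zpow_natCast, zpow_natCast, hpow,
          div_self (pow_ne_zero _ hζ0)]
      exact (hζ.zpow_eq_one_iff_dvd _).mp hzp
    exact main_forward n (by omega) f.support.card f le_rfl h1 h2
  · intro hmem
    have hmem' : f ∈ Ad n := hmem
    constructor
    · have hle : Ad n ≤ AlgHom.equalizer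
          (aeval ![(C ζ * X 0 : R3), C ζ⁻¹ * X 1, X 2]) (AlgHom.id ℂ R3) := by
        rw [Ad, Algebra.adjoin_le_iff]
        rintro x hx
        simp only [Set.mem_insert_iff, Set.mem_singleton_iff] at hx
        rw [SetLike.mem_coe, AlgHom.mem_equalizer]
        rcases hx with rfl | rfl | rfl | rfl
        · rw [AlgHom.coe_id, id_eq, map_add, map_pow, map_pow, aeval_X, aeval_X]
          simp only [Matrix.cons_val_zero, Matrix.cons_val_one, Matrix.head_cons]
          rw [mul_pow, mul_pow, ← C_pow, ← C_pow, hζ.pow_eq_one, inv_pow, hζ.pow_eq_one,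
            inv_one, C_1, one_mul, one_mul]
        · rw [AlgHom.coe_id, id_eq, map_mul, map_sub, map_pow, map_pow, aeval_X, aeval_X,
            aeval_X]
          simp only [Matrix.cons_val_zero, Matrix.cons_val_one, Matrix.head_cons,
            Matrix.cons_val_two, Matrix.tail_cons]
          rw [mul_pow, mul_pow, ← C_pow, ← C_pow, hζ.pow_eq_one, inv_pow, hζ.pow_eq_one,
            inv_one, C_1, one_mul, one_mul]
        · rw [AlgHom.coe_id, id_eq, map_mul, aeval_X, aeval_X]
          simp only [Matrix.cons_val_zero, Matrix.cons_val_one, Matrix.head_cons]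
          rw [mul_mul_mul_comm, ← C_mul, mul_inv_cancel₀ hζ0, C_1, one_mul]
        · rw [AlgHom.coe_id, id_eq, map_pow, aeval_X]
          simp only [Matrix.cons_val_two, Matrix.tail_cons, Matrix.head_cons]
      exact (AlgHom.mem_equalizer _ _ f).mp (hle hmem')
    · have hle : Ad n ≤ AlgHom.equalizer
          (aeval ![(X 1 : R3), X 0, -X 2]) (AlgHom.id ℂ R3) := by
        rw [Ad, Algebra.adjoin_le_iff]
        rintro x hx
        simp only [Set.mem_insert_iff, Set.mem_singleton_iff] at hx
        rw [SetLike.mem_coe, AlgHom.mem_equalizer]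
        rcases hx with rfl | rfl | rfl | rfl <;>
        · simp only [AlgHom.coe_id, id_eq, map_add, map_sub, map_mul, map_pow, aeval_X,
            Matrix.cons_val_zero, Matrix.cons_val_one, Matrix.head_cons,
            Matrix.cons_val_two, Matrix.tail_cons]
          ring
      exact (AlgHom.mem_equalizer _ _ f).mp (hle hmem')
end

section
/- Let G be a finite subgroup of GL(2,ℂ), and let H = (ℂ*·G) ∩ SL(2,ℂ), the subgroup of all determinant-one matrices that are scalar multiples of elements of G. For m ≥ 1 let μ_m denote the subgroup of GL(2,ℂ) of scalar matrices c·I with c^m = 1. Then there exist positive integers w and d, a normal subgroup K of H, and a group isomorphism φ : μ_{wd}/μ_d ≅ H/K such that G = {s·h : s ∈ μ_{wd}, h ∈ H, φ(s·μ_d) = h·K}. -/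
open Matrix

/-- A finite subgroup of `ℂˣ` is exactly the group of `N`-th roots of unity,
where `N` is its cardinality. -/
lemma stmt8_aux_subgroup_eq_roots (S : Subgroup ℂˣ) [Finite S] :
    S = rootsOfUnity (Nat.card S) ℂ := by
  have hpos : 0 < Nat.card S := Nat.card_pos
  haveI : NeZero (Nat.card S) := ⟨hpos.ne'⟩
  have hle : S ≤ rootsOfUnity (Nat.card S) ℂ := by
    intro x hx
    rw [mem_rootsOfUnity]
    have h1 : (⟨x, hx⟩ : S) ^ Nat.card S = 1 := pow_card_eq_one'
    have h2 := congrArg Subtype.val h1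
    simpa only [SubmonoidClass.coe_pow, OneMemClass.coe_one] using h2
  refine Subgroup.eq_of_le_of_card_ge hle ?_
  rw [Complex.card_rootsOfUnity]

/-- classification of finite subgroups of `GL(2,ℂ)`:
`G = (μ_{wd} | μ_d ; H | K)` for some `w, d ≥ 1`, a normal subgroup `K` of
`H = (ℂ*·G) ∩ SL(2,ℂ)`, and an isomorphism `φ : μ_{wd}/μ_d ≅ H/K`. -/
theorem stmt8 (G H : Subgroup (GL (Fin 2) ℂ)) [Finite G]
    (hH : ∀ h : GL (Fin 2) ℂ, h ∈ H ↔
      (Matrix.det (h : Matrix (Fin 2) (Fin 2) ℂ) = 1 ∧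
        ∃ c : ℂ, c ≠ 0 ∧ ∃ g ∈ G,
          (h : Matrix (Fin 2) (Fin 2) ℂ) = c • (g : Matrix (Fin 2) (Fin 2) ℂ)))
    (μ : ℕ → Subgroup (GL (Fin 2) ℂ))
    (hμ : ∀ (m : ℕ) (x : GL (Fin 2) ℂ), x ∈ μ m ↔
      ∃ c : ℂ, c ^ m = 1 ∧
        (x : Matrix (Fin 2) (Fin 2) ℂ) = c • (1 : Matrix (Fin 2) (Fin 2) ℂ)) :
    ∃ (w d : ℕ), 0 < w ∧ 0 < d ∧
      ∃ K : Subgroup (GL (Fin 2) ℂ), K ≤ H ∧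
        ∃ (hKn : (K.subgroupOf H).Normal)
          (hμn : ((μ d).subgroupOf (μ (w * d))).Normal),
          letI := hKn
          letI := hμn
          ∃ φ : (↥(μ (w * d)) ⧸ (μ d).subgroupOf (μ (w * d))) ≃* (↥H ⧸ K.subgroupOf H),
            ∀ x : GL (Fin 2) ℂ, x ∈ G ↔
              ∃ (s : GL (Fin 2) ℂ) (hs : s ∈ μ (w * d)) (h : GL (Fin 2) ℂ) (hh : h ∈ H),
                x = s * h ∧
                  φ (QuotientGroup.mk ⟨s, hs⟩) = QuotientGroup.mk ⟨h, hh⟩ := by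
  classical
  set ι : ℂˣ →* GL (Fin 2) ℂ :=
    Units.map (algebraMap ℂ (Matrix (Fin 2) (Fin 2) ℂ)).toMonoidHom with hιdef
  have hιcoe : ∀ c : ℂˣ, ((ι c : GL (Fin 2) ℂ) : Matrix (Fin 2) (Fin 2) ℂ)
      = (c : ℂ) • (1 : Matrix (Fin 2) (Fin 2) ℂ) := fun c => by
    simp [hιdef, Algebra.algebraMap_eq_smul_one]
  -- scalars are central
  have hcomm : ∀ (c : ℂˣ) (x : GL (Fin 2) ℂ), ι c * x = x * ι c := by
    intro c x
    apply Units.ext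
    rw [Units.val_mul, Units.val_mul, hιcoe, smul_mul_assoc, mul_smul_comm, one_mul, mul_one]
  have hsmul : ∀ (c : ℂˣ) (x : GL (Fin 2) ℂ),
      ((ι c * x : GL (Fin 2) ℂ) : Matrix (Fin 2) (Fin 2) ℂ)
        = (c : ℂ) • (x : Matrix (Fin 2) (Fin 2) ℂ) := by
    intro c x
    rw [Units.val_mul, hιcoe, smul_mul_assoc, one_mul]
  have hconj : ∀ (u : ℂˣ) (a b : GL (Fin 2) ℂ),
      (ι u * a) * b * (ι u * a)⁻¹ = a * b * a⁻¹ := by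
    intro u a b
    rw [_root_.mul_inv_rev]
    calc ι u * a * b * (a⁻¹ * (ι u)⁻¹)
        = ι u * (a * b * a⁻¹) * (ι u)⁻¹ := by group
      _ = a * b * a⁻¹ * ι u * (ι u)⁻¹ := by rw [hcomm]
      _ = a * b * a⁻¹ := by rw [mul_inv_cancel_right]
  have h1H : (1 : GL (Fin 2) ℂ) ∈ H := by
    rw [hH]
    refine ⟨by simp, 1, one_ne_zero, 1, G.one_mem, by simp⟩
  set n : ℕ := Nat.card G with hn
  have hnpos : 0 < n := Nat.card_pos
  have hdet : ∀ g ∈ G, (Matrix.det (g : Matrix (Fin 2) (Fin 2) ℂ)) ^ n = 1 := by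
    intro g hg
    have h1 : (⟨g, hg⟩ : G) ^ n = 1 := pow_card_eq_one'
    have h2 : g ^ n = 1 := by
      have := congrArg Subtype.val h1
      simpa only [SubmonoidClass.coe_pow, OneMemClass.coe_one] using this
    have := congrArg (fun u : GL (Fin 2) ℂ => Matrix.det (u : Matrix (Fin 2) (Fin 2) ℂ)) h2
    simpa [Units.val_pow_eq_pow_val, Matrix.det_pow] using this
  -- the subgroup of ℂˣ of scalars appearing in the decomposition of G
  set B : Subgroup ℂˣ :=
    { carrier := {c : ℂˣ | ∃ h ∈ H, ι c * h ∈ G}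
      mul_mem' := by
        rintro a b ⟨h, hh, hg⟩ ⟨h', hh', hg'⟩
        refine ⟨h * h', H.mul_mem hh hh', ?_⟩
        have heq : ι (a * b) * (h * h') = (ι a * h) * (ι b * h') := by
          rw [_root_.map_mul, mul_assoc, mul_assoc, ← mul_assoc h, ← hcomm b h, mul_assoc]
        rw [heq]
        exact G.mul_mem hg hg'
      one_mem' := ⟨1, h1H, by simpa using G.one_mem⟩
      inv_mem' := by
        rintro a ⟨h, hh, hg⟩
        refine ⟨h⁻¹, H.inv_mem hh, ?_⟩
        have heq : ι a⁻¹ * h⁻¹ = (ι a * h)⁻¹ := by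
          rw [_root_.mul_inv_rev, ← _root_.map_inv, hcomm]
        rw [heq]
        exact G.inv_mem hg } with hBdef
  have hBmem : ∀ c : ℂˣ, c ∈ B ↔ ∃ h ∈ H, ι c * h ∈ G := fun c => Iff.rfl
  -- B is finite
  have hBle : B ≤ rootsOfUnity (2 * n) ℂ := by
    intro c hc
    obtain ⟨h, hh, hg⟩ := (hBmem c).mp hc
    rw [mem_rootsOfUnity']
    have hdh : Matrix.det (h : Matrix (Fin 2) (Fin 2) ℂ) = 1 := ((hH h).mp hh).1
    have hd2 : Matrix.det ((ι c * h : GL (Fin 2) ℂ) : Matrix (Fin 2) (Fin 2) ℂ)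
        = (c : ℂ) ^ 2 := by
      rw [hsmul, Matrix.det_smul, hdh]
      simp
    rw [pow_mul, ← hd2]
    exact hdet _ hg
  haveI hBfin : Finite B := by
    haveI : NeZero (2 * n) := ⟨by positivity⟩
    haveI : Finite (rootsOfUnity (2 * n) ℂ) := inferInstance
    exact Finite.of_injective
      (fun b : B => (⟨(b : ℂˣ), hBle b.2⟩ : rootsOfUnity (2 * n) ℂ))
      (fun a b hab => Subtype.ext (Subtype.mk_eq_mk.mp hab))
  set D : Subgroup ℂˣ := G.comap ι with hDdef
  have hDle : D ≤ B := by
    intro c hc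
    exact ⟨1, h1H, by rw [mul_one]; exact hc⟩
  haveI hDfin : Finite D := by
    exact Finite.of_injective (fun b : D => (⟨(b : ℂˣ), hDle b.2⟩ : B))
      (fun a b hab => Subtype.ext (Subtype.mk_eq_mk.mp hab))
  set N : ℕ := Nat.card B with hNdef
  set d : ℕ := Nat.card D with hddef
  have hNpos : 0 < N := Nat.card_pos
  have hdpos : 0 < d := Nat.card_pos
  have hdvd : d ∣ N := Subgroup.card_dvd_of_le hDle
  have hB : B = rootsOfUnity N ℂ := stmt8_aux_subgroup_eq_roots B
  have hD : D = rootsOfUnity d ℂ := stmt8_aux_subgroup_eq_roots D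
  refine ⟨N / d, d, Nat.pos_of_ne_zero (fun h0 => by
    rw [Nat.div_eq_zero_iff] at h0
    exact absurd (Nat.le_of_dvd hNpos hdvd) (by omega)), hdpos, ?_⟩
  rw [Nat.div_mul_cancel hdvd]
  -- membership characterizations
  have hμN : ∀ x : GL (Fin 2) ℂ, x ∈ μ N ↔ ∃ c : ℂˣ, c ∈ B ∧ x = ι c := by
    intro x
    rw [hμ]
    constructor
    · rintro ⟨c, hcN, hx⟩
      have hc0 : c ≠ 0 := fun h0 => by simp [h0, hNpos.ne'] at hcN
      refine ⟨Units.mk0 c hc0, ?_, Units.ext (by rw [hx, hιcoe]; rfl)⟩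
      rw [hB, mem_rootsOfUnity']
      exact hcN
    · rintro ⟨c, hc, rfl⟩
      rw [hB, mem_rootsOfUnity'] at hc
      exact ⟨c, hc, hιcoe c⟩
  have hμd : ∀ x : GL (Fin 2) ℂ, x ∈ μ d ↔ ∃ c : ℂˣ, c ∈ D ∧ x = ι c := by
    intro x
    rw [hμ]
    constructor
    · rintro ⟨c, hcd, hx⟩
      have hc0 : c ≠ 0 := fun h0 => by simp [h0, hdpos.ne'] at hcd
      refine ⟨Units.mk0 c hc0, ?_, Units.ext (by rw [hx, hιcoe]; rfl)⟩
      rw [hD, mem_rootsOfUnity']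
      exact hcd
    · rintro ⟨c, hc, rfl⟩
      rw [hD, mem_rootsOfUnity'] at hc
      exact ⟨c, hc, hιcoe c⟩
  set K : Subgroup (GL (Fin 2) ℂ) := G ⊓ H with hKdef
  -- K is normal in H
  have hKn : (K.subgroupOf H).Normal := by
    constructor
    intro k hk h
    rw [Subgroup.mem_subgroupOf] at hk ⊢
    rw [hKdef, Subgroup.mem_inf] at hk ⊢
    obtain ⟨hkG, -⟩ := hk
    refine ⟨?_, (h * k * h⁻¹ : ↥H).2⟩
    obtain ⟨-, c, hc0, g, hg, hcoe⟩ := (hH ↑h).mp h.2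
    have hdecomp : (h : GL (Fin 2) ℂ) = ι (Units.mk0 c hc0) * g :=
      Units.ext (by rw [hsmul]; exact hcoe)
    push_cast
    rw [hdecomp, hconj]
    exact G.mul_mem (G.mul_mem hg hkG) (G.inv_mem hg)
  haveI := hKn
  -- μ d is normal in μ N
  have hμnor : ((μ d).subgroupOf (μ N)).Normal := by
    constructor
    intro k hk h
    have hcommμ : (h : GL (Fin 2) ℂ) * ↑k = ↑k * ↑h := by
      obtain ⟨c, -, hc⟩ := (hμN ↑h).mp h.2
      rw [hc, hcomm]
    have heq : h * k * h⁻¹ = k := by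
      apply Subtype.ext
      push_cast
      rw [hcommμ, mul_inv_cancel_right]
    rw [heq]
    exact hk
  haveI := hμnor
  refine ⟨K, inf_le_right, hKn, hμnor, ?_⟩
  -- construct the isomorphism
  have hBex : ∀ s : ↥(μ N), ∃ (h : GL (Fin 2) ℂ), ∃ _ : h ∈ H, (↑s) * h ∈ G := by
    intro s
    obtain ⟨c, hcB, hc⟩ := (hμN ↑s).mp s.2
    obtain ⟨h, hh, hg⟩ := (hBmem c).mp hcB
    exact ⟨h, hh, by rw [hc]; exact hg⟩
  set f : ↥(μ N) → (↥H ⧸ K.subgroupOf H) := fun s =>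
    QuotientGroup.mk ⟨(hBex s).choose, (hBex s).choose_spec.choose⟩ with hfdef
  have key : ∀ (s : ↥(μ N)) (h : GL (Fin 2) ℂ) (hh : h ∈ H), (↑s) * h ∈ G →
      f s = QuotientGroup.mk ⟨h, hh⟩ := by
    intro s h hh hg
    have hg0 := (hBex s).choose_spec.choose_spec
    rw [hfdef, QuotientGroup.eq, Subgroup.mem_subgroupOf, hKdef, Subgroup.mem_inf]
    constructor
    · have heq : (↑s * (hBex s).choose)⁻¹ * (↑s * h)
          = ((hBex s).choose)⁻¹ * h := by group
      push_cast
      rw [← heq]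
      exact G.mul_mem (G.inv_mem hg0) hg
    · exact H.mul_mem (H.inv_mem (hBex s).choose_spec.choose) hh
  set Φ : ↥(μ N) →* (↥H ⧸ K.subgroupOf H) := MonoidHom.mk' f (by
    intro s t
    have hgs := (hBex s).choose_spec.choose_spec
    have hgt := (hBex t).choose_spec.choose_spec
    obtain ⟨c, -, hc⟩ := (hμN ↑t).mp t.2
    have hct : (↑t : GL (Fin 2) ℂ) * (hBex s).choose = (hBex s).choose * ↑t := by
      rw [hc, hcomm]
    have hprod : (↑(s * t) : GL (Fin 2) ℂ) * ((hBex s).choose * (hBex t).choose)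
        = (↑s * (hBex s).choose) * (↑t * (hBex t).choose) := by
      push_cast
      rw [mul_assoc, ← mul_assoc (↑t : GL (Fin 2) ℂ), hct, mul_assoc, ← mul_assoc]
    rw [key (s * t) ((hBex s).choose * (hBex t).choose)
        (H.mul_mem (hBex s).choose_spec.choose (hBex t).choose_spec.choose)
        (by rw [hprod]; exact G.mul_mem hgs hgt),
      key s (hBex s).choose (hBex s).choose_spec.choose hgs,
      key t (hBex t).choose (hBex t).choose_spec.choose hgt,
      ← QuotientGroup.mk_mul]
    exact congrArg QuotientGroup.mk (Subtype.ext rfl)) with hΦdef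
  have hΦf : ∀ s, Φ s = f s := fun s => rfl
  have hsurj : Function.Surjective Φ := by
    intro y
    refine QuotientGroup.induction_on y ?_
    intro h
    obtain ⟨-, c, hc0, g, hg, hcoe⟩ := (hH ↑h).mp h.2
    have hdecomp : (h : GL (Fin 2) ℂ) = ι (Units.mk0 c hc0) * g :=
      Units.ext (by rw [hsmul]; exact hcoe)
    have hginv : ι (Units.mk0 c hc0)⁻¹ * ↑h = g := by
      rw [hdecomp, ← mul_assoc, ← _root_.map_mul, inv_mul_cancel, _root_.map_one, one_mul]
    have hcB : (Units.mk0 c hc0)⁻¹ ∈ B := ⟨↑h, h.2, by rw [hginv]; exact hg⟩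
    have hsμ : ι (Units.mk0 c hc0)⁻¹ ∈ μ N := (hμN _).mpr ⟨_, hcB, rfl⟩
    exact ⟨⟨ι (Units.mk0 c hc0)⁻¹, hsμ⟩,
      by rw [hΦf, key ⟨ι (Units.mk0 c hc0)⁻¹, hsμ⟩ ↑h h.2 (by rw [hginv]; exact hg)]⟩
  have hker : Φ.ker = (μ d).subgroupOf (μ N) := by
    ext s
    rw [MonoidHom.mem_ker, Subgroup.mem_subgroupOf]
    constructor
    · intro h1
      rw [hΦf, hfdef, QuotientGroup.eq_one_iff, Subgroup.mem_subgroupOf, hKdef,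
        Subgroup.mem_inf] at h1
      obtain ⟨hKG, -⟩ := h1
      have hg0 := (hBex s).choose_spec.choose_spec
      have hsG : (↑s : GL (Fin 2) ℂ) ∈ G := by
        have heq : (↑s : GL (Fin 2) ℂ)
            = (↑s * (hBex s).choose) * ((hBex s).choose)⁻¹ := by group
        rw [heq]
        exact G.mul_mem hg0 (G.inv_mem hKG)
      obtain ⟨c, -, hc⟩ := (hμN ↑s).mp s.2
      refine (hμd ↑s).mpr ⟨c, ?_, hc⟩
      rw [hDdef, Subgroup.mem_comap]
      rw [hc] at hsG
      exact hsG
    · intro h1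
      obtain ⟨c, hcD, hc⟩ := (hμd ↑s).mp h1
      rw [hDdef, Subgroup.mem_comap] at hcD
      have hsG : (↑s : GL (Fin 2) ℂ) * 1 ∈ G := by
        rw [mul_one, hc]; exact hcD
      rw [hΦf, key s 1 h1H hsG]
      rfl
  refine ⟨(QuotientGroup.quotientMulEquivOfEq hker.symm).trans
    (QuotientGroup.quotientKerEquivOfSurjective Φ hsurj), ?_⟩
  have hφapp : ∀ (s : GL (Fin 2) ℂ) (hs : s ∈ μ N),
      ((QuotientGroup.quotientMulEquivOfEq hker.symm).trans
        (QuotientGroup.quotientKerEquivOfSurjective Φ hsurj))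
        (QuotientGroup.mk ⟨s, hs⟩) = Φ ⟨s, hs⟩ := by
    intro s hs
    rw [MulEquiv.trans_apply, QuotientGroup.quotientMulEquivOfEq_mk]
    rfl
  intro x
  constructor
  · intro hx
    have hdetx : IsUnit (Matrix.det (x : Matrix (Fin 2) (Fin 2) ℂ)) :=
      (Matrix.isUnit_iff_isUnit_det _).mp x.isUnit
    have hdx0 : Matrix.det (x : Matrix (Fin 2) (Fin 2) ℂ) ≠ 0 := hdetx.ne_zero
    obtain ⟨c, hc⟩ := IsAlgClosed.exists_pow_nat_eq
      (Matrix.det (x : Matrix (Fin 2) (Fin 2) ℂ))⁻¹ (n := 2) (by norm_num)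
    have hc0 : c ≠ 0 := by
      intro h0
      rw [h0] at hc
      exact (inv_ne_zero hdx0) (by simpa using hc.symm)
    set cu : ℂˣ := Units.mk0 c hc0 with hcu
    have hhH : ι cu * x ∈ H := by
      rw [hH]
      constructor
      · rw [hsmul, Matrix.det_smul]
        simp only [Fintype.card_fin]
        rw [hcu]
        simp only [Units.val_mk0]
        rw [hc]
        exact inv_mul_cancel₀ hdx0
      · exact ⟨c, hc0, x, hx, by rw [hsmul]; rfl⟩
    have hginv : ι cu⁻¹ * (ι cu * x) = x := by
      rw [← mul_assoc, ← _root_.map_mul, inv_mul_cancel, _root_.map_one, one_mul]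
    have hcB : cu⁻¹ ∈ B := ⟨ι cu * x, hhH, by rw [hginv]; exact hx⟩
    have hsμ : ι cu⁻¹ ∈ μ N := (hμN _).mpr ⟨_, hcB, rfl⟩
    refine ⟨ι cu⁻¹, hsμ, ι cu * x, hhH, hginv.symm, ?_⟩
    rw [hφapp, hΦf, key ⟨ι cu⁻¹, hsμ⟩ (ι cu * x) hhH (by rw [hginv]; exact hx)]
  · rintro ⟨s, hs, h, hh, rfl, hφeq⟩
    rw [hφapp, hΦf, hfdef, QuotientGroup.eq, Subgroup.mem_subgroupOf, hKdef,
      Subgroup.mem_inf] at hφeq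
    obtain ⟨hKG, -⟩ := hφeq
    have hg0 := (hBex ⟨s, hs⟩).choose_spec.choose_spec
    have hcoe2 : (((⟨(hBex ⟨s, hs⟩).choose, (hBex ⟨s, hs⟩).choose_spec.choose⟩ : ↥H)⁻¹
        * ⟨h, hh⟩ : ↥H) : GL (Fin 2) ℂ)
        = ((hBex ⟨s, hs⟩).choose)⁻¹ * h := by push_cast; rfl
    rw [hcoe2] at hKG
    have heq : s * h = (s * (hBex ⟨s, hs⟩).choose)
        * (((hBex ⟨s, hs⟩).choose)⁻¹ * h) := by group
    rw [heq]
    exact G.mul_mem hg0 hKG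
end

section
/- Let n = 2k+1 ≥ 3 be odd, and work in the polynomial ring R = ℂ[Z₁,Z₂,Z₃,Z₄,T_ε,T₁,…,T_k]. Let I_k be the principal ideal generated by Z₁² − Z₂²T_ε − 4Z₃ⁿ·∏_{i=1}^{k} T_i^{n−2i}, and let J_k = I_k + (Z₁·T₁T₂²⋯T_k^k, Z₂Z₄T_ε·T₁T₂²⋯T_k^k, Z₃·T₁T₂⋯T_k, Z₄²T_ε). Then the radical of J_k equals the intersection of the following 2k+2 ideals: (Z₄, T_i, Z₁²−Z₂²T_ε) for i = 1,…,k; (Z₁, T_ε, T_i) for i = 1,…,k; (Z₁, Z₃, T_ε); and (Z₁, Z₂, Z₃, Z₄). -/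
open MvPolynomial

noncomputable section


noncomputable section

namespace Stmt18Aux

variable {σ : Type*}

lemma eval_aeval' (x : σ → ℂ) (g : σ → MvPolynomial σ ℂ) (f : MvPolynomial σ ℂ) :
    eval x (aeval g f) = eval (fun j => eval x (g j)) f := by
  rw [aeval_def, ← coe_eval₂Hom]
  rw [show (eval₂Hom (algebraMap ℂ (MvPolynomial σ ℂ)) g : MvPolynomial σ ℂ → MvPolynomial σ ℂ)
    = eval₂ C g from rfl]
  rw [eval₂_comp_left (eval x) C g f]
  congr 1
  ext r
  simp

lemma sub_aeval_mem (s : Set σ) [DecidablePred (· ∈ s)] (f : MvPolynomial σ ℂ) :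
    f - aeval (fun j => if j ∈ s then 0 else X j) f
      ∈ Ideal.span (X '' s : Set (MvPolynomial σ ℂ)) := by
  induction f using MvPolynomial.induction_on with
  | C a => simp
  | add p q hp hq =>
      have := Ideal.add_mem _ hp hq
      rw [map_add]
      convert this using 1
      ring
  | mul_X p j hp =>
      rw [map_mul, aeval_X]
      by_cases hj : j ∈ s
      · rw [if_pos hj]
        have : p * X j - aeval (fun j => if j ∈ s then 0 else X j) p * 0 = p * X j := by ring
        rw [this]
        exact Ideal.mul_mem_left _ _ (Ideal.subset_span ⟨j, hj, rfl⟩)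
      · rw [if_neg hj]
        have : p * X j - aeval (fun j => if j ∈ s then 0 else X j) p * X j
            = (p - aeval (fun j => if j ∈ s then 0 else X j) p) * X j := by ring
        rw [this]
        exact Ideal.mul_mem_right _ _ hp

lemma mem_span_X_of_vanishing (s : Set σ) [DecidablePred (· ∈ s)]
    (f : MvPolynomial σ ℂ) (hf : ∀ x : σ → ℂ, (∀ j ∈ s, x j = 0) → eval x f = 0) :
    f ∈ Ideal.span (X '' s : Set (MvPolynomial σ ℂ)) := by
  have h0 : (aeval (fun j => if j ∈ s then 0 else X j) f : MvPolynomial σ ℂ) = 0 := by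
    apply MvPolynomial.funext
    intro x
    rw [map_zero, eval_aeval']
    apply hf
    intro j hj
    simp [hj]
  have := sub_aeval_mem s f
  rwa [h0, sub_zero] at this

lemma mem_zeroLocus_span (s : Set (MvPolynomial σ ℂ)) (x : σ → ℂ)
    (h : ∀ p ∈ s, eval x p = 0) : x ∈ zeroLocus ℂ (Ideal.span s) := by
  intro p hp
  have hle : Ideal.span s ≤ RingHom.ker (eval x) := Ideal.span_le.2 fun q hq => h q hq
  exact hle hp

lemma mem_of_gen_dvd {s : Set (MvPolynomial σ ℂ)} {d m : MvPolynomial σ ℂ}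
    (hd : d ∈ s) (h : d ∣ m) : m ∈ Ideal.span s := by
  obtain ⟨c, rfl⟩ := h
  exact Ideal.mul_mem_right _ _ (Ideal.subset_span hd)


/-- the equiv separating out the variable `Z₁ = X (Sum.inl 0)`. -/
def eqv (k : ℕ) : (Fin 5 ⊕ Fin k) ≃ Option (Fin 4 ⊕ Fin k) where
  toFun := fun j => match j with
    | .inl i => Fin.cases none (fun m => some (.inl m)) i
    | .inr j => some (.inr j)
  invFun := fun o => match o with
    | none => .inl 0
    | some (.inl m) => .inl m.succ
    | some (.inr j) => .inr j
  left_inv := by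
    rintro (i | j)
    · induction i using Fin.cases <;> rfl
    · rfl
  right_inv := by rintro (_ | (m | j)) <;> rfl

abbrev Amap (k : ℕ) : MvPolynomial (Fin 5 ⊕ Fin k) ℂ ≃ₐ[ℂ] Polynomial (MvPolynomial (Fin 4 ⊕ Fin k) ℂ) :=
  (renameEquiv ℂ (eqv k)).trans (optionEquivLeft ℂ (Fin 4 ⊕ Fin k))

lemma eval_Amap (k : ℕ) (x : (Fin 5 ⊕ Fin k) → ℂ) (f : MvPolynomial (Fin 5 ⊕ Fin k) ℂ) :
    eval x f = Polynomial.eval₂ (eval (fun j => x ((eqv k).symm (some j))))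
      (x (Sum.inl 0)) (Amap k f) := by
  have : (Polynomial.eval₂RingHom (eval (fun j => x ((eqv k).symm (some j))))
      (x (Sum.inl 0))).comp (Amap k).toAlgHom.toRingHom
      = eval x := by
    apply MvPolynomial.ringHom_ext
    · intro r
      simp [Amap, renameEquiv_apply, optionEquivLeft_C]
    · intro j
      rcases h : eqv k j with _ | m
      · have hj : j = Sum.inl 0 := by
          have := congrArg (eqv k).symm h
          rwa [Equiv.symm_apply_apply] at this
        simp [Amap, renameEquiv_apply, rename_X, h, optionEquivLeft_X_none, hj,
          show eqv k (Sum.inl 0) = none from rfl]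
      · have hj : j = (eqv k).symm (some m) := by
          have := congrArg (eqv k).symm h
          rwa [Equiv.symm_apply_apply] at this
        simp [Amap, renameEquiv_apply, rename_X, h, optionEquivLeft_X_some, ← hj]
  rw [← this]
  rfl

lemma quad_mem (k : ℕ) (g : MvPolynomial (Fin 5 ⊕ Fin k) ℂ)
    (hg : ∀ x : (Fin 5 ⊕ Fin k) → ℂ,
      x (Sum.inl 0) ^ 2 = x (Sum.inl 1) ^ 2 * x (Sum.inl 4) → eval x g = 0) :
    g ∈ Ideal.span {(X (Sum.inl 0) ^ 2 - X (Sum.inl 1) ^ 2 * X (Sum.inl 4) :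
      MvPolynomial (Fin 5 ⊕ Fin k) ℂ)} := by
  classical
  set c : MvPolynomial (Fin 4 ⊕ Fin k) ℂ := X (Sum.inl 0) ^ 2 * X (Sum.inl 3) with hc
  set p : Polynomial (MvPolynomial (Fin 4 ⊕ Fin k) ℂ) := Polynomial.X ^ 2 - Polynomial.C c with hp
  have hpm : p.Monic := Polynomial.monic_X_pow_sub_C c two_ne_zero
  set q : MvPolynomial (Fin 5 ⊕ Fin k) ℂ :=
    X (Sum.inl 0) ^ 2 - X (Sum.inl 1) ^ 2 * X (Sum.inl 4) with hq
  have hAq : Amap k q = p := by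
    have h0 : Amap k (X (Sum.inl 0)) = Polynomial.X := by
      simp [Amap, renameEquiv_apply, rename_X, show eqv k (Sum.inl 0) = none from rfl,
        optionEquivLeft_X_none]
    have h1 : Amap k (X (Sum.inl 1)) = Polynomial.C (X (Sum.inl 0)) := by
      simp [Amap, renameEquiv_apply, rename_X,
        show eqv k (Sum.inl 1) = some (Sum.inl 0) from rfl, optionEquivLeft_X_some]
    have h4 : Amap k (X (Sum.inl 4)) = Polynomial.C (X (Sum.inl 3)) := by
      simp [Amap, renameEquiv_apply, rename_X,
        show eqv k (Sum.inl 4) = some (Sum.inl 3) from rfl, optionEquivLeft_X_some]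
    rw [hq, map_sub, map_pow, map_mul, map_pow, h0, h1, h4, hp, hc]
    push_cast [map_mul, map_pow]
    ring
  -- remainder
  have hdeg : (Amap k g %ₘ p).degree ≤ 1 := by
    have h2 := Polynomial.degree_modByMonic_lt (Amap k g) hpm
    rw [hp, Polynomial.degree_X_pow_sub_C (by norm_num) c] at h2
    exact Order.le_of_lt_succ (by exact_mod_cast h2)
  set r := Amap k g %ₘ p with hr
  set a := r.coeff 0 with ha
  set b := r.coeff 1 with hb
  have hrr : r = Polynomial.C b * Polynomial.X + Polynomial.C a :=
    Polynomial.eq_X_add_C_of_degree_le_one hdeg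
  have hsplit : Amap k g = p * (Amap k g /ₘ p) + r := by
    conv_lhs => rw [← Polynomial.modByMonic_add_div (Amap k g) p]
    ring
  -- evaluate
  have key : ∀ (y : (Fin 4 ⊕ Fin k) → ℂ) (t : ℂ), t ^ 2 = eval y c →
      eval y b * t + eval y a = 0 := by
    intro y t ht
    set x : (Fin 5 ⊕ Fin k) → ℂ := fun j => ((eqv k) j).elim t y with hx
    have hxy : (fun j => x ((eqv k).symm (some j))) = y := by
      funext j
      simp [hx, Equiv.apply_symm_apply]
    have hx0 : x (Sum.inl 0) = t := rfl
    have hx1 : x (Sum.inl 1) = y (Sum.inl 0) := rfl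
    have hx4 : x (Sum.inl 4) = y (Sum.inl 3) := rfl
    have hvan : eval x g = 0 := by
      apply hg
      rw [hx0, hx1, hx4, ht, hc]
      simp
    rw [eval_Amap k x g, hsplit, Polynomial.eval₂_add, Polynomial.eval₂_mul] at hvan
    have hpz : Polynomial.eval₂ (eval (fun j => x ((eqv k).symm (some j))))
        (x (Sum.inl 0)) p = 0 := by
      rw [hp]
      simp [hx0, hxy, ht]
    rw [hpz, zero_mul, zero_add, hrr] at hvan
    simpa [hx0, hxy] using hvan
  have habz : ∀ y : (Fin 4 ⊕ Fin k) → ℂ, eval y c ≠ 0 → eval y a = 0 ∧ eval y b = 0 := by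
    intro y hy
    obtain ⟨w, hw⟩ := IsAlgClosed.exists_pow_nat_eq (eval y c) (n := 2) (by norm_num)
    have h1 := key y w hw
    have h2 := key y (-w) (by rw [neg_pow]; simpa using hw)
    have hwne : w ≠ 0 := by
      intro h0
      rw [h0] at hw
      simp at hw
      exact hy hw.symm
    constructor
    · linear_combination (h1 + h2) / 2
    · have hb2 : eval y b * w = 0 := by linear_combination (h1 - h2) / 2
      rcases mul_eq_zero.mp hb2 with h | h
      · exact h
      · exact absurd h hwne
  have hcne : (c : MvPolynomial (Fin 4 ⊕ Fin k) ℂ) ≠ 0 := by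
    intro h
    have := congrArg (eval (fun _ => (1 : ℂ))) h
    simp [hc] at this
  have haz : a = 0 := by
    have : a * c = 0 := by
      apply MvPolynomial.funext
      intro y
      rw [map_mul, map_zero]
      by_cases hy : eval y c = 0
      · rw [hy, mul_zero]
      · rw [(habz y hy).1, zero_mul]
    rcases mul_eq_zero.mp this with h | h
    · exact h
    · exact absurd h hcne
  have hbz : b = 0 := by
    have : b * c = 0 := by
      apply MvPolynomial.funext
      intro y
      rw [map_mul, map_zero]
      by_cases hy : eval y c = 0
      · rw [hy, mul_zero]
      · rw [(habz y hy).2, zero_mul]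
    rcases mul_eq_zero.mp this with h | h
    · exact h
    · exact absurd h hcne
  have hrz : r = 0 := by rw [hrr, haz, hbz]; simp
  have : g = q * (Amap k).symm (Amap k g /ₘ p) := by
    apply (Amap k).injective
    rw [map_mul, AlgEquiv.apply_symm_apply, hAq]
    conv_lhs => rw [hsplit]
    rw [hrz, add_zero]
  rw [this]
  exact Ideal.mul_mem_right _ _ (Ideal.subset_span rfl)

lemma vanish_span_X_le (s : Set σ) [DecidablePred (· ∈ s)] :
    vanishingIdeal ℂ (zeroLocus ℂ (Ideal.span (X '' s : Set (MvPolynomial σ ℂ))))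
      ≤ Ideal.span (X '' s) := by
  intro f hf
  apply mem_span_X_of_vanishing
  intro x hx
  apply hf
  apply mem_zeroLocus_span
  rintro p ⟨j, hj, rfl⟩
  simp [hx j hj]

lemma vanish_P_le (k : ℕ) (i : Fin k) :
    vanishingIdeal ℂ (zeroLocus ℂ (Ideal.span
      ({X (Sum.inl 3), X (Sum.inr i),
        X (Sum.inl 0) ^ 2 - X (Sum.inl 1) ^ 2 * X (Sum.inl 4)} :
        Set (MvPolynomial (Fin 5 ⊕ Fin k) ℂ))))
    ≤ Ideal.span ({X (Sum.inl 3), X (Sum.inr i),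
        X (Sum.inl 0) ^ 2 - X (Sum.inl 1) ^ 2 * X (Sum.inl 4)} :
        Set (MvPolynomial (Fin 5 ⊕ Fin k) ℂ)) := by
  classical
  intro f hf
  set s : Set (Fin 5 ⊕ Fin k) := {Sum.inl 3, Sum.inr i} with hs
  set G : (Fin 5 ⊕ Fin k) → MvPolynomial (Fin 5 ⊕ Fin k) ℂ :=
    fun j => if j ∈ s then 0 else X j with hG
  have h1 : f - aeval G f ∈ Ideal.span (X '' s) := sub_aeval_mem s f
  have himg : (X '' s : Set (MvPolynomial (Fin 5 ⊕ Fin k) ℂ)) = {X (Sum.inl 3), X (Sum.inr i)} := by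
    simp [hs, Set.image_insert_eq]
  have hsub : Ideal.span (X '' s : Set (MvPolynomial (Fin 5 ⊕ Fin k) ℂ)) ≤
      Ideal.span ({X (Sum.inl 3), X (Sum.inr i),
        X (Sum.inl 0) ^ 2 - X (Sum.inl 1) ^ 2 * X (Sum.inl 4)} :
        Set (MvPolynomial (Fin 5 ⊕ Fin k) ℂ)) := by
    rw [himg]
    apply Ideal.span_mono
    intro p hp
    rcases hp with rfl | rfl
    · exact Set.mem_insert _ _
    · exact Set.mem_insert_of_mem _ (Set.mem_insert _ _)
  have h2 : aeval G f ∈ Ideal.span ({X (Sum.inl 0) ^ 2 - X (Sum.inl 1) ^ 2 * X (Sum.inl 4)} :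
      Set (MvPolynomial (Fin 5 ⊕ Fin k) ℂ)) := by
    apply quad_mem
    intro x hx
    rw [eval_aeval']
    set x' : (Fin 5 ⊕ Fin k) → ℂ := fun j => if j ∈ s then 0 else x j with hx'
    have hGx : (fun j => eval x (G j)) = x' := by
      funext j
      by_cases hj : j ∈ s <;> simp [hG, hx', hj]
    rw [hGx]
    have hmem : ∀ j : Fin 5, (Sum.inl j : Fin 5 ⊕ Fin k) ∈ s ↔ j = 3 := by
      intro j
      simp [hs]
    apply hf
    apply mem_zeroLocus_span
    intro p hp
    simp only [Set.mem_insert_iff, Set.mem_singleton_iff] at hp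
    rcases hp with rfl | rfl | rfl
    · simp [hx', hs]
    · simp [hx', hs]
    · have e0 : x' (Sum.inl 0) = x (Sum.inl 0) := if_neg (by simp [hmem])
      have e1 : x' (Sum.inl 1) = x (Sum.inl 1) := if_neg (by simp [hmem])
      have e4 : x' (Sum.inl 4) = x (Sum.inl 4) := if_neg (by simp [hmem])
      simp only [map_sub, map_mul, map_pow, eval_X, e0, e1, e4]
      rw [hx]
      ring
  have hfs : f = (f - aeval G f) + aeval G f := by ring
  rw [hfs]
  exact Ideal.add_mem _ (hsub h1) (Ideal.span_mono (by
    intro p hp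
    rcases hp with rfl
    exact Set.mem_insert_of_mem _ (Set.mem_insert_of_mem _ rfl)) h2)

end Stmt18Aux

open Stmt18Aux

/-- for `n = 2k+1 ≥ 3` odd, in `R = ℂ[Z₁,Z₂,Z₃,Z₄,T_ε,T₁,…,T_k]`
(variables `Sum.inl 0,…,Sum.inl 3` are `Z₁,…,Z₄`, `Sum.inl 4` is `T_ε`, and
`Sum.inr i` is `T_{i+1}`), the radical of `J_k` equals the stated intersection
of `2k+2` ideals. -/
theorem stmt18 (k : ℕ) (hk : 1 ≤ k) (n : ℕ) (hn : n = 2 * k + 1)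
    (I J : Ideal (MvPolynomial (Fin 5 ⊕ Fin k) ℂ))
    (hI : I = Ideal.span
      {X (Sum.inl 0) ^ 2 - X (Sum.inl 1) ^ 2 * X (Sum.inl 4)
        - 4 * X (Sum.inl 2) ^ n * ∏ i : Fin k, X (Sum.inr i) ^ (n - 2 * ((i : ℕ) + 1))})
    (hJ : J = I + Ideal.span
      { X (Sum.inl 0) * ∏ i : Fin k, X (Sum.inr i) ^ ((i : ℕ) + 1),
        X (Sum.inl 1) * X (Sum.inl 3) * X (Sum.inl 4)
          * ∏ i : Fin k, X (Sum.inr i) ^ ((i : ℕ) + 1),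
        X (Sum.inl 2) * ∏ i : Fin k, X (Sum.inr i),
        X (Sum.inl 3) ^ 2 * X (Sum.inl 4) }) :
    J.radical =
      (⨅ i : Fin k, Ideal.span
        ({X (Sum.inl 3), X (Sum.inr i),
          X (Sum.inl 0) ^ 2 - X (Sum.inl 1) ^ 2 * X (Sum.inl 4)} :
          Set (MvPolynomial (Fin 5 ⊕ Fin k) ℂ))) ⊓
      (⨅ i : Fin k, Ideal.span
        ({X (Sum.inl 0), X (Sum.inl 4), X (Sum.inr i)} :
          Set (MvPolynomial (Fin 5 ⊕ Fin k) ℂ))) ⊓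
      Ideal.span ({X (Sum.inl 0), X (Sum.inl 2), X (Sum.inl 4)} :
        Set (MvPolynomial (Fin 5 ⊕ Fin k) ℂ)) ⊓
      Ideal.span ({X (Sum.inl 0), X (Sum.inl 1), X (Sum.inl 2), X (Sum.inl 3)} :
        Set (MvPolynomial (Fin 5 ⊕ Fin k) ℂ)) := by
  classical
  rw [← vanishingIdeal_zeroLocus_eq_radical (K := ℂ)]
  -- abbreviations
  set S := MvPolynomial (Fin 5 ⊕ Fin k) ℂ with hS
  -- generators
  set q : S := X (Sum.inl 0) ^ 2 - X (Sum.inl 1) ^ 2 * X (Sum.inl 4) with hq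
  set w : S := 4 * X (Sum.inl 2) ^ n * ∏ i : Fin k, X (Sum.inr i) ^ (n - 2 * ((i : ℕ) + 1))
    with hw
  have hexp : ∀ i : Fin k, n - 2 * ((i : ℕ) + 1) ≠ 0 := by
    intro i
    have := i.isLt
    omega
  have hdvdw : ∀ i : Fin k, X (Sum.inr i) ∣ w := by
    intro i
    refine Dvd.dvd.mul_left ?_ _
    exact dvd_trans (dvd_pow_self _ (hexp i)) (Finset.dvd_prod_of_mem _ (Finset.mem_univ i))
  have hdvdp1 : ∀ i : Fin k, X (Sum.inr i) ∣ ∏ j : Fin k, (X (Sum.inr j) : S) ^ ((j : ℕ) + 1) := by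
    intro i
    exact dvd_trans (dvd_pow_self _ (Nat.succ_ne_zero _))
      (Finset.dvd_prod_of_mem _ (Finset.mem_univ i))
  have hdvdp0 : ∀ i : Fin k, X (Sum.inr i) ∣ ∏ j : Fin k, (X (Sum.inr j) : S) :=
    fun i => Finset.dvd_prod_of_mem _ (Finset.mem_univ i)
  apply le_antisymm
  · -- radical J ≤ intersection
    have hJle : ∀ K : Ideal S, J ≤ K → vanishingIdeal ℂ (zeroLocus ℂ K) ≤ K →
        vanishingIdeal ℂ (zeroLocus ℂ J) ≤ K := fun K h1 h2 =>
      le_trans (vanishingIdeal_anti_mono (zeroLocus_anti_mono h1)) h2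
    have hJgen : ∀ K : Ideal S, (q - w) ∈ K →
        (X (Sum.inl 0) * ∏ i : Fin k, X (Sum.inr i) ^ ((i : ℕ) + 1)) ∈ K →
        (X (Sum.inl 1) * X (Sum.inl 3) * X (Sum.inl 4)
          * ∏ i : Fin k, X (Sum.inr i) ^ ((i : ℕ) + 1)) ∈ K →
        (X (Sum.inl 2) * ∏ i : Fin k, X (Sum.inr i)) ∈ K →
        (X (Sum.inl 3) ^ 2 * X (Sum.inl 4)) ∈ K → J ≤ K := by
      intro K h0 h1 h2 h3 h4
      rw [hJ, hI, Ideal.add_eq_sup]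
      apply sup_le
      · rw [Ideal.span_le]
        rintro p rfl
        exact h0
      · rw [Ideal.span_le]
        rintro p hp
        simp only [Set.mem_insert_iff, Set.mem_singleton_iff] at hp
        rcases hp with rfl | rfl | rfl | rfl
        · exact h1
        · exact h2
        · exact h3
        · exact h4
    refine le_inf (le_inf (le_inf (le_iInf fun i => ?_) (le_iInf fun i => ?_)) ?_) ?_
    · -- P i
      refine hJle _ (hJgen _ ?_ ?_ ?_ ?_ ?_) (vanish_P_le k i)
      · exact Ideal.sub_mem _
          (Ideal.subset_span (by simp))
          (mem_of_gen_dvd (by simp) (hdvdw i))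
      · exact mem_of_gen_dvd (show X (Sum.inr i) ∈ _ by simp) (Dvd.dvd.mul_left (hdvdp1 i) _)
      · exact mem_of_gen_dvd (show (X (Sum.inl 3) : S) ∈ _ by simp)
          ⟨X (Sum.inl 1) * X (Sum.inl 4) * ∏ j : Fin k, X (Sum.inr j) ^ ((j : ℕ) + 1), by ring⟩
      · exact mem_of_gen_dvd (show X (Sum.inr i) ∈ _ by simp) (Dvd.dvd.mul_left (hdvdp0 i) _)
      · exact mem_of_gen_dvd (show (X (Sum.inl 3) : S) ∈ _ by simp)
          ⟨X (Sum.inl 3) * X (Sum.inl 4), by ring⟩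
    · -- Q i
      have hvan : vanishingIdeal ℂ (zeroLocus ℂ (Ideal.span
          ({X (Sum.inl 0), X (Sum.inl 4), X (Sum.inr i)} : Set S)))
          ≤ Ideal.span ({X (Sum.inl 0), X (Sum.inl 4), X (Sum.inr i)} : Set S) := by
        have himg : ((X '' {Sum.inl 0, Sum.inl 4, Sum.inr i} : Set S)) =
            {X (Sum.inl 0), X (Sum.inl 4), X (Sum.inr i)} := by
          simp [Set.image_insert_eq]
        rw [← himg]
        exact vanish_span_X_le _
      refine hJle _ (hJgen _ ?_ ?_ ?_ ?_ ?_) hvan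
      · refine Ideal.sub_mem _ (Ideal.sub_mem _ ?_ ?_) ?_
        · exact mem_of_gen_dvd (show (X (Sum.inl 0) : S) ∈ _ by simp) ⟨X (Sum.inl 0), by ring⟩
        · exact mem_of_gen_dvd (show (X (Sum.inl 4) : S) ∈ _ by simp) ⟨X (Sum.inl 1) ^ 2, by ring⟩
        · exact mem_of_gen_dvd (show X (Sum.inr i) ∈ _ by simp) (hdvdw i)
      · exact mem_of_gen_dvd (show (X (Sum.inl 0) : S) ∈ _ by simp)
          ⟨∏ j : Fin k, X (Sum.inr j) ^ ((j : ℕ) + 1), rfl⟩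
      · exact mem_of_gen_dvd (show (X (Sum.inl 4) : S) ∈ _ by simp)
          ⟨X (Sum.inl 1) * X (Sum.inl 3) * ∏ j : Fin k, X (Sum.inr j) ^ ((j : ℕ) + 1), by ring⟩
      · exact mem_of_gen_dvd (show X (Sum.inr i) ∈ _ by simp) (Dvd.dvd.mul_left (hdvdp0 i) _)
      · exact mem_of_gen_dvd (show (X (Sum.inl 4) : S) ∈ _ by simp) ⟨X (Sum.inl 3) ^ 2, by ring⟩
    · -- Q'
      have hvan : vanishingIdeal ℂ (zeroLocus ℂ (Ideal.span
          ({X (Sum.inl 0), X (Sum.inl 2), X (Sum.inl 4)} : Set S)))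
          ≤ Ideal.span ({X (Sum.inl 0), X (Sum.inl 2), X (Sum.inl 4)} : Set S) := by
        have himg : ((X '' {Sum.inl 0, Sum.inl 2, Sum.inl 4} : Set S)) =
            {X (Sum.inl 0), X (Sum.inl 2), X (Sum.inl 4)} := by
          simp [Set.image_insert_eq]
        rw [← himg]
        exact vanish_span_X_le _
      refine hJle _ (hJgen _ ?_ ?_ ?_ ?_ ?_) hvan
      · refine Ideal.sub_mem _ (Ideal.sub_mem _ ?_ ?_) ?_
        · exact mem_of_gen_dvd (show (X (Sum.inl 0) : S) ∈ _ by simp) ⟨X (Sum.inl 0), by ring⟩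
        · exact mem_of_gen_dvd (show (X (Sum.inl 4) : S) ∈ _ by simp) ⟨X (Sum.inl 1) ^ 2, by ring⟩
        · refine mem_of_gen_dvd (show (X (Sum.inl 2) : S) ∈ _ by simp) ?_
          refine Dvd.dvd.mul_right (Dvd.dvd.mul_left ?_ 4) _
          exact dvd_pow_self _ (by omega)
      · exact mem_of_gen_dvd (show (X (Sum.inl 0) : S) ∈ _ by simp)
          ⟨∏ j : Fin k, X (Sum.inr j) ^ ((j : ℕ) + 1), rfl⟩
      · exact mem_of_gen_dvd (show (X (Sum.inl 4) : S) ∈ _ by simp)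
          ⟨X (Sum.inl 1) * X (Sum.inl 3) * ∏ j : Fin k, X (Sum.inr j) ^ ((j : ℕ) + 1), by ring⟩
      · exact mem_of_gen_dvd (show (X (Sum.inl 2) : S) ∈ _ by simp)
          ⟨∏ j : Fin k, X (Sum.inr j), rfl⟩
      · exact mem_of_gen_dvd (show (X (Sum.inl 4) : S) ∈ _ by simp) ⟨X (Sum.inl 3) ^ 2, by ring⟩
    · -- M
      have hvan : vanishingIdeal ℂ (zeroLocus ℂ (Ideal.span
          ({X (Sum.inl 0), X (Sum.inl 1), X (Sum.inl 2), X (Sum.inl 3)} : Set S)))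
          ≤ Ideal.span ({X (Sum.inl 0), X (Sum.inl 1), X (Sum.inl 2), X (Sum.inl 3)} : Set S) := by
        have himg : ((X '' {Sum.inl 0, Sum.inl 1, Sum.inl 2, Sum.inl 3} : Set S)) =
            {X (Sum.inl 0), X (Sum.inl 1), X (Sum.inl 2), X (Sum.inl 3)} := by
          simp [Set.image_insert_eq]
        rw [← himg]
        exact vanish_span_X_le _
      refine hJle _ (hJgen _ ?_ ?_ ?_ ?_ ?_) hvan
      · refine Ideal.sub_mem _ (Ideal.sub_mem _ ?_ ?_) ?_
        · exact mem_of_gen_dvd (show (X (Sum.inl 0) : S) ∈ _ by simp) ⟨X (Sum.inl 0), by ring⟩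
        · exact mem_of_gen_dvd (show (X (Sum.inl 1) : S) ∈ _ by simp)
            ⟨X (Sum.inl 1) * X (Sum.inl 4), by ring⟩
        · refine mem_of_gen_dvd (show (X (Sum.inl 2) : S) ∈ _ by simp) ?_
          refine Dvd.dvd.mul_right (Dvd.dvd.mul_left ?_ 4) _
          exact dvd_pow_self _ (by omega)
      · exact mem_of_gen_dvd (show (X (Sum.inl 0) : S) ∈ _ by simp)
          ⟨∏ j : Fin k, X (Sum.inr j) ^ ((j : ℕ) + 1), rfl⟩
      · exact mem_of_gen_dvd (show (X (Sum.inl 1) : S) ∈ _ by simp)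
          ⟨X (Sum.inl 3) * X (Sum.inl 4) * ∏ j : Fin k, X (Sum.inr j) ^ ((j : ℕ) + 1), by ring⟩
      · exact mem_of_gen_dvd (show (X (Sum.inl 2) : S) ∈ _ by simp)
          ⟨∏ j : Fin k, X (Sum.inr j), rfl⟩
      · exact mem_of_gen_dvd (show (X (Sum.inl 3) : S) ∈ _ by simp)
          ⟨X (Sum.inl 3) * X (Sum.inl 4), by ring⟩
  · -- intersection ≤ radical J
    intro f hf x hx
    -- evaluations of the generators
    have hmemJ : ∀ p : S, p ∈ ({X (Sum.inl 0) * ∏ i : Fin k, X (Sum.inr i) ^ ((i : ℕ) + 1),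
        X (Sum.inl 1) * X (Sum.inl 3) * X (Sum.inl 4)
          * ∏ i : Fin k, X (Sum.inr i) ^ ((i : ℕ) + 1),
        X (Sum.inl 2) * ∏ i : Fin k, X (Sum.inr i),
        X (Sum.inl 3) ^ 2 * X (Sum.inl 4) } : Set S) → p ∈ J := by
      intro p hp
      rw [hJ, Ideal.add_eq_sup]
      exact Ideal.mem_sup_right (Ideal.subset_span hp)
    have h0 : eval x (q - w) = 0 := by
      apply hx
      rw [hJ, Ideal.add_eq_sup]
      exact Ideal.mem_sup_left (hI ▸ Ideal.subset_span rfl)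
    have h1 : x (Sum.inl 0) * ∏ i : Fin k, x (Sum.inr i) ^ ((i : ℕ) + 1) = 0 := by
      have := hx _ (hmemJ _ (Set.mem_insert _ _))
      simpa using this
    have h3 : x (Sum.inl 2) * ∏ i : Fin k, x (Sum.inr i) = 0 := by
      have := hx _ (hmemJ _ (Set.mem_insert_of_mem _ (Set.mem_insert_of_mem _
        (Set.mem_insert _ _))))
      simpa using this
    have h4 : x (Sum.inl 3) ^ 2 * x (Sum.inl 4) = 0 := by
      have := hx _ (hmemJ _ (Set.mem_insert_of_mem _ (Set.mem_insert_of_mem _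
        (Set.mem_insert_of_mem _ rfl))))
      simpa using this
    have h0' : x (Sum.inl 0) ^ 2 - x (Sum.inl 1) ^ 2 * x (Sum.inl 4)
        - 4 * x (Sum.inl 2) ^ n * ∏ i : Fin k, x (Sum.inr i) ^ (n - 2 * ((i : ℕ) + 1)) = 0 := by
      simpa [hq, hw] using h0
    -- projections of hf
    have hfP : ∀ i : Fin k, f ∈ Ideal.span ({X (Sum.inl 3), X (Sum.inr i),
        X (Sum.inl 0) ^ 2 - X (Sum.inl 1) ^ 2 * X (Sum.inl 4)} : Set S) :=
      fun i => (Submodule.mem_iInf _).1 hf.1.1.1 i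
    have hfQ : ∀ i : Fin k, f ∈ Ideal.span
        ({X (Sum.inl 0), X (Sum.inl 4), X (Sum.inr i)} : Set S) :=
      fun i => (Submodule.mem_iInf _).1 hf.1.1.2 i
    have hfQ' : f ∈ Ideal.span ({X (Sum.inl 0), X (Sum.inl 2), X (Sum.inl 4)} : Set S) := hf.1.2
    have hfM : f ∈ Ideal.span
        ({X (Sum.inl 0), X (Sum.inl 1), X (Sum.inl 2), X (Sum.inl 3)} : Set S) := hf.2
    by_cases hτ : ∀ j : Fin k, x (Sum.inr j) ≠ 0
    · have hp1 : ∏ j : Fin k, x (Sum.inr j) ^ ((j : ℕ) + 1) ≠ 0 :=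
        Finset.prod_ne_zero_iff.2 fun j _ => pow_ne_zero _ (hτ j)
      have hp0 : ∏ j : Fin k, x (Sum.inr j) ≠ 0 :=
        Finset.prod_ne_zero_iff.2 fun j _ => hτ j
      have ha0 : x (Sum.inl 0) = 0 := by
        rcases mul_eq_zero.mp h1 with h | h
        · exact h
        · exact absurd h hp1
      have ha2 : x (Sum.inl 2) = 0 := by
        rcases mul_eq_zero.mp h3 with h | h
        · exact h
        · exact absurd h hp0
      have h14 : x (Sum.inl 1) ^ 2 * x (Sum.inl 4) = 0 := by
        have hz : x (Sum.inl 2) ^ n = 0 := by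
          rw [ha2]
          exact zero_pow (by omega)
        rw [ha0, hz] at h0'
        linear_combination -h0'
      by_cases hε : x (Sum.inl 4) = 0
      · refine mem_zeroLocus_span _ x ?_ f hfQ'
        intro p hp
        simp only [Set.mem_insert_iff, Set.mem_singleton_iff] at hp
        rcases hp with rfl | rfl | rfl <;> simp [ha0, ha2, hε]
      · have ha1 : x (Sum.inl 1) = 0 := by
          rcases mul_eq_zero.mp h14 with h | h
          · exact pow_eq_zero_iff (n := 2) (by norm_num) |>.mp h
          · exact absurd h hε
        have ha3 : x (Sum.inl 3) = 0 := by
          rcases mul_eq_zero.mp h4 with h | h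
          · exact pow_eq_zero_iff (n := 2) (by norm_num) |>.mp h
          · exact absurd h hε
        refine mem_zeroLocus_span _ x ?_ f hfM
        intro p hp
        simp only [Set.mem_insert_iff, Set.mem_singleton_iff] at hp
        rcases hp with rfl | rfl | rfl | rfl <;> simp [ha0, ha1, ha2, ha3]
    · push_neg at hτ
      obtain ⟨i, hi⟩ := hτ
      have hq0 : x (Sum.inl 0) ^ 2 - x (Sum.inl 1) ^ 2 * x (Sum.inl 4) = 0 := by
        have hz : ∏ j : Fin k, x (Sum.inr j) ^ (n - 2 * ((j : ℕ) + 1)) = 0 :=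
          Finset.prod_eq_zero (Finset.mem_univ i)
            (by rw [hi]; exact zero_pow (hexp i))
        rw [hz] at h0'
        linear_combination h0'
      rcases mul_eq_zero.mp h4 with h34 | hε
      · have ha3 : x (Sum.inl 3) = 0 := pow_eq_zero_iff (n := 2) (by norm_num) |>.mp h34
        refine mem_zeroLocus_span _ x ?_ f (hfP i)
        intro p hp
        simp only [Set.mem_insert_iff, Set.mem_singleton_iff] at hp
        rcases hp with rfl | rfl | rfl
        · simp [ha3]
        · simp [hi]
        · simp only [map_sub, map_mul, map_pow, eval_X]
          linear_combination hq0
      · have ha0 : x (Sum.inl 0) = 0 := by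
          have : x (Sum.inl 0) ^ 2 = 0 := by rw [hε] at hq0; linear_combination hq0
          exact pow_eq_zero_iff (n := 2) (by norm_num) |>.mp this
        refine mem_zeroLocus_span _ x ?_ f (hfQ i)
        intro p hp
        simp only [Set.mem_insert_iff, Set.mem_singleton_iff] at hp
        rcases hp with rfl | rfl | rfl <;> simp [ha0, hε, hi]
end
end
end
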